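/- arXiv:1804.06097 — 7 statements merged into one kernel-verified Lean document; each statement's English description precedes it below -/
import Mathlib

section
/- Let X be a separable Banach space, p ∈ (1,∞) and α ∈ (1/p, 1). Then there is a constant c > 0, depending only on α, p and X (in particular independent of T), such that for every T > 0 and every continuous function u : [0,T] → X with finite Gagliardo seminorm [u]_{W^{α,p}(0,T;X)}, one has ∫₀ᵀ ‖u(t) − u(T)‖_X^p dt ≤ c · T^{αp} · [u]_{W^{α,p}(0,T;X)}^p. -/
open MeasureTheory Set
open scoped ENNReal NNReal

/-- Let `X` be a separable Banach space, `p ∈ (1,∞)` and `α ∈ (1/p, 1)`.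
Then there is a constant `c > 0` (independent of `T`) such that for every `T > 0` and every
continuous `u : [0,T] → X` with finite Gagliardo seminorm `[u]_{W^{α,p}(0,T;X)}`, one has
`∫₀ᵀ ‖u t − u T‖^p dt ≤ c * T^(αp) * [u]_{W^{α,p}(0,T;X)}^p`. -/
theorem stmt0 (X : Type*) [NormedAddCommGroup X] [NormedSpace ℝ X] [CompleteSpace X]
    [TopologicalSpace.SeparableSpace X]
    (p α : ℝ) (hp : 1 < p) (hα1 : 1 / p < α) (hα2 : α < 1) :
    ∃ c : ℝ, 0 < c ∧ ∀ T : ℝ, 0 < T → ∀ u : ℝ → X,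
      ContinuousOn u (Icc 0 T) →
      IntegrableOn (fun z : ℝ × ℝ => ‖u z.1 - u z.2‖ ^ p / |z.1 - z.2| ^ (1 + α * p))
        (Ioo 0 T ×ˢ Ioo 0 T) →
      (∫ t in Ioo 0 T, ‖u t - u T‖ ^ p) ≤
        c * T ^ (α * p) *
          ∫ z in Ioo 0 T ×ˢ Ioo 0 T, ‖u z.1 - u z.2‖ ^ p / |z.1 - z.2| ^ (1 + α * p) := by
  have hp0 : (0:ℝ) < p := by linarith
  have hp0' : p ≠ 0 := ne_of_gt hp0
  have hp1 : (1:ℝ) ≤ p := hp.le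
  have hip : (0:ℝ) < 1/p := by positivity
  have hα0 : (0:ℝ) < α := lt_trans hip hα1
  have he0 : (0:ℝ) < 1 + α * p := by positivity
  set s : ℝ := (2:ℝ) ^ (1/p - α) with hs
  have hs1 : s < 1 := Real.rpow_lt_one_of_one_lt_of_neg one_lt_two (by linarith)
  have hs0 : (0:ℝ) < s := Real.rpow_pos_of_pos two_pos _
  set r : ℝ := (1 - s)⁻¹ with hrdef
  have hrpos : (0:ℝ) < r := inv_pos.mpr (by linarith)
  have hb0 : (0:ℝ) < 2 ^ (1/p) := Real.rpow_pos_of_pos two_pos _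
  refine ⟨((2:ℝ) ^ (1/p) * r) ^ p, Real.rpow_pos_of_pos (by positivity) p, ?_⟩
  intro T hT u hu hint
  -- continuous extension of `u`
  have hmap : ∀ t : ℝ, max 0 (min t T) ∈ Icc (0:ℝ) T := by
    intro t
    exact ⟨le_max_left _ _, max_le hT.le (min_le_right _ _)⟩
  set w : ℝ → X := fun t => u (max 0 (min t T)) with hwdef
  have hw : Continuous w :=
    hu.comp_continuous (continuous_const.max (continuous_id.min continuous_const)) hmap
  have hweq : ∀ t ∈ Icc (0:ℝ) T, w t = u t := by
    intro t ht
    simp only [hwdef]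
    rw [min_eq_left ht.2, max_eq_right ht.1]
  have hwT : w T = u T := hweq T ⟨hT.le, le_rfl⟩
  have hIoosub : Ioo (0:ℝ) T ⊆ Icc 0 T := Ioo_subset_Icc_self
  -- rewrite the goal in terms of `w`
  have hLHS : ∫ t in Ioo 0 T, ‖u t - u T‖ ^ p = ∫ t in Ioo 0 T, ‖w t - w T‖ ^ p := by
    apply setIntegral_congr_fun measurableSet_Ioo
    intro t ht
    dsimp only
    rw [hweq t (hIoosub ht), hwT]
  have hRHS : (∫ z in Ioo 0 T ×ˢ Ioo 0 T, ‖u z.1 - u z.2‖ ^ p / |z.1 - z.2| ^ (1 + α * p))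
      = ∫ z in Ioo 0 T ×ˢ Ioo 0 T, ‖w z.1 - w z.2‖ ^ p / |z.1 - z.2| ^ (1 + α * p) := by
    apply setIntegral_congr_fun (measurableSet_Ioo.prod measurableSet_Ioo)
    intro z hz
    dsimp only
    rw [hweq _ (hIoosub hz.1), hweq _ (hIoosub hz.2)]
  have hintw : IntegrableOn
      (fun z : ℝ × ℝ => ‖w z.1 - w z.2‖ ^ p / |z.1 - z.2| ^ (1 + α * p))
      (Ioo 0 T ×ˢ Ioo 0 T) := by
    apply hint.congr_fun ?_ (measurableSet_Ioo.prod measurableSet_Ioo)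
    intro z hz
    dsimp only
    rw [hweq _ (hIoosub hz.1), hweq _ (hIoosub hz.2)]
  rw [hLHS, hRHS]
  -- lintegral versions
  have mg : Measurable fun z : ℝ × ℝ =>
      ENNReal.ofReal (‖w z.1 - w z.2‖ ^ p / |z.1 - z.2| ^ (1 + α * p)) := by
    apply Measurable.ennreal_ofReal
    apply Measurable.div
    · exact (((hw.comp continuous_fst).sub (hw.comp continuous_snd)).norm.measurable).pow_const p
    · exact ((measurable_fst.sub measurable_snd).abs).pow_const (1 + α * p)
  set J : ℝ≥0∞ := ∫⁻ z in Ioo 0 T ×ˢ Ioo 0 T,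
      ENNReal.ofReal (‖w z.1 - w z.2‖ ^ p / |z.1 - z.2| ^ (1 + α * p)) with hJdef
  have hJfin : J ≠ ⊤ := by
    refine ne_of_lt (lt_of_le_of_lt (lintegral_mono fun z => Real.ofReal_le_enorm _) ?_)
    exact hintw.2
  set I : ℕ → Set ℝ := fun n => Ioo (T - T / 2 ^ n) T with hIdef
  have hδpos : ∀ n : ℕ, (0:ℝ) < T / 2 ^ n := fun n => by positivity
  have hδle : ∀ n : ℕ, T / 2 ^ n ≤ T := fun n =>
    div_le_self hT.le (one_le_pow₀ one_le_two)
  have hIsub : ∀ n, I n ⊆ Ioo 0 T := fun n =>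
    Ioo_subset_Ioo (by linarith [hδle n]) le_rfl
  have hI0 : I 0 = Ioo 0 T := by simp [hIdef]
  have hvol : ∀ n, volume (I n) = ENNReal.ofReal (T / 2 ^ n) := by
    intro n
    simp only [hIdef]
    rw [Real.volume_Ioo, sub_sub_cancel]
  set H : ℕ → ℝ≥0∞ := fun n => ∫⁻ t in I n, (‖w t - w T‖₊ : ℝ≥0∞) ^ p with hHdef
  set b : ℝ≥0∞ := ENNReal.ofReal ((2:ℝ) ^ (1/p)) with hbdef
  have mw1 : Measurable fun t : ℝ => (‖w t - w T‖₊ : ℝ≥0∞) ^ p :=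
    (((hw.sub continuous_const).nnnorm.measurable).coe_nnreal_ennreal).pow_const p
  -- the key one-step estimate
  have key : ∀ n : ℕ, H n ^ (1/p) ≤
      ENNReal.ofReal ((2:ℝ) ^ (1/p) * (T / 2 ^ n) ^ α) * J ^ (1/p)
        + b * H (n+1) ^ (1/p) := by
    intro n
    set δ : ℝ := T / 2 ^ n with hδdef
    set δ' : ℝ := T / 2 ^ (n+1) with hδ'def
    have hδp : (0:ℝ) < δ := hδpos n
    have hδ'p : (0:ℝ) < δ' := hδpos (n+1)
    have hδδ' : δ = 2 * δ' := by
      rw [hδdef, hδ'def, pow_succ]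
      field_simp
    have hIn : I n = Ioo (T - δ) T := rfl
    have hIn1 : I (n+1) = Ioo (T - δ') T := rfl
    set μ : Measure (ℝ × ℝ) := (volume.restrict (I n)).prod (volume.restrict (I (n+1))) with hμdef
    have hμr : μ = (volume : Measure (ℝ × ℝ)).restrict (I n ×ˢ I (n+1)) := by
      rw [hμdef, Measure.prod_restrict, Measure.volume_eq_prod]
    have hIsub' : I (n+1) ⊆ I n := by
      rw [hIn, hIn1]
      exact Ioo_subset_Ioo (by linarith) le_rfl
    -- measurability on the product
    have mFc : Measurable fun z : ℝ × ℝ => (‖w z.1 - w z.2‖₊ : ℝ≥0∞) :=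
      (((hw.comp continuous_fst).sub (hw.comp continuous_snd)).nnnorm.measurable).coe_nnreal_ennreal
    have mGc : Measurable fun z : ℝ × ℝ => (‖w z.2 - w T‖₊ : ℝ≥0∞) :=
      (((hw.comp continuous_snd).sub continuous_const).nnnorm.measurable).coe_nnreal_ennreal
    have mEc : Measurable fun z : ℝ × ℝ => (‖w z.1 - w T‖₊ : ℝ≥0∞) :=
      (((hw.comp continuous_fst).sub continuous_const).nnnorm.measurable).coe_nnreal_ennreal
    have mF : Measurable fun z : ℝ × ℝ => (‖w z.1 - w z.2‖₊ : ℝ≥0∞) ^ p := mFc.pow_const p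
    have mG : Measurable fun z : ℝ × ℝ => (‖w z.2 - w T‖₊ : ℝ≥0∞) ^ p := mGc.pow_const p
    have mE : Measurable fun z : ℝ × ℝ => (‖w z.1 - w T‖₊ : ℝ≥0∞) ^ p := mEc.pow_const p
    have mw2 : Measurable fun t : ℝ => (‖w t - w T‖₊ : ℝ≥0∞) ^ p := mw1
    -- step A : the left-hand side over the product measure
    have hA : ∫⁻ z, (‖w z.1 - w T‖₊ : ℝ≥0∞) ^ p ∂μ = ENNReal.ofReal δ' * H n := by
      have e : (fun z : ℝ × ℝ => (‖w z.1 - w T‖₊ : ℝ≥0∞) ^ p)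
          = fun z : ℝ × ℝ => (fun t => (‖w t - w T‖₊ : ℝ≥0∞) ^ p) z.1
              * (fun _ : ℝ => (1:ℝ≥0∞)) z.2 := by
        funext z; simp
      rw [hμdef, e, lintegral_prod_mul mw1.aemeasurable aemeasurable_const]
      rw [lintegral_one, Measure.restrict_apply_univ, hvol (n+1), mul_comm]
    -- step B : the shifted term
    have hB : ∫⁻ z, (‖w z.2 - w T‖₊ : ℝ≥0∞) ^ p ∂μ = ENNReal.ofReal δ * H (n+1) := by
      have e : (fun z : ℝ × ℝ => (‖w z.2 - w T‖₊ : ℝ≥0∞) ^ p)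
          = fun z : ℝ × ℝ => (fun _ : ℝ => (1:ℝ≥0∞)) z.1
              * (fun t => (‖w t - w T‖₊ : ℝ≥0∞) ^ p) z.2 := by
        funext z; simp
      rw [hμdef, e, lintegral_prod_mul aemeasurable_const mw1.aemeasurable]
      rw [lintegral_one, Measure.restrict_apply_univ, hvol n]
    -- step C : the difference term is controlled by the seminorm
    have hC : ∫⁻ z, (‖w z.1 - w z.2‖₊ : ℝ≥0∞) ^ p ∂μ ≤ ENNReal.ofReal (δ ^ (1 + α * p)) * J := by
      rw [hμr]
      calc ∫⁻ z in I n ×ˢ I (n+1), (‖w z.1 - w z.2‖₊ : ℝ≥0∞) ^ p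
          ≤ ∫⁻ z in I n ×ˢ I (n+1), ENNReal.ofReal (δ ^ (1 + α * p)) *
              ENNReal.ofReal (‖w z.1 - w z.2‖ ^ p / |z.1 - z.2| ^ (1 + α * p)) := by
            apply setLIntegral_mono (measurable_const.mul mg)
            intro z hz
            rcases eq_or_ne z.1 z.2 with hzz | hzz
            · rw [hzz, sub_self, nnnorm_zero, ENNReal.coe_zero,
                ENNReal.zero_rpow_of_pos hp0]
              exact zero_le
            · have hz1 : z.1 ∈ Ioo (T - δ) T := by rw [← hIn]; exact hz.1
              have hz2 : z.2 ∈ Ioo (T - δ) T := by rw [← hIn]; exact hIsub' hz.2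
              have habs : |z.1 - z.2| < δ := by
                rw [abs_sub_lt_iff]
                constructor <;> [linarith [hz1.2, hz2.1]; linarith [hz2.2, hz1.1]]
              have habs0 : (0:ℝ) < |z.1 - z.2| := abs_pos.mpr (sub_ne_zero.mpr hzz)
              have hden : (0:ℝ) < |z.1 - z.2| ^ (1 + α * p) :=
                Real.rpow_pos_of_pos habs0 _
              have hle : |z.1 - z.2| ^ (1 + α * p) ≤ δ ^ (1 + α * p) :=
                Real.rpow_le_rpow (abs_nonneg _) habs.le he0.le
              have hreal : ‖w z.1 - w z.2‖ ^ p
                  ≤ δ ^ (1 + α * p) * (‖w z.1 - w z.2‖ ^ p / |z.1 - z.2| ^ (1 + α * p)) := by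
                have ha : (0:ℝ) ≤ ‖w z.1 - w z.2‖ ^ p := Real.rpow_nonneg (norm_nonneg _) _
                calc ‖w z.1 - w z.2‖ ^ p = ‖w z.1 - w z.2‖ ^ p * 1 := (mul_one _).symm
                  _ ≤ ‖w z.1 - w z.2‖ ^ p * (δ ^ (1 + α * p) / |z.1 - z.2| ^ (1 + α * p)) :=
                      mul_le_mul_of_nonneg_left ((one_le_div hden).mpr hle) ha
                  _ = δ ^ (1 + α * p) * (‖w z.1 - w z.2‖ ^ p / |z.1 - z.2| ^ (1 + α * p)) := by
                      ring
              rw [← enorm_eq_nnnorm, ← ofReal_norm,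
                ENNReal.ofReal_rpow_of_nonneg (norm_nonneg _) hp0.le, Pi.mul_apply,
                ← ENNReal.ofReal_mul (by positivity)]
              exact ENNReal.ofReal_le_ofReal hreal
        _ = ENNReal.ofReal (δ ^ (1 + α * p)) * ∫⁻ z in I n ×ˢ I (n+1),
              ENNReal.ofReal (‖w z.1 - w z.2‖ ^ p / |z.1 - z.2| ^ (1 + α * p)) :=
            lintegral_const_mul _ mg
        _ ≤ ENNReal.ofReal (δ ^ (1 + α * p)) * J := by
            apply mul_le_mul_right
            exact lintegral_mono_set (prod_mono (hIsub n) (hIsub (n+1)))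
    -- Minkowski inequality
    have htri : (∫⁻ z, (‖w z.1 - w T‖₊ : ℝ≥0∞) ^ p ∂μ) ^ (1/p)
        ≤ (∫⁻ z, (‖w z.1 - w z.2‖₊ : ℝ≥0∞) ^ p ∂μ) ^ (1/p)
          + (∫⁻ z, (‖w z.2 - w T‖₊ : ℝ≥0∞) ^ p ∂μ) ^ (1/p) := by
      have h1 : (∫⁻ z, (‖w z.1 - w T‖₊ : ℝ≥0∞) ^ p ∂μ) ^ (1/p)
          ≤ (∫⁻ z, ((fun z : ℝ × ℝ => (‖w z.1 - w z.2‖₊ : ℝ≥0∞))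
              + fun z : ℝ × ℝ => (‖w z.2 - w T‖₊ : ℝ≥0∞)) z ^ p ∂μ) ^ (1/p) := by
        apply ENNReal.rpow_le_rpow _ hip.le
        apply lintegral_mono
        intro z
        apply ENNReal.rpow_le_rpow _ hp0.le
        simp only [Pi.add_apply]
        rw [← ENNReal.coe_add]
        apply ENNReal.coe_le_coe.mpr
        calc ‖w z.1 - w T‖₊ = ‖(w z.1 - w z.2) + (w z.2 - w T)‖₊ := by
              rw [sub_add_sub_cancel]
          _ ≤ _ := nnnorm_add_le _ _
      exact h1.trans (ENNReal.lintegral_Lp_add_le mFc.aemeasurable mGc.aemeasurable hp1)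
    -- combine
    have hmain : (ENNReal.ofReal δ' * H n) ^ (1/p)
        ≤ (ENNReal.ofReal (δ ^ (1 + α * p)) * J) ^ (1/p)
          + (ENNReal.ofReal δ * H (n+1)) ^ (1/p) := by
      calc (ENNReal.ofReal δ' * H n) ^ (1/p)
          = (∫⁻ z, (‖w z.1 - w T‖₊ : ℝ≥0∞) ^ p ∂μ) ^ (1/p) := by rw [hA]
        _ ≤ (∫⁻ z, (‖w z.1 - w z.2‖₊ : ℝ≥0∞) ^ p ∂μ) ^ (1/p)
            + (∫⁻ z, (‖w z.2 - w T‖₊ : ℝ≥0∞) ^ p ∂μ) ^ (1/p) := htri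
        _ ≤ (ENNReal.ofReal (δ ^ (1 + α * p)) * J) ^ (1/p)
            + (ENNReal.ofReal δ * H (n+1)) ^ (1/p) := by
            rw [hB]
            exact add_le_add (ENNReal.rpow_le_rpow hC hip.le) le_rfl
    -- divide by (ofReal δ')^(1/p)
    have hd0 : (ENNReal.ofReal δ') ^ (1/p) ≠ 0 :=
      (ENNReal.rpow_pos (ENNReal.ofReal_pos.mpr hδ'p) ENNReal.ofReal_ne_top).ne'
    have hdt : (ENNReal.ofReal δ') ^ (1/p) ≠ ⊤ :=
      ENNReal.rpow_ne_top_of_nonneg hip.le ENNReal.ofReal_ne_top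
    rw [← ENNReal.mul_le_mul_iff_right hd0 hdt, ← ENNReal.mul_rpow_of_nonneg _ _ hip.le, mul_add]
    refine hmain.trans (le_of_eq ?_)
    have hreal1 : (δ ^ (1 + α * p)) ^ (1/p) = δ' ^ (1/p) * ((2:ℝ) ^ (1/p) * δ ^ α) := by
      have h2δ : δ' * 2 = δ := by rw [hδδ']; ring
      calc (δ ^ (1 + α * p)) ^ (1/p) = δ ^ ((1 + α * p) * (1/p)) :=
            (Real.rpow_mul hδp.le _ _).symm
        _ = δ ^ (1/p + α) := by
            congr 1
            field_simp
        _ = δ ^ (1/p) * δ ^ α := Real.rpow_add hδp _ _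
        _ = (δ' * 2) ^ (1/p) * δ ^ α := by rw [h2δ]
        _ = δ' ^ (1/p) * (2:ℝ) ^ (1/p) * δ ^ α := by
            rw [Real.mul_rpow hδ'p.le (by norm_num)]
        _ = _ := by ring
    have hreal2 : δ ^ (1/p) = δ' ^ (1/p) * (2:ℝ) ^ (1/p) := by
      rw [show δ = δ' * 2 by rw [hδδ']; ring, Real.mul_rpow hδ'p.le (by norm_num)]
    rw [ENNReal.mul_rpow_of_nonneg _ J hip.le, ENNReal.mul_rpow_of_nonneg _ (H (n+1)) hip.le]
    rw [ENNReal.ofReal_rpow_of_pos (by positivity), ENNReal.ofReal_rpow_of_pos hδ'p,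
      ENNReal.ofReal_rpow_of_pos hδp, hreal1, hreal2]
    rw [ENNReal.ofReal_mul (by positivity), ENNReal.ofReal_mul (by positivity),
      ENNReal.ofReal_mul (by positivity), hbdef]
    ring
  -- the iterated estimate
  have iter : ∀ N : ℕ, H 0 ^ (1/p) ≤
      (∑ k ∈ Finset.range N, b ^ k * ENNReal.ofReal ((2:ℝ) ^ (1/p) * (T / 2 ^ k) ^ α)) * J ^ (1/p)
        + b ^ N * H N ^ (1/p) := by
    intro N
    induction N with
    | zero => simp
    | succ N ih =>
        refine ih.trans ?_
        rw [Finset.sum_range_succ, add_mul]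
        have h2 : b ^ N * H N ^ (1/p)
            ≤ b ^ N * (ENNReal.ofReal ((2:ℝ) ^ (1/p) * (T / 2 ^ N) ^ α) * J ^ (1/p)
                + b * H (N+1) ^ (1/p)) := mul_le_mul_right (key N) _
        calc (∑ k ∈ Finset.range N, b ^ k * ENNReal.ofReal ((2:ℝ) ^ (1/p) * (T / 2 ^ k) ^ α))
              * J ^ (1/p) + b ^ N * H N ^ (1/p)
            ≤ (∑ k ∈ Finset.range N, b ^ k * ENNReal.ofReal ((2:ℝ) ^ (1/p) * (T / 2 ^ k) ^ α))
              * J ^ (1/p) + b ^ N * (ENNReal.ofReal ((2:ℝ) ^ (1/p) * (T / 2 ^ N) ^ α) * J ^ (1/p)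
                + b * H (N+1) ^ (1/p)) := add_le_add_right h2 _
          _ = _ := by ring
  -- geometric sum bound
  have hsum : ∀ N : ℕ,
      (∑ k ∈ Finset.range N, b ^ k * ENNReal.ofReal ((2:ℝ) ^ (1/p) * (T / 2 ^ k) ^ α))
        ≤ ENNReal.ofReal ((2:ℝ) ^ (1/p) * T ^ α * r) := by
    intro N
    have hterm : ∀ k : ℕ, b ^ k * ENNReal.ofReal ((2:ℝ) ^ (1/p) * (T / 2 ^ k) ^ α)
        = ENNReal.ofReal ((2:ℝ) ^ (1/p) * T ^ α) * (ENNReal.ofReal s) ^ k := by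
      intro k
      rw [hbdef, ← ENNReal.ofReal_pow hb0.le, ← ENNReal.ofReal_pow hs0.le,
        ← ENNReal.ofReal_mul (by positivity), ← ENNReal.ofReal_mul (by positivity)]
      congr 1
      have e1 : ((2:ℝ) ^ (1/p)) ^ k = (2:ℝ) ^ ((1/p) * k) := by
        rw [← Real.rpow_natCast ((2:ℝ) ^ (1/p)) k, ← Real.rpow_mul (by norm_num : (0:ℝ) ≤ 2)]
      have e2 : s ^ k = (2:ℝ) ^ ((1/p - α) * k) := by
        rw [hs, ← Real.rpow_natCast ((2:ℝ) ^ (1/p - α)) k,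
          ← Real.rpow_mul (by norm_num : (0:ℝ) ≤ 2)]
      have e3 : (T / 2 ^ k) ^ α = T ^ α / (2:ℝ) ^ ((k:ℝ) * α) := by
        rw [Real.div_rpow hT.le (by positivity), ← Real.rpow_natCast (2:ℝ) k,
          ← Real.rpow_mul (by norm_num : (0:ℝ) ≤ 2)]
      rw [e1, e2, e3, div_eq_mul_inv (T ^ α), ← Real.rpow_neg (by norm_num : (0:ℝ) ≤ 2)]
      rw [show (2:ℝ) ^ ((1/p) * k) * ((2:ℝ) ^ (1/p) * (T ^ α * (2:ℝ) ^ (-((k:ℝ) * α))))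
          = ((2:ℝ) ^ ((1/p) * k) * (2:ℝ) ^ (1/p) * (2:ℝ) ^ (-((k:ℝ) * α))) * T ^ α by ring]
      rw [show (2:ℝ) ^ (1/p) * T ^ α * (2:ℝ) ^ ((1/p - α) * k)
          = ((2:ℝ) ^ (1/p) * (2:ℝ) ^ ((1/p - α) * k)) * T ^ α by ring]
      congr 1
      rw [← Real.rpow_add two_pos, ← Real.rpow_add two_pos, ← Real.rpow_add two_pos]
      congr 1
      ring
    calc (∑ k ∈ Finset.range N, b ^ k * ENNReal.ofReal ((2:ℝ) ^ (1/p) * (T / 2 ^ k) ^ α))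
        = ∑ k ∈ Finset.range N, ENNReal.ofReal ((2:ℝ) ^ (1/p) * T ^ α) * (ENNReal.ofReal s) ^ k :=
          Finset.sum_congr rfl fun k _ => hterm k
      _ ≤ ∑' k : ℕ, ENNReal.ofReal ((2:ℝ) ^ (1/p) * T ^ α) * (ENNReal.ofReal s) ^ k :=
          ENNReal.sum_le_tsum _
      _ = ENNReal.ofReal ((2:ℝ) ^ (1/p) * T ^ α) * (1 - ENNReal.ofReal s)⁻¹ := by
          rw [ENNReal.tsum_mul_left, ENNReal.tsum_geometric]
      _ = ENNReal.ofReal ((2:ℝ) ^ (1/p) * T ^ α * r) := by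
          have h1 : (1 : ℝ≥0∞) - ENNReal.ofReal s = ENNReal.ofReal (1 - s) := by
            rw [ENNReal.ofReal_sub 1 hs0.le, ENNReal.ofReal_one]
          rw [h1, ← ENNReal.ofReal_inv_of_pos (by linarith), ← ENNReal.ofReal_mul (by positivity)]
  -- the remainder term is small
  have hrem : ∀ ε : ℝ, 0 < ε → ∃ N : ℕ, b ^ N * H N ^ (1/p) ≤ ENNReal.ofReal ε := by
    intro ε hε
    have hTp : (0:ℝ) < T ^ (1/p) := Real.rpow_pos_of_pos hT _
    set ε' : ℝ := ε / T ^ (1/p) with hε'def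
    have hε' : 0 < ε' := div_pos hε hTp
    have hwc : ContinuousAt w T := hw.continuousAt
    rw [Metric.continuousAt_iff] at hwc
    obtain ⟨δ₀, hδ₀, hball⟩ := hwc ε' hε'
    obtain ⟨N, hN⟩ := pow_unbounded_of_one_lt (T / δ₀) (one_lt_two (α := ℝ))
    refine ⟨N, ?_⟩
    have hδN : T / 2 ^ N < δ₀ := by
      rw [div_lt_iff₀ (by positivity : (0:ℝ) < 2 ^ N)]
      rw [div_lt_iff₀ hδ₀] at hN
      linarith
    have hHN : H N ≤ ENNReal.ofReal (ε' ^ p) * ENNReal.ofReal (T / 2 ^ N) := by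
      have hstep : H N ≤ ∫⁻ _ in I N, ENNReal.ofReal (ε' ^ p) := by
        apply setLIntegral_mono measurable_const
        intro t ht
        have htI : T - T / 2 ^ N < t ∧ t < T := ht
        have h1 : dist t T < δ₀ := by
          rw [Real.dist_eq, abs_lt]
          constructor <;> [linarith [htI.1, hδN]; linarith [htI.2, hδ₀]]
        have h2 : ‖w t - w T‖ < ε' := by
          have := hball h1
          rwa [dist_eq_norm] at this
        rw [← enorm_eq_nnnorm, ← ofReal_norm, ENNReal.ofReal_rpow_of_nonneg (norm_nonneg _) hp0.le]
        exact ENNReal.ofReal_le_ofReal (Real.rpow_le_rpow (norm_nonneg _) h2.le hp0.le)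
      calc H N ≤ ∫⁻ _ in I N, ENNReal.ofReal (ε' ^ p) := hstep
        _ = ENNReal.ofReal (ε' ^ p) * ENNReal.ofReal (T / 2 ^ N) := by
            rw [setLIntegral_const, hvol N]
    calc b ^ N * H N ^ (1/p)
        ≤ b ^ N * (ENNReal.ofReal (ε' ^ p) * ENNReal.ofReal (T / 2 ^ N)) ^ (1/p) :=
          mul_le_mul_right (ENNReal.rpow_le_rpow hHN hip.le) _
      _ = ENNReal.ofReal ε := by
          rw [hbdef, ← ENNReal.ofReal_mul (by positivity),
            ← ENNReal.ofReal_pow hb0.le, ENNReal.ofReal_rpow_of_pos (by positivity),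
            ← ENNReal.ofReal_mul (by positivity)]
          congr 1
          have eA : (ε' ^ p * (T / 2 ^ N)) ^ (1/p) = ε' * (T / 2 ^ N) ^ (1/p) := by
            rw [Real.mul_rpow (by positivity) (by positivity), ← Real.rpow_mul hε'.le,
              mul_one_div_cancel hp0', Real.rpow_one]
          have eB : ((2:ℝ) ^ (1/p)) ^ N = ((2:ℝ) ^ N) ^ (1/p) := by
            rw [← Real.rpow_natCast ((2:ℝ) ^ (1/p)) N, ← Real.rpow_mul (by norm_num : (0:ℝ) ≤ 2),
              mul_comm, Real.rpow_mul (by norm_num : (0:ℝ) ≤ 2), Real.rpow_natCast]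
          rw [eA, eB, Real.div_rpow hT.le (by positivity : (0:ℝ) ≤ 2 ^ N), hε'def]
          have h2N : ((2:ℝ) ^ N) ^ (1/p) ≠ 0 := by positivity
          field_simp
  -- conclude
  have hH0 : H 0 ^ (1/p) ≤ ENNReal.ofReal ((2:ℝ) ^ (1/p) * T ^ α * r) * J ^ (1/p) := by
    apply ENNReal.le_of_forall_pos_le_add
    intro ε hε _
    obtain ⟨N, hN⟩ := hrem ε (by exact_mod_cast hε)
    calc H 0 ^ (1/p) ≤ _ := iter N
      _ ≤ ENNReal.ofReal ((2:ℝ) ^ (1/p) * T ^ α * r) * J ^ (1/p) + ↑ε := by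
          refine add_le_add (mul_le_mul_left (hsum N) _) ?_
          rw [← ENNReal.ofReal_coe_nnreal]
          exact hN
  have hH0p : H 0 ≤ ENNReal.ofReal (((2:ℝ) ^ (1/p) * r) ^ p * T ^ (α * p)) * J := by
    have hJp : (J ^ (1/p)) ^ p = J := by
      rw [← ENNReal.rpow_mul, one_div_mul_cancel hp0', ENNReal.rpow_one]
    have h1 : H 0 = (H 0 ^ (1/p)) ^ p := by
      rw [← ENNReal.rpow_mul, one_div_mul_cancel hp0', ENNReal.rpow_one]
    rw [h1]
    calc (H 0 ^ (1/p)) ^ p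
        ≤ (ENNReal.ofReal ((2:ℝ) ^ (1/p) * T ^ α * r) * J ^ (1/p)) ^ p :=
          ENNReal.rpow_le_rpow hH0 hp0.le
      _ = ENNReal.ofReal ((2:ℝ) ^ (1/p) * T ^ α * r) ^ p * J := by
          rw [ENNReal.mul_rpow_of_nonneg _ _ hp0.le, hJp]
      _ = ENNReal.ofReal (((2:ℝ) ^ (1/p) * r) ^ p * T ^ (α * p)) * J := by
          rw [ENNReal.ofReal_rpow_of_pos (by positivity)]
          congr 2
          rw [show (2:ℝ) ^ (1/p) * T ^ α * r = ((2:ℝ) ^ (1/p) * r) * T ^ α by ring]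
          rw [Real.mul_rpow (by positivity) (by positivity), ← Real.rpow_mul hT.le]
  -- convert the goal to lintegrals
  have hlhs2 : ∫ t in Ioo 0 T, ‖w t - w T‖ ^ p = (H 0).toReal := by
    rw [integral_eq_lintegral_of_nonneg_ae (f := fun t => ‖w t - w T‖ ^ p)
      (ae_of_all _ fun t => by positivity)
      (((hw.sub continuous_const).norm.measurable.pow_const p).aestronglyMeasurable)]
    congr 1
    simp only [hHdef, hI0]
    apply lintegral_congr
    intro t
    rw [← enorm_eq_nnnorm, ← ofReal_norm, ← ENNReal.ofReal_rpow_of_nonneg (norm_nonneg _) hp0.le]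
  have hrhs2 : (∫ z in Ioo 0 T ×ˢ Ioo 0 T, ‖w z.1 - w z.2‖ ^ p / |z.1 - z.2| ^ (1 + α * p))
      = J.toReal := by
    rw [integral_eq_lintegral_of_nonneg_ae (ae_of_all _ fun z => by positivity) hintw.1]
  rw [hlhs2, hrhs2]
  calc (H 0).toReal
      ≤ (ENNReal.ofReal (((2:ℝ) ^ (1/p) * r) ^ p * T ^ (α * p)) * J).toReal := by
        apply ENNReal.toReal_mono _ hH0p
        exact ENNReal.mul_ne_top ENNReal.ofReal_ne_top hJfin
    _ = ((2:ℝ) ^ (1/p) * r) ^ p * T ^ (α * p) * J.toReal := by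
        rw [ENNReal.toReal_mul, ENNReal.toReal_ofReal (by positivity)]
end

section
/- Let X be a separable Banach space, p ∈ (1,∞) and α ∈ (1/p, 1). Then there is a constant C > 0 such that for every continuous function u : [0,1] → X with u(1) = 0 and finite Gagliardo seminorm [u]_{W^{α,p}(0,1;X)}, one has ∫₀¹ ‖u(t)‖_X^p dt ≤ C · [u]_{W^{α,p}(0,1;X)}^p. -/
open MeasureTheory Set
open scoped ENNReal

lemma hoelder_aux {Y : Type*} [MeasurableSpace Y] (μ : Measure Y) {g : Y → ℝ≥0∞}
    (hg : AEMeasurable g μ) {p : ℝ} (hp : 1 < p) :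
    (∫⁻ y, g y ∂μ) ^ p ≤ (∫⁻ y, g y ^ p ∂μ) * (μ univ) ^ (p - 1) := by
  have hp0 : (0:ℝ) < p := lt_trans one_pos hp
  have hpq : p.HolderConjugate (Real.conjExponent p) := Real.HolderConjugate.conjExponent hp
  have h := ENNReal.lintegral_mul_le_Lp_mul_Lq μ hpq hg
    (aemeasurable_const (b := (1:ℝ≥0∞)))
  simp only [Pi.mul_apply, mul_one, ENNReal.one_rpow, lintegral_const, one_mul] at h
  have h2 := ENNReal.rpow_le_rpow h hp0.le
  refine h2.trans_eq ?_
  rw [ENNReal.mul_rpow_of_nonneg _ _ hp0.le, ← ENNReal.rpow_mul, ← ENNReal.rpow_mul]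
  rw [one_div_mul_cancel hp0.ne', ENNReal.rpow_one]
  congr 1
  rw [Real.conjExponent]
  field_simp

lemma holder_avg {Y : Type*} [MeasurableSpace Y] (μ : Measure Y) {g : Y → ℝ≥0∞}
    (hg : AEMeasurable g μ) {p : ℝ} (hp : 1 < p) (h0 : μ univ ≠ 0) (htop : μ univ ≠ ∞) :
    ((∫⁻ y, g y ∂μ) / μ univ) ^ p ≤ (∫⁻ y, g y ^ p ∂μ) / μ univ := by
  have hp0 : (0:ℝ) < p := lt_trans one_pos hp
  set c := μ univ
  have hcp0 : c ^ p ≠ 0 := by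
    simp [ENNReal.rpow_eq_zero_iff, h0, htop, hp0, hp0.not_gt]
  have hcpt : c ^ p ≠ ∞ := ENNReal.rpow_ne_top_of_nonneg hp0.le htop
  rw [ENNReal.div_rpow_of_nonneg _ _ hp0.le]
  refine le_trans (ENNReal.div_le_div_right (hoelder_aux μ hg hp) _) ?_
  have hkey : c ^ (p - 1) = c ^ p * c⁻¹ := by
    rw [← ENNReal.rpow_neg_one c, ← ENNReal.rpow_add _ _ h0 htop, sub_eq_add_neg]
  rw [hkey, ENNReal.div_eq_inv_mul, ENNReal.div_eq_inv_mul]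
  refine le_of_eq ?_
  calc (c ^ p)⁻¹ * ((∫⁻ y, g y ^ p ∂μ) * (c ^ p * c⁻¹))
      = ((c ^ p)⁻¹ * c ^ p) * (c⁻¹ * (∫⁻ y, g y ^ p ∂μ)) := by ring
    _ = c⁻¹ * (∫⁻ y, g y ^ p ∂μ) := by rw [ENNReal.inv_mul_cancel hcp0 hcpt, one_mul]

lemma two_pow_split {p : ℝ} (hp0 : 0 ≤ p) (x y : ℝ≥0∞) :
    (x + y) ^ p ≤ (2:ℝ≥0∞) ^ p * x ^ p + (2:ℝ≥0∞) ^ p * y ^ p := by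
  rcases le_total x y with h | h
  · calc (x + y) ^ p ≤ (2 * y) ^ p := by
          refine ENNReal.rpow_le_rpow ?_ hp0
          rw [two_mul]; exact add_le_add_left h _
    _ = (2:ℝ≥0∞) ^ p * y ^ p := ENNReal.mul_rpow_of_nonneg _ _ hp0
    _ ≤ _ := le_add_self
  · calc (x + y) ^ p ≤ (2 * x) ^ p := by
          refine ENNReal.rpow_le_rpow ?_ hp0
          rw [two_mul]; exact add_le_add_right h _
    _ = (2:ℝ≥0∞) ^ p * x ^ p := ENNReal.mul_rpow_of_nonneg _ _ hp0
    _ ≤ _ := self_le_add_right _ _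

/-- Let `X` be a separable Banach space, `p ∈ (1,∞)` and `α ∈ (1/p, 1)`.
Then there is a constant `C > 0` such that for every continuous `u : [0,1] → X` with
`u 1 = 0` and finite Gagliardo seminorm `[u]_{W^{α,p}(0,1;X)}`, one has
`∫₀¹ ‖u t‖^p dt ≤ C * [u]_{W^{α,p}(0,1;X)}^p`. -/
theorem stmt1 (X : Type*) [NormedAddCommGroup X] [NormedSpace ℝ X] [CompleteSpace X]
    [TopologicalSpace.SeparableSpace X]
    (p α : ℝ) (hp : 1 < p) (hα1 : 1 / p < α) (hα2 : α < 1) :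
    ∃ C : ℝ, 0 < C ∧ ∀ u : ℝ → X,
      ContinuousOn u (Icc 0 1) →
      u 1 = 0 →
      IntegrableOn (fun z : ℝ × ℝ => ‖u z.1 - u z.2‖ ^ p / |z.1 - z.2| ^ (1 + α * p))
        (Ioo (0:ℝ) 1 ×ˢ Ioo (0:ℝ) 1) →
      (∫ t in Ioo (0:ℝ) 1, ‖u t‖ ^ p) ≤
        C * ∫ z in Ioo (0:ℝ) 1 ×ˢ Ioo (0:ℝ) 1,
              ‖u z.1 - u z.2‖ ^ p / |z.1 - z.2| ^ (1 + α * p) := by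
  have hp0 : (0:ℝ) < p := lt_trans one_pos hp
  have hαp : 1 < α * p := by
    have := (div_lt_iff₀ hp0).mp hα1
    linarith
  have hβ0 : (0:ℝ) ≤ 1 + α * p := by linarith
  -- geometric ratio
  set r : ℝ := (2⁻¹:ℝ) ^ ((α * p - 1) / p) with hrdef
  have hr0 : 0 < r := Real.rpow_pos_of_pos (by norm_num) _
  have hr1 : r < 1 := Real.rpow_lt_one (by norm_num) (by norm_num) (div_pos (by linarith) hp0)
  set ρ : ℝ≥0∞ := ENNReal.ofReal r with hρdef
  have hρ1 : ρ < 1 := ENNReal.ofReal_lt_one.2 hr1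
  have hρinv_top : (1 - ρ)⁻¹ ≠ ∞ := ENNReal.inv_ne_top.2 (tsub_pos_of_lt hρ1).ne'
  have h2p_top : ((2:ℝ≥0∞) ^ p) ≠ ∞ :=
    ENNReal.rpow_ne_top_of_nonneg hp0.le (by simp)
  set K : ℝ≥0∞ := (2:ℝ≥0∞) ^ p * (ENNReal.ofReal 8 * ((1 - ρ)⁻¹) ^ p) + (2:ℝ≥0∞) ^ p * 2
    with hKdef
  have hKtop : K ≠ ∞ := by
    refine ENNReal.add_ne_top.2 ⟨ENNReal.mul_ne_top h2p_top (ENNReal.mul_ne_top (by simp)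
      (ENNReal.rpow_ne_top_of_nonneg hp0.le hρinv_top)), ENNReal.mul_ne_top h2p_top (by simp)⟩
  refine ⟨K.toReal + 1, by positivity, ?_⟩
  intro u hu hu1 hint
  -- basic objects
  set Qr : ℝ × ℝ → ℝ := fun z => ‖u z.1 - u z.2‖ ^ p / |z.1 - z.2| ^ (1 + α * p) with hQrdef
  set Q' : ℝ × ℝ → ℝ≥0∞ := fun z => ENNReal.ofReal (Qr z) with hQ'def
  set F : ℝ → ℝ≥0∞ := fun t => ENNReal.ofReal ‖u t‖ with hFdef
  set E : ℝ → ℝ → ℝ≥0∞ := fun s σ => ENNReal.ofReal ‖u s - u σ‖ with hEdef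
  set J' : ℝ≥0∞ := ∫⁻ z in Ioo (0:ℝ) 1 ×ˢ Ioo (0:ℝ) 1, Q' z with hJ'def
  have hQrnn : ∀ z : ℝ × ℝ, 0 ≤ Qr z := fun z => div_nonneg (by positivity) (by positivity)
  have hJ : ENNReal.ofReal (∫ z in Ioo (0:ℝ) 1 ×ˢ Ioo (0:ℝ) 1, Qr z) = J' :=
    ofReal_integral_eq_lintegral_ofReal hint (ae_of_all _ hQrnn)
  have hJ'top : J' ≠ ∞ := by rw [← hJ]; exact ENNReal.ofReal_ne_top
  -- intervals
  set e : ℕ → ℝ := fun n => 1 - (2⁻¹:ℝ) ^ n with hedef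
  set I : ℕ → Set ℝ := fun n => Ioo (e n) (e (n+1)) with hIdef
  have hpow_pos : ∀ n : ℕ, (0:ℝ) < (2⁻¹:ℝ) ^ n := fun n => by positivity
  have hpow_le1 : ∀ n : ℕ, ((2⁻¹:ℝ) ^ n) ≤ 1 := fun n =>
    pow_le_one₀ (by norm_num) (by norm_num)
  have hIsub : ∀ n, I n ⊆ Ioo (0:ℝ) 1 := by
    intro n t ht
    obtain ⟨h1, h2⟩ := ht
    constructor
    · have := hpow_le1 n
      simp only [hedef] at h1
      linarith
    · have := hpow_pos (n+1)
      simp only [hedef] at h2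
      linarith
  set L : ℕ → ℝ≥0∞ := fun n => volume (I n) with hLdef
  have hLval : ∀ n, L n = ENNReal.ofReal ((2⁻¹:ℝ) ^ (n+1)) := by
    intro n
    rw [hLdef]
    simp only [hIdef, Real.volume_Ioo, hedef]
    congr 1
    ring
  have hL0 : ∀ n, L n ≠ 0 := by
    intro n
    rw [hLval n]
    simp [ENNReal.ofReal_eq_zero, not_le, hpow_pos (n+1)]
  have hLtop : ∀ n, L n ≠ ∞ := fun n => by rw [hLval n]; exact ENNReal.ofReal_ne_top
  -- measurability
  have hnormcont : ContinuousOn (fun z : ℝ × ℝ => ‖u z.1 - u z.2‖)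
      (Icc (0:ℝ) 1 ×ˢ Icc (0:ℝ) 1) := by
    apply ContinuousOn.norm
    exact (hu.comp continuousOn_fst fun z hz => hz.1).sub
      (hu.comp continuousOn_snd fun z hz => hz.2)
  have hprodmeas : ∀ A B : Set ℝ, A ⊆ Icc (0:ℝ) 1 → B ⊆ Icc (0:ℝ) 1 →
      AEMeasurable (fun z : ℝ × ℝ => ‖u z.1 - u z.2‖)
        ((volume.restrict A).prod (volume.restrict B)) := by
    intro A B hA hB
    have h2 : AEMeasurable (fun z : ℝ × ℝ => ‖u z.1 - u z.2‖)
        ((volume : Measure (ℝ × ℝ)).restrict (Icc (0:ℝ) 1 ×ˢ Icc (0:ℝ) 1)) :=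
      hnormcont.aemeasurable (measurableSet_Icc.prod measurableSet_Icc)
    have h3 : (volume.restrict A).prod (volume.restrict B)
        = (volume : Measure (ℝ × ℝ)).restrict (A ×ˢ B) := by
      rw [Measure.volume_eq_prod, Measure.prod_restrict]
    rw [h3]
    exact h2.mono_measure (Measure.restrict_mono (prod_mono hA hB) le_rfl)
  have hEmeas : ∀ A B : Set ℝ, A ⊆ Icc (0:ℝ) 1 → B ⊆ Icc (0:ℝ) 1 →
      AEMeasurable (fun z : ℝ × ℝ => E z.1 z.2)
        ((volume.restrict A).prod (volume.restrict B)) := fun A B hA hB =>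
    ENNReal.measurable_ofReal.comp_aemeasurable (hprodmeas A B hA hB)
  have hQmeas : ∀ A B : Set ℝ, A ⊆ Icc (0:ℝ) 1 → B ⊆ Icc (0:ℝ) 1 →
      AEMeasurable Q' ((volume.restrict A).prod (volume.restrict B)) := by
    intro A B hA hB
    apply ENNReal.measurable_ofReal.comp_aemeasurable
    apply AEMeasurable.div
    · exact (hprodmeas A B hA hB).pow aemeasurable_const
    · exact (((measurable_fst.sub measurable_snd).abs.pow measurable_const)).aemeasurable
  have hFmeas : ∀ A : Set ℝ, A ⊆ Icc (0:ℝ) 1 →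
      AEMeasurable F (volume.restrict A) := by
    intro A hA
    apply ENNReal.measurable_ofReal.comp_aemeasurable
    exact (hu.norm.aemeasurable measurableSet_Icc).mono_measure
      (Measure.restrict_mono hA le_rfl)
  have hEtmeas : ∀ t : ℝ, ∀ A : Set ℝ, A ⊆ Icc (0:ℝ) 1 →
      AEMeasurable (fun σ => E t σ) (volume.restrict A) := by
    intro t A hA
    apply ENNReal.measurable_ofReal.comp_aemeasurable
    exact (((continuousOn_const (c := u t)).sub hu).norm.aemeasurable
      measurableSet_Icc).mono_measure (Measure.restrict_mono hA le_rfl)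
  -- pointwise key inequalities
  have key : ∀ d : ℝ, 0 ≤ d → ∀ s σ : ℝ, |s - σ| ≤ d →
      E s σ ^ p ≤ ENNReal.ofReal (d ^ (1 + α * p)) * Q' (s, σ) := by
    intro d hd s σ hsd
    by_cases hss : s = σ
    · simp [hEdef, hss, sub_self, norm_zero, ENNReal.zero_rpow_of_pos hp0]
    · have habs : 0 < |s - σ| := abs_pos.2 (sub_ne_zero.2 hss)
      have hden : 0 < |s - σ| ^ (1 + α * p) := Real.rpow_pos_of_pos habs _
      rw [hEdef]
      simp only []
      rw [ENNReal.ofReal_rpow_of_nonneg (norm_nonneg _) hp0.le,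
        hQ'def]
      simp only [hQrdef]
      rw [← ENNReal.ofReal_mul (by positivity)]
      apply ENNReal.ofReal_le_ofReal
      rw [mul_comm (d ^ (1 + α * p)), div_mul_eq_mul_div, le_div_iff₀ hden]
      apply mul_le_mul_of_nonneg_left _ (by positivity)
      exact Real.rpow_le_rpow (abs_nonneg _) hsd hβ0
  have keyF : ∀ s σ : ℝ, F s ≤ F σ + E s σ := by
    intro s σ
    calc F s ≤ ENNReal.ofReal (‖u σ‖ + ‖u s - u σ‖) := by
          apply ENNReal.ofReal_le_ofReal
          have := norm_sub_norm_le (u s) (u σ)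
          linarith
      _ ≤ _ := ENNReal.ofReal_add_le
  have hIsubI : ∀ m, I m ⊆ Icc (0:ℝ) 1 := fun m => (hIsub m).trans Ioo_subset_Icc_self
  have hImeas : ∀ m, MeasurableSet (I m) := by
    intro m; simp only [hIdef]; exact measurableSet_Ioo
  -- averages and gaps
  set A : ℕ → ℝ≥0∞ := fun n => ∫⁻ t in I n, F t with hAdef
  set a : ℕ → ℝ≥0∞ := fun n => A n / L n with hadef
  set T : ℕ → ℝ≥0∞ := fun n => ∫⁻ s in I n, ∫⁻ σ in I (n+1), E s σ with hTdef
  set dd : ℕ → ℝ≥0∞ := fun n => T n / (L n * L (n+1)) with hddef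
  have hgap : ∀ n, a n ≤ a (n+1) + dd n := by
    intro n
    have e1 : ∫⁻ s in I n, ∫⁻ σ in I (n+1), F s = A n * L (n+1) := by
      calc ∫⁻ s in I n, ∫⁻ σ in I (n+1), F s = ∫⁻ s in I n, F s * L (n+1) := by
            apply lintegral_congr; intro s
            rw [MeasureTheory.setLIntegral_const, hLdef]
        _ = A n * L (n+1) := lintegral_mul_const' (L (n+1)) _ (hLtop (n+1))
    have h2 : ∫⁻ s in I n, ∫⁻ σ in I (n+1), F s
        ≤ ∫⁻ s in I n, (A (n+1) + ∫⁻ σ in I (n+1), E s σ) := by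
      apply lintegral_mono; intro s
      calc ∫⁻ σ in I (n+1), F s ≤ ∫⁻ σ in I (n+1), (F σ + E s σ) :=
            lintegral_mono fun σ => keyF s σ
        _ = A (n+1) + ∫⁻ σ in I (n+1), E s σ :=
            lintegral_add_left' (hFmeas (I (n+1)) (hIsubI (n+1))) _
    have h3 : ∫⁻ s in I n, (A (n+1) + ∫⁻ σ in I (n+1), E s σ) = A (n+1) * L n + T n := by
      rw [lintegral_add_left' aemeasurable_const, MeasureTheory.setLIntegral_const, hLdef]
    have h1 : A n * L (n+1) ≤ A (n+1) * L n + T n := by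
      rw [← e1, ← h3]; exact h2
    calc a n = A n * L (n+1) / (L n * L (n+1)) :=
          (ENNReal.mul_div_mul_right (A n) (L n) (hL0 (n+1)) (hLtop (n+1))).symm
      _ ≤ (A (n+1) * L n + T n) / (L n * L (n+1)) := ENNReal.div_le_div_right h1 _
      _ = A (n+1) * L n / (L n * L (n+1)) + dd n := by rw [ENNReal.add_div]
      _ = a (n+1) + dd n := by
          rw [mul_comm (L n) (L (n+1)), ENNReal.mul_div_mul_right _ _ (hL0 n) (hLtop n)]
  -- distance bound on I n x I (n+1)
  have hdist : ∀ n : ℕ, ∀ z : ℝ × ℝ, z ∈ I n ×ˢ I (n+1) → |z.1 - z.2| ≤ (2⁻¹:ℝ)^n := by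
    intro n z hz
    simp only [hIdef, hedef, mem_prod, mem_Ioo] at hz
    obtain ⟨⟨h1, h2⟩, h3, h4⟩ := hz
    rw [abs_le]
    constructor
    · linarith [hpow_pos (n+2)]
    · linarith [hpow_pos n, hpow_pos (n+1), hpow_pos (n+2)]
  -- geometric factor
  set ρ₀ : ℝ := (2⁻¹:ℝ) ^ (α * p - 1) with hρ₀def
  have hρ₀pos : 0 < ρ₀ := Real.rpow_pos_of_pos (by norm_num) _
  have h2i : (0:ℝ) < 2⁻¹ := by norm_num
  have hLL : ∀ n : ℕ, L n * L (n+1) = ENNReal.ofReal ((2⁻¹:ℝ)^(2*n+3)) := by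
    intro n
    rw [hLval n, hLval (n+1), ← ENNReal.ofReal_mul (hpow_pos (n+1)).le, ← pow_add]
    congr 2
    ring
  have hreal : ∀ n : ℕ, ((2⁻¹:ℝ)^n) ^ (1 + α * p) * ((2⁻¹:ℝ)^(2*n+3))⁻¹ = 8 * ρ₀ ^ n := by
    intro n
    have h8 : (8:ℝ) = (2⁻¹:ℝ) ^ (-3:ℝ) := by
      rw [Real.rpow_neg h2i.le, show ((3:ℝ)) = ((3:ℕ):ℝ) by norm_num, Real.rpow_natCast]
      norm_num
    rw [← Real.rpow_natCast (2⁻¹:ℝ) n, ← Real.rpow_natCast (2⁻¹:ℝ) (2*n+3),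
      ← Real.rpow_mul h2i.le, ← Real.rpow_neg h2i.le, ← Real.rpow_add h2i,
      ← Real.rpow_natCast ρ₀ n, hρ₀def, ← Real.rpow_mul h2i.le, h8,
      ← Real.rpow_add h2i]
    congr 1
    push_cast
    ring
  have hdd : ∀ n : ℕ, dd n ^ p ≤ ENNReal.ofReal (8 * ρ₀ ^ n) * J' := by
    intro n
    have hμuniv : ((volume.restrict (I n)).prod (volume.restrict (I (n+1)))) univ
        = L n * L (n+1) := by
      rw [← univ_prod_univ, Measure.prod_prod, Measure.restrict_apply_univ,
        Measure.restrict_apply_univ, hLdef]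
    have hT : T n = ∫⁻ z, E z.1 z.2 ∂((volume.restrict (I n)).prod (volume.restrict (I (n+1)))) := by
      rw [MeasureTheory.lintegral_prod _ (hEmeas _ _ (hIsubI n) (hIsubI (n+1)))]
    have hstep : dd n ^ p
        ≤ (∫⁻ z, E z.1 z.2 ^ p ∂((volume.restrict (I n)).prod (volume.restrict (I (n+1)))))
            / (L n * L (n+1)) := by
      have hha := holder_avg _ (hEmeas _ _ (hIsubI n) (hIsubI (n+1))) hp
        (by rw [hμuniv]; exact mul_ne_zero (hL0 n) (hL0 (n+1)))
        (by rw [hμuniv]; exact ENNReal.mul_ne_top (hLtop n) (hLtop (n+1)))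
      rw [hμuniv] at hha
      rw [hddef]
      simp only [hT]
      exact hha
    have hbound : (∫⁻ z, E z.1 z.2 ^ p ∂((volume.restrict (I n)).prod (volume.restrict (I (n+1)))))
        ≤ ENNReal.ofReal (((2⁻¹:ℝ)^n) ^ (1 + α * p)) * J' := by
      have hrestr : ((volume.restrict (I n)).prod (volume.restrict (I (n+1))))
          = (volume : Measure (ℝ×ℝ)).restrict (I n ×ˢ I (n+1)) := by
        rw [Measure.volume_eq_prod, Measure.prod_restrict]
      rw [hrestr]
      calc ∫⁻ z in I n ×ˢ I (n+1), E z.1 z.2 ^ p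
          ≤ ∫⁻ z in I n ×ˢ I (n+1), ENNReal.ofReal (((2⁻¹:ℝ)^n) ^ (1 + α * p)) * Q' z := by
            apply lintegral_mono_ae
            filter_upwards [ae_restrict_mem ((hImeas n).prod (hImeas (n+1)))] with z hz
            exact key _ (hpow_pos n).le z.1 z.2 (hdist n z hz)
        _ = ENNReal.ofReal (((2⁻¹:ℝ)^n) ^ (1 + α * p)) * ∫⁻ z in I n ×ˢ I (n+1), Q' z :=
            lintegral_const_mul' _ _ ENNReal.ofReal_ne_top
        _ ≤ _ := by
            apply mul_le_mul_right
            rw [hJ'def]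
            exact lintegral_mono_set (prod_mono (hIsub n) (hIsub (n+1)))
    calc dd n ^ p ≤ (ENNReal.ofReal (((2⁻¹:ℝ)^n) ^ (1 + α * p)) * J') / (L n * L (n+1)) :=
          hstep.trans (ENNReal.div_le_div_right hbound _)
      _ = ENNReal.ofReal (((2⁻¹:ℝ)^n) ^ (1 + α * p)) * J'
            * ENNReal.ofReal (((2⁻¹:ℝ)^(2*n+3))⁻¹) := by
          rw [hLL n, div_eq_mul_inv, ← ENNReal.ofReal_inv_of_pos (hpow_pos (2*n+3))]
      _ = ENNReal.ofReal (((2⁻¹:ℝ)^n) ^ (1 + α * p) * ((2⁻¹:ℝ)^(2*n+3))⁻¹) * J' := by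
          rw [mul_right_comm, ← ENNReal.ofReal_mul (by positivity)]
      _ = ENNReal.ofReal (8 * ρ₀ ^ n) * J' := by rw [hreal n]
  -- single-step geometric bound
  have hρ₀r : ρ₀ ^ (1/p : ℝ) = r := by
    rw [hρ₀def, hrdef, ← Real.rpow_mul h2i.le, mul_one_div]
  have hd : ∀ n : ℕ, dd n ≤ ENNReal.ofReal ((8:ℝ)^(1/p:ℝ)) * J' ^ (1/p) * ρ ^ n := by
    intro n
    have h1 : dd n = (dd n ^ p) ^ (1/p : ℝ) := by
      rw [← ENNReal.rpow_mul, mul_one_div_cancel hp0.ne', ENNReal.rpow_one]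
    rw [h1]
    calc (dd n ^ p) ^ (1/p : ℝ) ≤ (ENNReal.ofReal (8 * ρ₀ ^ n) * J') ^ (1/p : ℝ) :=
          ENNReal.rpow_le_rpow (hdd n) (by positivity)
      _ = ENNReal.ofReal ((8 * ρ₀ ^ n) ^ (1/p : ℝ)) * J' ^ (1/p) := by
          rw [ENNReal.mul_rpow_of_nonneg _ _ (by positivity),
            ENNReal.ofReal_rpow_of_pos (by positivity)]
      _ = _ := by
          have hmul : (8 * ρ₀ ^ n) ^ (1/p : ℝ) = (8:ℝ)^(1/p:ℝ) * r ^ n := by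
            rw [Real.mul_rpow (by norm_num) (by positivity), ← Real.rpow_natCast ρ₀ n,
              ← Real.rpow_mul hρ₀pos.le, mul_comm (n:ℝ) (1/p), Real.rpow_mul hρ₀pos.le,
              hρ₀r, Real.rpow_natCast]
          rw [hmul, ENNReal.ofReal_mul (by positivity), ENNReal.ofReal_pow hr0.le, hρdef]
          ring
  -- telescoping
  have htel : ∀ n, a 0 ≤ a n + ∑ k ∈ Finset.range n, dd k := by
    intro n
    induction n with
    | zero => simp
    | succ m ih =>
        refine ih.trans ?_
        rw [Finset.sum_range_succ]
        calc a m + ∑ k ∈ Finset.range m, dd k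
            ≤ (a (m+1) + dd m) + ∑ k ∈ Finset.range m, dd k := add_le_add_left (hgap m) _
          _ = a (m+1) + (∑ k ∈ Finset.range m, dd k + dd m) := by ring
  set S : ℝ≥0∞ := ENNReal.ofReal ((8:ℝ)^(1/p:ℝ)) * J' ^ (1/p) * (1 - ρ)⁻¹ with hSdef
  have hsum : ∀ n, ∑ k ∈ Finset.range n, dd k ≤ S := by
    intro n
    calc ∑ k ∈ Finset.range n, dd k
        ≤ ∑ k ∈ Finset.range n, ENNReal.ofReal ((8:ℝ)^(1/p:ℝ)) * J' ^ (1/p) * ρ ^ k :=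
          Finset.sum_le_sum fun k _ => hd k
      _ ≤ ∑' k, ENNReal.ofReal ((8:ℝ)^(1/p:ℝ)) * J' ^ (1/p) * ρ ^ k := ENNReal.sum_le_tsum _
      _ = S := by rw [ENNReal.tsum_mul_left, ENNReal.tsum_geometric]
  have ha0 : a 0 ≤ S := by
    refine ENNReal.le_of_forall_pos_le_add fun ε hε hS => ?_
    obtain ⟨δ, hδ0, hδ⟩ : ∃ δ > 0, ∀ t ∈ Icc (0:ℝ) 1, dist t 1 < δ → ‖u t‖ < ε := by
      have hc := hu 1 (right_mem_Icc.2 zero_le_one)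
      rw [Metric.continuousWithinAt_iff] at hc
      obtain ⟨δ, hδ0, h⟩ := hc ε (by exact_mod_cast hε)
      refine ⟨δ, hδ0, fun t ht hdist1 => ?_⟩
      have := h ht hdist1
      rwa [hu1, dist_zero_right] at this
    obtain ⟨n, hn⟩ : ∃ n : ℕ, (2⁻¹:ℝ)^n < δ := exists_pow_lt_of_lt_one hδ0 (by norm_num)
    have han : a n ≤ (ε : ℝ≥0∞) := by
      have hAn : A n ≤ (ε : ℝ≥0∞) * L n := by
        calc A n ≤ ∫⁻ _ in I n, (ε : ℝ≥0∞) := by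
              apply lintegral_mono_ae
              filter_upwards [ae_restrict_mem (hImeas n)] with t ht
              have htI : t ∈ Icc (0:ℝ) 1 := hIsubI n ht
              have hlt : dist t 1 < δ := by
                rw [Real.dist_eq, abs_lt]
                simp only [hIdef, hedef, mem_Ioo] at ht
                constructor
                · linarith [ht.1]
                · linarith [ht.2, hpow_pos (n+1), hδ0]
              have hε2 := hδ t htI hlt
              simp only [hFdef]
              calc ENNReal.ofReal ‖u t‖ ≤ ENNReal.ofReal (ε:ℝ) :=
                    ENNReal.ofReal_le_ofReal hε2.le
                _ = (ε : ℝ≥0∞) := ENNReal.ofReal_coe_nnreal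
          _ = (ε : ℝ≥0∞) * L n := by rw [MeasureTheory.setLIntegral_const, hLdef]
      calc a n ≤ ((ε:ℝ≥0∞) * L n) / L n := ENNReal.div_le_div_right hAn _
        _ = (ε:ℝ≥0∞) := by rw [mul_div_assoc, ENNReal.div_self (hL0 n) (hLtop n), mul_one]
    calc a 0 ≤ a n + ∑ k ∈ Finset.range n, dd k := htel n
      _ ≤ (ε:ℝ≥0∞) + S := add_le_add han (hsum n)
      _ = S + ε := add_comm _ _
  -- pointwise main bound
  have hmain : ∀ t : ℝ,
      F t ^ p ≤ (2:ℝ≥0∞)^p * a 0 ^ p + (2:ℝ≥0∞)^p * ((∫⁻ σ in I 0, E t σ ^ p) / L 0) := by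
    intro t
    have h1 : F t ≤ a 0 + (∫⁻ σ in I 0, E t σ) / L 0 := by
      have h0 : F t = (F t * L 0) / L 0 := by
        rw [mul_div_assoc, ENNReal.div_self (hL0 0) (hLtop 0), mul_one]
      rw [h0]
      have h2 : F t * L 0 = ∫⁻ _ in I 0, F t := by
        rw [MeasureTheory.setLIntegral_const, hLdef]
      rw [h2]
      calc (∫⁻ _ in I 0, F t) / L 0
          ≤ (∫⁻ σ in I 0, (F σ + E t σ)) / L 0 :=
            ENNReal.div_le_div_right (lintegral_mono fun σ => keyF t σ) _
        _ = (A 0 + ∫⁻ σ in I 0, E t σ) / L 0 := by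
            rw [lintegral_add_left' (hFmeas (I 0) (hIsubI 0)) _, hAdef]
        _ = a 0 + (∫⁻ σ in I 0, E t σ) / L 0 := ENNReal.add_div
    have h3 : ((∫⁻ σ in I 0, E t σ) / L 0) ^ p ≤ (∫⁻ σ in I 0, E t σ ^ p) / L 0 := by
      have hha := holder_avg (volume.restrict (I 0)) (hEtmeas t (I 0) (hIsubI 0)) hp
        (by rw [Measure.restrict_apply_univ]; exact hL0 0)
        (by rw [Measure.restrict_apply_univ]; exact hLtop 0)
      rwa [Measure.restrict_apply_univ] at hha
    calc F t ^ p ≤ (a 0 + (∫⁻ σ in I 0, E t σ) / L 0) ^ p := ENNReal.rpow_le_rpow h1 hp0.le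
      _ ≤ (2:ℝ≥0∞)^p * a 0 ^ p + (2:ℝ≥0∞)^p * ((∫⁻ σ in I 0, E t σ) / L 0)^p :=
          two_pow_split hp0.le _ _
      _ ≤ _ := add_le_add_right (mul_le_mul_right h3 _) _
  -- comparison with Q' on (0,1)
  have hEQ : ∀ t ∈ Ioo (0:ℝ) 1, (∫⁻ σ in I 0, E t σ ^ p) ≤ ∫⁻ σ in I 0, Q' (t, σ) := by
    intro t ht
    apply lintegral_mono_ae
    filter_upwards [ae_restrict_mem (hImeas 0)] with σ hσ
    have hσ' : σ ∈ Ioo (0:ℝ) 1 := hIsub 0 hσ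
    have hd1 : |t - σ| ≤ 1 := by
      rw [abs_le]
      obtain ⟨ht1, ht2⟩ := ht
      obtain ⟨hσ1, hσ2⟩ := hσ'
      constructor <;> linarith
    have h1 := key 1 zero_le_one t σ hd1
    simpa [Real.one_rpow, ENNReal.ofReal_one, one_mul] using h1
  have hiter : ∫⁻ t in Ioo (0:ℝ) 1, ∫⁻ σ in I 0, Q' (t, σ) ≤ J' := by
    have hmeasQ := hQmeas (Ioo (0:ℝ) 1) (I 0) Ioo_subset_Icc_self (hIsubI 0)
    calc ∫⁻ t in Ioo (0:ℝ) 1, ∫⁻ σ in I 0, Q' (t, σ)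
        = ∫⁻ z, Q' z ∂((volume.restrict (Ioo (0:ℝ) 1)).prod (volume.restrict (I 0))) :=
          (MeasureTheory.lintegral_prod Q' hmeasQ).symm
      _ = ∫⁻ z in Ioo (0:ℝ) 1 ×ˢ I 0, Q' z := by
          rw [Measure.volume_eq_prod, Measure.prod_restrict]
      _ ≤ J' := by rw [hJ'def]; exact lintegral_mono_set (prod_mono Subset.rfl (hIsub 0))
  have hL0inv : (L 0)⁻¹ = 2 := by
    rw [hLval 0, ← ENNReal.ofReal_inv_of_pos (by norm_num)]
    norm_num
  have hSp : a 0 ^ p ≤ ENNReal.ofReal 8 * (1 - ρ)⁻¹ ^ p * J' := by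
    refine le_trans (ENNReal.rpow_le_rpow ha0 hp0.le) (le_of_eq ?_)
    rw [hSdef, ENNReal.mul_rpow_of_nonneg _ _ hp0.le, ENNReal.mul_rpow_of_nonneg _ _ hp0.le]
    have h8 : (ENNReal.ofReal ((8:ℝ)^(1/p:ℝ))) ^ p = ENNReal.ofReal 8 := by
      rw [ENNReal.ofReal_rpow_of_pos (by positivity),
        ← Real.rpow_mul (by norm_num : (0:ℝ) ≤ 8),
        one_div_mul_cancel hp0.ne', Real.rpow_one]
    have hJ8 : (J' ^ (1/p : ℝ)) ^ p = J' := by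
      rw [← ENNReal.rpow_mul, one_div_mul_cancel hp0.ne', ENNReal.rpow_one]
    rw [h8, hJ8]
    ring
  -- assemble the lintegral bound
  have hfinal : ∫⁻ t in Ioo (0:ℝ) 1, F t ^ p ≤ K * J' := by
    have hv1 : volume (Ioo (0:ℝ) 1) = 1 := by
      rw [Real.volume_Ioo]; norm_num
    calc ∫⁻ t in Ioo (0:ℝ) 1, F t ^ p
        ≤ ∫⁻ t in Ioo (0:ℝ) 1,
            ((2:ℝ≥0∞)^p * a 0 ^ p + (2:ℝ≥0∞)^p * ((∫⁻ σ in I 0, E t σ ^ p) / L 0)) :=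
          lintegral_mono fun t => hmain t
      _ = (2:ℝ≥0∞)^p * a 0 ^ p * volume (Ioo (0:ℝ) 1)
            + ∫⁻ t in Ioo (0:ℝ) 1, (2:ℝ≥0∞)^p * ((∫⁻ σ in I 0, E t σ ^ p) / L 0) := by
          rw [lintegral_add_left' aemeasurable_const, MeasureTheory.setLIntegral_const]
      _ = (2:ℝ≥0∞)^p * a 0 ^ p
            + (2:ℝ≥0∞)^p * ((∫⁻ t in Ioo (0:ℝ) 1, ∫⁻ σ in I 0, E t σ ^ p) * (L 0)⁻¹) := by
          rw [hv1, mul_one]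
          congr 1
          rw [lintegral_const_mul' _ _ h2p_top]
          congr 1
          simp only [div_eq_mul_inv]
          rw [lintegral_mul_const' _ _ (ENNReal.inv_ne_top.2 (hL0 0))]
      _ ≤ (2:ℝ≥0∞)^p * (ENNReal.ofReal 8 * (1 - ρ)⁻¹ ^ p * J')
            + (2:ℝ≥0∞)^p * (J' * 2) := by
          apply add_le_add
          · exact mul_le_mul_right hSp _
          · apply mul_le_mul_right
            rw [← hL0inv]
            apply mul_le_mul_left
            calc ∫⁻ t in Ioo (0:ℝ) 1, ∫⁻ σ in I 0, E t σ ^ p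
                ≤ ∫⁻ t in Ioo (0:ℝ) 1, ∫⁻ σ in I 0, Q' (t, σ) := by
                  apply lintegral_mono_ae
                  filter_upwards [ae_restrict_mem measurableSet_Ioo] with t ht
                  exact hEQ t ht
              _ ≤ J' := hiter
      _ = K * J' := by rw [hKdef]; ring
  -- conversion to Bochner integrals
  have hnn : 0 ≤ᵐ[volume.restrict (Ioo (0:ℝ) 1)] fun t => ‖u t‖ ^ p :=
    Filter.Eventually.of_forall fun t => by positivity
  have hsm : AEStronglyMeasurable (fun t : ℝ => ‖u t‖ ^ p) (volume.restrict (Ioo (0:ℝ) 1)) := by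
    have hco : ContinuousOn (fun t : ℝ => ‖u t‖ ^ p) (Icc 0 1) :=
      hu.norm.rpow_const fun x _ => Or.inr hp0.le
    exact (hco.aestronglyMeasurable measurableSet_Icc).mono_measure
      (Measure.restrict_mono Ioo_subset_Icc_self le_rfl)
  rw [MeasureTheory.integral_eq_lintegral_of_nonneg_ae hnn hsm]
  have hlhs : ∫⁻ t in Ioo (0:ℝ) 1, ENNReal.ofReal (‖u t‖ ^ p)
      = ∫⁻ t in Ioo (0:ℝ) 1, F t ^ p :=
    lintegral_congr fun t => by
      simp only [hFdef]
      exact (ENNReal.ofReal_rpow_of_nonneg (norm_nonneg _) hp0.le).symm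
  rw [hlhs]
  have hJnn : 0 ≤ ∫ z in Ioo (0:ℝ) 1 ×ˢ Ioo (0:ℝ) 1, Qr z :=
    setIntegral_nonneg (measurableSet_Ioo.prod measurableSet_Ioo) fun z _ => hQrnn z
  calc (∫⁻ t in Ioo (0:ℝ) 1, F t ^ p).toReal
      ≤ (K * J').toReal := ENNReal.toReal_mono (ENNReal.mul_ne_top hKtop hJ'top) hfinal
    _ = K.toReal * J'.toReal := ENNReal.toReal_mul
    _ = K.toReal * ∫ z in Ioo (0:ℝ) 1 ×ˢ Ioo (0:ℝ) 1, Qr z := by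
        rw [← hJ, ENNReal.toReal_ofReal hJnn]
    _ ≤ (K.toReal + 1) * ∫ z in Ioo (0:ℝ) 1 ×ˢ Ioo (0:ℝ) 1, Qr z :=
        mul_le_mul_of_nonneg_right (by linarith) hJnn
end

section
/- Let M ≥ 1 and let p : ℝ^M → [1,∞) be measurable with p⁺ := sup p < ∞ and such that 1/p is log-Hölder continuous with constant c_log; let ℓ > 0. Then there is a constant c, depending only on c_log, ℓ and p⁺, such that for every cube K ⊂ ℝ^M with Lebesgue measure |K| ≤ 1, every κ ∈ [0,1] and every ρ ≥ 0 with |K|^ℓ ≤ ρ ≤ |K|^{−ℓ}, one has (κ + ρ)^{p(x) − p(y)} ≤ c for all x, y ∈ K. -/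
open Set

set_option maxHeartbeats 1000000

/-- (Lemma 2.1 in BrDS2, key `p(x)`-`p(y)` estimate.)
Let `M ≥ 1`, `p : ℝ^M → [1,∞)` measurable with `p⁺ := sup p < ∞` and `1/p` log-Hölder
continuous with constant `c_log`; let `ℓ > 0`. Then there is a constant `c` depending only
on `c_log`, `ℓ` and `p⁺` (and the dimension) such that for every cube `K ⊂ ℝ^M` of side
length `s` (so `|K| = s^M`) with `|K| ≤ 1`, every `κ ∈ [0,1]` and every `ρ ≥ 0` with
`|K|^ℓ ≤ ρ ≤ |K|^{-ℓ}`, one has `(κ + ρ)^(p x − p y) ≤ c` for all `x, y ∈ K`. -/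
theorem stmt3 (M : ℕ) (hM : 1 ≤ M) (clog ℓ pplus : ℝ) (hclog : 0 ≤ clog) (hℓ : 0 < ℓ) :
    ∃ c : ℝ, 0 < c ∧ ∀ p : EuclideanSpace ℝ (Fin M) → ℝ,
      Measurable p →
      (∀ z, 1 ≤ p z ∧ p z ≤ pplus) →
      (∀ x y : EuclideanSpace ℝ (Fin M), x ≠ y →
        |1 / p x - 1 / p y| ≤ clog / Real.log (Real.exp 1 + 1 / ‖x - y‖)) →
      ∀ (a : EuclideanSpace ℝ (Fin M)) (s : ℝ), 0 ≤ s → (s ^ M : ℝ) ≤ 1 →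
        ∀ κ ρ : ℝ, κ ∈ Icc (0:ℝ) 1 → 0 ≤ ρ →
          ((s ^ M : ℝ) ^ ℓ ≤ ρ) → (ρ ≤ (s ^ M : ℝ) ^ (-ℓ)) →
          ∀ x y : EuclideanSpace ℝ (Fin M),
            (∀ i, x i ∈ Icc (a i) (a i + s)) → (∀ i, y i ∈ Icc (a i) (a i + s)) →
            (κ + ρ) ^ (p x - p y) ≤ c := by
  set P : ℝ := max pplus 1 with hPdef
  have hP1 : (1:ℝ) ≤ P := le_max_right _ _
  have hP0 : (0:ℝ) ≤ P := le_trans zero_le_one hP1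
  set B : ℝ := clog * P ^ 2 with hBdef
  have hB0 : (0:ℝ) ≤ B := by positivity
  have hM1 : (1:ℝ) ≤ Real.sqrt M := by
    rw [show (1:ℝ) = Real.sqrt 1 by simp]
    exact Real.sqrt_le_sqrt (by exact_mod_cast hM)
  have hlogM : (0:ℝ) ≤ Real.log (Real.sqrt M) := Real.log_nonneg hM1
  set A : ℝ := (M : ℝ) * ℓ * B * (1 + Real.log (Real.sqrt M)) with hAdef
  have hA0 : (0:ℝ) ≤ A := by
    apply mul_nonneg
    · apply mul_nonneg (mul_nonneg (Nat.cast_nonneg M) hℓ.le) hB0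
    · linarith
  have hexp0 : (0:ℝ) ≤ B * Real.log 2 + A := by
    have : (0:ℝ) ≤ Real.log 2 := Real.log_nonneg one_le_two
    nlinarith
  refine ⟨Real.exp (B * Real.log 2 + A), Real.exp_pos _, ?_⟩
  intro p _hmeas hpb hlh a s hs hsM κ ρ hκ hρ hρl hρu x y hx hy
  have hc1 : (1:ℝ) ≤ Real.exp (B * Real.log 2 + A) := Real.one_le_exp hexp0
  by_cases hxy : x = y
  · subst hxy
    simp only [sub_self, Real.rpow_zero]
    exact hc1
  -- x ≠ y
  have hnormpos : 0 < ‖x - y‖ := by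
    rw [norm_pos_iff]
    exact sub_ne_zero_of_ne hxy
  have hnorm : ‖x - y‖ ≤ Real.sqrt M * s := by
    rw [EuclideanSpace.norm_eq]
    have hsum : ∑ i : Fin M, ‖(x - y) i‖ ^ 2 ≤ ∑ _i : Fin M, s ^ 2 := by
      apply Finset.sum_le_sum
      intro i _
      have hxi := hx i
      have hyi := hy i
      simp only [Set.mem_Icc] at hxi hyi
      have habs : |x i - y i| ≤ s := by
        rw [abs_le]; constructor <;> linarith [hxi.1, hxi.2, hyi.1, hyi.2]
      have : ‖(x - y) i‖ = |x i - y i| := by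
        simp [Real.norm_eq_abs]
      rw [this, sq_abs]
      exact sq_le_sq' (abs_le.mp habs).1 (abs_le.mp habs).2
    calc Real.sqrt (∑ i : Fin M, ‖(x - y) i‖ ^ 2)
        ≤ Real.sqrt ((M : ℝ) * s ^ 2) := by
          apply Real.sqrt_le_sqrt
          simpa using hsum
      _ = Real.sqrt M * s := by
          rw [Real.sqrt_mul (Nat.cast_nonneg M), Real.sqrt_sq hs]
  have hspos : 0 < s := by
    by_contra h
    push_neg at h
    have : s = 0 := le_antisymm h hs
    rw [this, mul_zero] at hnorm
    linarith
  have hs1 : s ≤ 1 := by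
    by_contra h
    push_neg at h
    exact absurd hsM (not_le.2 (one_lt_pow₀ h (by omega)))
  have hlog1s : 0 ≤ Real.log (1 / s) := Real.log_nonneg (by
    rw [le_div_iff₀ hspos]; linarith)
  -- the logs
  set L : ℝ := Real.log (Real.exp 1 + 1 / ‖x - y‖) with hLdef
  set L' : ℝ := Real.log (Real.exp 1 + 1 / (Real.sqrt M * s)) with hL'def
  have hMs : 0 < Real.sqrt M * s := mul_pos (by linarith) hspos
  have hL'1 : (1:ℝ) ≤ L' := by
    have : Real.exp 1 ≤ Real.exp 1 + 1 / (Real.sqrt M * s) := le_add_of_nonneg_right (by positivity)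
    calc (1:ℝ) = Real.log (Real.exp 1) := (Real.log_exp 1).symm
      _ ≤ L' := Real.log_le_log (Real.exp_pos 1) this
  have hL1 : (1:ℝ) ≤ L := by
    have : Real.exp 1 ≤ Real.exp 1 + 1 / ‖x - y‖ := le_add_of_nonneg_right (by positivity)
    calc (1:ℝ) = Real.log (Real.exp 1) := (Real.log_exp 1).symm
      _ ≤ L := Real.log_le_log (Real.exp_pos 1) this
  have hL'L : L' ≤ L := by
    apply Real.log_le_log (by positivity)
    have : 1 / (Real.sqrt M * s) ≤ 1 / ‖x - y‖ :=
      one_div_le_one_div_of_le hnormpos hnorm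
    linarith
  have hLpos : 0 < L := lt_of_lt_of_le zero_lt_one hL1
  -- log(1/s) ≤ (1 + log √M) * L'
  have hlogs : Real.log (1 / s) ≤ (1 + Real.log (Real.sqrt M)) * L' := by
    have h1 : (1:ℝ) / s = Real.sqrt M * (1 / (Real.sqrt M * s)) := by
      field_simp
    have h2 : Real.log (1 / s)
        = Real.log (Real.sqrt M) + Real.log (1 / (Real.sqrt M * s)) := by
      rw [h1, Real.log_mul (by positivity) (by positivity)]
    have h3 : Real.log (1 / (Real.sqrt M * s)) ≤ L' := by
      apply Real.log_le_log (by positivity)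
      linarith [Real.exp_pos 1]
    have h4 : Real.log (Real.sqrt M) ≤ Real.log (Real.sqrt M) * L' :=
      le_mul_of_one_le_right hlogM hL'1
    nlinarith
  -- bound on |p x - p y|
  have hpx := hpb x
  have hpy := hpb y
  have hpxP : p x ≤ P := le_trans hpx.2 (le_max_left _ _)
  have hpyP : p y ≤ P := le_trans hpy.2 (le_max_left _ _)
  have hpx0 : 0 < p x := lt_of_lt_of_le zero_lt_one hpx.1
  have hpy0 : 0 < p y := lt_of_lt_of_le zero_lt_one hpy.1
  set D : ℝ := |p x - p y| with hDdef
  have hD0 : 0 ≤ D := abs_nonneg _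
  have hDeq : D = p x * p y * |1 / p x - 1 / p y| := by
    have key : 1 / p x - 1 / p y = (p y - p x) / (p x * p y) := by
      field_simp
    rw [hDdef, key, abs_div, abs_of_pos (mul_pos hpx0 hpy0), abs_sub_comm]
    field_simp
  have hDle : D ≤ B / L := by
    have h1 : |1 / p x - 1 / p y| ≤ clog / L := hlh x y hxy
    have h2 : D ≤ P * P * (clog / L) := by
      rw [hDeq]
      apply mul_le_mul
      · exact mul_le_mul hpxP hpyP hpy0.le hP0
      · exact h1
      · exact abs_nonneg _
      · positivity
    calc D ≤ P * P * (clog / L) := h2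
      _ = B / L := by rw [hBdef]; ring
  have hDB : D ≤ B := le_trans hDle (div_le_self hB0 hL1)
  -- key product estimate
  have hDlogs : D * Real.log (1 / s) ≤ B * (1 + Real.log (Real.sqrt M)) := by
    have h1 : Real.log (1 / s) ≤ (1 + Real.log (Real.sqrt M)) * L :=
      le_trans hlogs (mul_le_mul_of_nonneg_left hL'L (by linarith))
    have h2 : D * Real.log (1 / s) ≤ (B / L) * ((1 + Real.log (Real.sqrt M)) * L) :=
      mul_le_mul hDle h1 hlog1s (by positivity)
    calc D * Real.log (1 / s) ≤ (B / L) * ((1 + Real.log (Real.sqrt M)) * L) := h2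
      _ = B * (1 + Real.log (Real.sqrt M)) := by
          field_simp
  -- base positivity
  have hsM0 : (0:ℝ) < s ^ M := pow_pos hspos M
  have hρ0 : (0:ℝ) < ρ := lt_of_lt_of_le (Real.rpow_pos_of_pos hsM0 ℓ) hρl
  have hb0 : (0:ℝ) < κ + ρ := lt_of_lt_of_le hρ0 (by linarith [hκ.1])
  -- the central quantity
  have hmain : ((s ^ M : ℝ) ^ ℓ) ^ (-D) = Real.exp ((M : ℝ) * ℓ * D * Real.log (1 / s)) := by
    rw [← Real.rpow_mul hsM0.le, Real.rpow_def_of_pos hsM0, Real.log_pow,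
      one_div, Real.log_inv]
    congr 1
    ring
  have hmain_le : ((s ^ M : ℝ) ^ ℓ) ^ (-D) ≤ Real.exp A := by
    rw [hmain]
    apply Real.exp_le_exp.2
    calc (M : ℝ) * ℓ * D * Real.log (1 / s)
        = (M : ℝ) * ℓ * (D * Real.log (1 / s)) := by ring
      _ ≤ (M : ℝ) * ℓ * (B * (1 + Real.log (Real.sqrt M))) := by
          apply mul_le_mul_of_nonneg_left hDlogs
          exact mul_nonneg (Nat.cast_nonneg M) hℓ.le
      _ = A := by rw [hAdef]; ring
  have habs : |p x - p y| = D := rfl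
  have htleD : p x - p y ≤ D := le_abs_self _
  have hnegD : -D ≤ p x - p y := neg_abs_le _
  by_cases hble : κ + ρ ≤ 1
  · -- small base case
    calc (κ + ρ) ^ (p x - p y)
        ≤ (κ + ρ) ^ (-D) := Real.rpow_le_rpow_of_exponent_ge hb0 hble hnegD
      _ ≤ ((s ^ M : ℝ) ^ ℓ) ^ (-D) := by
          exact Real.rpow_le_rpow_of_nonpos (Real.rpow_pos_of_pos hsM0 ℓ)
            (by linarith [hκ.1]) (neg_nonpos.2 hD0)
      _ ≤ Real.exp A := hmain_le
      _ ≤ Real.exp (B * Real.log 2 + A) := by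
          apply Real.exp_le_exp.2
          have h2 : 0 ≤ B * Real.log 2 := mul_nonneg hB0 (Real.log_nonneg one_le_two)
          linarith
  · -- large base case
    push_neg at hble
    have h2bound : κ + ρ ≤ 2 * (s ^ M : ℝ) ^ (-ℓ) := by
      have h1 : (1:ℝ) ≤ (s ^ M : ℝ) ^ (-ℓ) := by
        calc (1:ℝ) = (s ^ M : ℝ) ^ (0:ℝ) := (Real.rpow_zero _).symm
          _ ≤ (s ^ M : ℝ) ^ (-ℓ) :=
            Real.rpow_le_rpow_of_exponent_ge hsM0 hsM (by linarith)
      linarith [hκ.2]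
    calc (κ + ρ) ^ (p x - p y)
        ≤ (κ + ρ) ^ D := Real.rpow_le_rpow_of_exponent_le hble.le htleD
      _ ≤ (2 * (s ^ M : ℝ) ^ (-ℓ)) ^ D := Real.rpow_le_rpow hb0.le h2bound hD0
      _ = 2 ^ D * ((s ^ M : ℝ) ^ (-ℓ)) ^ D := Real.mul_rpow zero_le_two (by positivity)
      _ = 2 ^ D * ((s ^ M : ℝ) ^ ℓ) ^ (-D) := by
          have h : ((s ^ M : ℝ) ^ (-ℓ)) ^ D = ((s ^ M : ℝ) ^ ℓ) ^ (-D) := by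
            rw [← Real.rpow_mul hsM0.le, ← Real.rpow_mul hsM0.le, neg_mul, mul_neg]
          rw [h]
      _ ≤ Real.exp (B * Real.log 2) * Real.exp A := by
          apply mul_le_mul _ hmain_le (by positivity) (Real.exp_nonneg _)
          rw [show (2:ℝ) ^ D = Real.exp (D * Real.log 2) by
            rw [Real.rpow_def_of_pos two_pos, mul_comm]]
          apply Real.exp_le_exp.2
          exact mul_le_mul_of_nonneg_right hDB (Real.log_nonneg one_le_two)
      _ = Real.exp (B * Real.log 2 + A) := (Real.exp_add _ _).symm
end

section
/- Let κ ≥ 0, α_x, α_t ∈ (0,1], and let p ∈ C^{α_x,α_t}([0,T]×Ω̄) with 1 < p⁻ ≤ p⁺ < ∞. Then there is a constant c > 0 such that for all (t,x), (s,y) ∈ [0,T]×Ω̄ and all η ∈ ℝ^{N×n} with η ≠ 0: |S(t,x,η) − S(s,y,η)| ≤ c (|t−s|^{α_t} + |x−y|^{α_x}) (1 + |ln(κ+|η|)|) ((κ+|η|)^{p(t,x)−2} + (κ+|η|)^{p(s,y)−2}) |η|. -/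
open Set

lemma exp_sub_exp_le (u v : ℝ) :
    |Real.exp u - Real.exp v| ≤ |u - v| * (Real.exp u + Real.exp v) := by
  wlog h : v ≤ u with H
  · have := H v u (le_of_not_ge h)
    rw [abs_sub_comm, abs_sub_comm u v]; linarith
  rw [abs_of_nonneg (by simpa using Real.exp_le_exp.2 h), abs_of_nonneg (by linarith)]
  have h1 : v - u + 1 ≤ Real.exp (v - u) := Real.add_one_le_exp (v - u)
  have h2 : Real.exp u - Real.exp v = Real.exp u * (1 - Real.exp (v - u)) := by
    rw [Real.exp_sub]; field_simp
  have h3 : 1 - Real.exp (v - u) ≤ u - v := by linarith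
  have h4 : Real.exp u * (1 - Real.exp (v - u)) ≤ Real.exp u * (u - v) :=
    mul_le_mul_of_nonneg_left h3 (Real.exp_pos u).le
  nlinarith [Real.exp_pos u, Real.exp_pos v]

/-- (Hölder continuity of `S` in `(t,x)`, inequality (growth2).)
Let `κ ≥ 0`, `α_x, α_t ∈ (0,1]` and `p ∈ C^{α_x,α_t}([0,T]×Ω̄)` with `1 < p⁻ ≤ p⁺ < ∞`.
Then there is `c > 0` such that for all `(t,x), (s,y) ∈ [0,T]×Ω̄` and all `η ≠ 0`:
`|S(t,x,η) − S(s,y,η)| ≤ c (|t−s|^{α_t} + |x−y|^{α_x}) (1 + |ln(κ+|η|)|)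
  ((κ+|η|)^{p(t,x)−2} + (κ+|η|)^{p(s,y)−2}) |η|`. -/
theorem stmt5 (N n : ℕ) (T : ℝ) (hT : 0 < T)
    (Ω : Set (EuclideanSpace ℝ (Fin n))) (hΩopen : IsOpen Ω) (hΩbdd : Bornology.IsBounded Ω)
    (κ αx αt : ℝ) (hκ : 0 ≤ κ) (hαx : αx ∈ Ioc (0:ℝ) 1) (hαt : αt ∈ Ioc (0:ℝ) 1)
    (p : ℝ × EuclideanSpace ℝ (Fin n) → ℝ) (pminus pplus c₀ : ℝ)
    (hpm : 1 < pminus) (hpp : pminus ≤ pplus) (hc₀ : 0 ≤ c₀)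
    (hbounds : ∀ z ∈ Icc (0:ℝ) T ×ˢ closure Ω, pminus ≤ p z ∧ p z ≤ pplus)
    (hHolder : ∀ t ∈ Icc (0:ℝ) T, ∀ s ∈ Icc (0:ℝ) T, ∀ x ∈ closure Ω, ∀ y ∈ closure Ω,
      |p (t, x) - p (s, y)| ≤ c₀ * (|t - s| ^ αt + ‖x - y‖ ^ αx)) :
    ∃ c : ℝ, 0 < c ∧
      ∀ t ∈ Icc (0:ℝ) T, ∀ s ∈ Icc (0:ℝ) T, ∀ x ∈ closure Ω, ∀ y ∈ closure Ω,
        ∀ η : EuclideanSpace ℝ (Fin N × Fin n), η ≠ 0 →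
          ‖(κ + ‖η‖) ^ (p (t, x) - 2) • η - (κ + ‖η‖) ^ (p (s, y) - 2) • η‖ ≤
            c * (|t - s| ^ αt + ‖x - y‖ ^ αx) * (1 + |Real.log (κ + ‖η‖)|) *
              ((κ + ‖η‖) ^ (p (t, x) - 2) + (κ + ‖η‖) ^ (p (s, y) - 2)) * ‖η‖ := by
  refine ⟨c₀ + 1, by linarith, ?_⟩
  intro t ht s hs x hx y hy η hη
  set a : ℝ := κ + ‖η‖ with ha_def
  have ha : 0 < a := by
    have : 0 < ‖η‖ := norm_pos_iff.2 hη
    positivity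
  set b₁ : ℝ := p (t, x) - 2
  set b₂ : ℝ := p (s, y) - 2
  set Δ : ℝ := |t - s| ^ αt + ‖x - y‖ ^ αx with hΔ_def
  have hΔ : 0 ≤ Δ := by
    have := Real.rpow_nonneg (abs_nonneg (t - s)) αt
    have := Real.rpow_nonneg (norm_nonneg (x - y)) αx
    positivity
  have hb : |b₁ - b₂| ≤ c₀ * Δ := by
    have := hHolder t ht s hs x hx y hy
    simpa [b₁, b₂, sub_sub_sub_cancel_right] using this
  set L : ℝ := Real.log a
  have hrw : ∀ b : ℝ, a ^ b = Real.exp (b * L) := fun b => by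
    rw [Real.rpow_def_of_pos ha, mul_comm]
  have key : |a ^ b₁ - a ^ b₂| ≤ |b₁ - b₂| * |L| * (a ^ b₁ + a ^ b₂) := by
    rw [hrw b₁, hrw b₂]
    calc |Real.exp (b₁ * L) - Real.exp (b₂ * L)|
        ≤ |b₁ * L - b₂ * L| * (Real.exp (b₁ * L) + Real.exp (b₂ * L)) :=
          exp_sub_exp_le _ _
      _ = |b₁ - b₂| * |L| * (Real.exp (b₁ * L) + Real.exp (b₂ * L)) := by
          rw [← sub_mul, abs_mul]
  have hlhs : ‖a ^ b₁ • η - a ^ b₂ • η‖ = |a ^ b₁ - a ^ b₂| * ‖η‖ := by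
    rw [← sub_smul, norm_smul, Real.norm_eq_abs]
  rw [hlhs]
  have hsum : 0 ≤ a ^ b₁ + a ^ b₂ := by positivity
  have hcoef : |b₁ - b₂| * |L| ≤ (c₀ + 1) * Δ * (1 + |L|) := by
    have h1 : |b₁ - b₂| ≤ (c₀ + 1) * Δ := le_trans hb (by nlinarith)
    have h2 : |L| ≤ 1 + |L| := by linarith [abs_nonneg L]
    have := mul_le_mul h1 h2 (abs_nonneg L) (by positivity)
    linarith
  calc |a ^ b₁ - a ^ b₂| * ‖η‖
      ≤ (|b₁ - b₂| * |L| * (a ^ b₁ + a ^ b₂)) * ‖η‖ :=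
        mul_le_mul_of_nonneg_right key (norm_nonneg η)
    _ ≤ ((c₀ + 1) * Δ * (1 + |L|) * (a ^ b₁ + a ^ b₂)) * ‖η‖ := by
        apply mul_le_mul_of_nonneg_right _ (norm_nonneg η)
        exact mul_le_mul_of_nonneg_right hcoef hsum
end

section
/- Let κ ≥ 0, α_x, α_t ∈ (0,1], p ∈ C^{α_x,α_t}([0,T]×Ω̄) with 1 < p⁻ ≤ p⁺ < ∞, and let s > 1 and δ > 0. Then there exist a constant c_{δ,s} > 0 and Δt₀ ∈ (0,1) such that for all 0 < Δt ≤ Δt₀, all σ, t ∈ [0,T] with |t − σ| ≤ Δt, all x ∈ Ω̄, and all ξ, η ∈ ℝ^{N×n}: (S(t,x,ξ) − S(σ,x,ξ)) : (ξ − η) ≤ δ |F(t,x,ξ) − F(t,x,η)|² + c_{δ,s} (Δt)^{2α_t} (1 + |ξ|)^{p(t,x)·s}. -/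
open Set
open scoped RealInnerProductSpace

open Real


namespace Stmt6Aux

lemma rpow_mid {a : ℝ} (ha : 0 < a) {u v : ℝ} (h : |u| ≤ v) : a ^ u ≤ a ^ v + a ^ (-v) := by
  have h1 := (abs_le.1 h).1
  have h2 := (abs_le.1 h).2
  rcases le_or_gt 1 a with hh | hh
  · have : a ^ u ≤ a ^ v := Real.rpow_le_rpow_of_exponent_le hh h2
    have h0 : 0 ≤ a ^ (-v) := Real.rpow_nonneg ha.le _
    linarith
  · have : a ^ u ≤ a ^ (-v) := Real.rpow_le_rpow_of_exponent_ge ha hh.le (neg_le.2 (neg_le.1 h1))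
    have h0 : 0 ≤ a ^ v := Real.rpow_nonneg ha.le _
    linarith

lemma rpow_mid' {a : ℝ} (ha : 0 < a) {u w v : ℝ} (h : |w| ≤ v) :
    a ^ (u + w) ≤ a ^ (u + v) + a ^ (u - v) := by
  have := rpow_mid ha h
  have hpos : 0 < a ^ u := Real.rpow_pos_of_pos ha u
  calc a ^ (u + w) = a ^ u * a ^ w := Real.rpow_add ha u w
    _ ≤ a ^ u * (a ^ v + a ^ (-v)) := by nlinarith
    _ = a ^ (u + v) + a ^ (u - v) := by
        rw [mul_add, ← Real.rpow_add ha, ← Real.rpow_add ha]; ring_nf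

lemma log_le_rpow {a ε : ℝ} (ha : 0 < a) (hε : 0 < ε) : Real.log a ≤ a ^ ε / ε := by
  have h1 : Real.log (a ^ ε) ≤ a ^ ε - 1 := Real.log_le_sub_one_of_pos (Real.rpow_pos_of_pos ha ε)
  rw [Real.log_rpow ha] at h1
  rw [le_div_iff₀ hε]
  nlinarith [Real.rpow_pos_of_pos ha ε]

lemma abs_log_le {a ε : ℝ} (ha : 0 < a) (hε : 0 < ε) :
    |Real.log a| ≤ (a ^ ε + a ^ (-ε)) / ε := by
  have h1 := log_le_rpow ha hε
  have h2 := log_le_rpow (inv_pos.2 ha) hε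
  rw [Real.log_inv, Real.inv_rpow ha.le, ← Real.rpow_neg ha.le] at h2
  have hp1 : 0 < a ^ ε := Real.rpow_pos_of_pos ha _
  have hp2 : 0 < a ^ (-ε) := Real.rpow_pos_of_pos ha _
  have e1 : a ^ ε / ε ≤ (a ^ ε + a ^ (-ε)) / ε := by gcongr; linarith
  have e2 : a ^ (-ε) / ε ≤ (a ^ ε + a ^ (-ε)) / ε := by gcongr; linarith
  rw [abs_le]
  constructor <;> linarith

lemma exp_diff (X Y : ℝ) : |Real.exp X - Real.exp Y| ≤ |X - Y| * Real.exp (max X Y) := by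
  wlog h : Y ≤ X generalizing X Y
  · have := this Y X (le_of_not_ge h)
    rw [abs_sub_comm, abs_sub_comm X Y, max_comm]; exact this
  rw [max_eq_left h, abs_of_nonneg (sub_nonneg.2 (Real.exp_le_exp.2 h)),
    abs_of_nonneg (sub_nonneg.2 h)]
  have hb := Real.add_one_le_exp (Y - X)
  have e : Real.exp (Y - X) * Real.exp X = Real.exp Y := by
    rw [← Real.exp_add]; ring_nf
  nlinarith [mul_le_mul_of_nonneg_right hb (Real.exp_pos X).le, Real.exp_pos X]

lemma rpow_diff_le {a u v τ : ℝ} (ha : 0 < a) (hτ : 0 ≤ τ) (h : |u - v| ≤ τ) :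
    |a ^ u - a ^ v| ≤ τ * |Real.log a| * (a ^ (u + τ) + a ^ (u - τ)) := by
  have hL : ∀ z : ℝ, a ^ z = Real.exp (Real.log a * z) := fun z => Real.rpow_def_of_pos ha z
  set L := Real.log a with hLdef
  have key := exp_diff (L * u) (L * v)
  have h1 : |L * u - L * v| ≤ |L| * τ := by
    rw [← mul_sub, abs_mul]
    exact mul_le_mul_of_nonneg_left h (abs_nonneg L)
  have h2 : Real.exp (max (L * u) (L * v)) ≤ a ^ (u + τ) + a ^ (u - τ) := by
    have hm : max (L * u) (L * v) ≤ L * u + |L| * τ := by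
      rcases le_total (L * u) (L * v) with hc | hc
      · rw [max_eq_right hc]
        have : L * v - L * u ≤ |L| * τ := by
          calc L * v - L * u ≤ |L * v - L * u| := le_abs_self _
            _ = |L * u - L * v| := (abs_sub_comm _ _)
            _ ≤ |L| * τ := h1
        linarith
      · rw [max_eq_left hc]
        have : 0 ≤ |L| * τ := by positivity
        linarith
    have : Real.exp (max (L * u) (L * v)) ≤ Real.exp (L * u) * Real.exp (|L| * τ) := by
      rw [← Real.exp_add]; exact Real.exp_le_exp.2 hm
    refine this.trans ?_
    have hexp : Real.exp (|L| * τ) ≤ a ^ τ + a ^ (-τ) := by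
      rcases abs_cases L with ⟨hL1, _⟩ | ⟨hL1, _⟩
      · rw [hL1]
        have : Real.exp (L * τ) = a ^ τ := by rw [hL]
        rw [mul_comm] at this ⊢
        rw [this]
        have : 0 < a ^ (-τ) := Real.rpow_pos_of_pos ha _
        linarith
      · rw [hL1]
        have : Real.exp (-L * τ) = a ^ (-τ) := by rw [hL]; ring_nf
        rw [this]
        have : 0 < a ^ τ := Real.rpow_pos_of_pos ha _
        linarith
    calc Real.exp (L * u) * Real.exp (|L| * τ) = a ^ u * Real.exp (|L| * τ) := by rw [hL]
      _ ≤ a ^ u * (a ^ τ + a ^ (-τ)) := by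
          have : 0 < a ^ u := Real.rpow_pos_of_pos ha _
          nlinarith [Real.exp_pos (|L| * τ)]
      _ = a ^ (u + τ) + a ^ (u - τ) := by
          rw [mul_add, ← Real.rpow_add ha, ← Real.rpow_add ha]; ring_nf
  calc |a ^ u - a ^ v| = |Real.exp (L * u) - Real.exp (L * v)| := by rw [hL, hL]
    _ ≤ |L * u - L * v| * Real.exp (max (L * u) (L * v)) := key
    _ ≤ (|L| * τ) * (a ^ (u + τ) + a ^ (u - τ)) := by
        apply mul_le_mul h1 h2 (Real.exp_pos _).le
        positivity
    _ = τ * |L| * (a ^ (u + τ) + a ^ (u - τ)) := by ring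


/-- θ-bound: `|a^u - a^v| ≤ 4 (τ/ε) (a^{u+μ} + a^{u-μ})`, `μ = ε + τ`. -/
lemma theta_bound {a u v τ ε : ℝ} (ha : 0 < a) (hτ : 0 ≤ τ) (hε : 0 < ε)
    (h : |u - v| ≤ τ) :
    |a ^ u - a ^ v| ≤ 4 * (τ / ε) * (a ^ (u + (ε + τ)) + a ^ (u - (ε + τ))) := by
  set μ := ε + τ with hμ
  have h1 := rpow_diff_le ha hτ h
  have h2 := abs_log_le ha hε
  have hS : (a ^ ε + a ^ (-ε)) * (a ^ (u + τ) + a ^ (u - τ)) ≤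
      4 * (a ^ (u + μ) + a ^ (u - μ)) := by
    have k1 : a ^ ε * a ^ (u + τ) = a ^ (u + μ) := by
      rw [← Real.rpow_add ha, hμ]; ring_nf
    have k2 : a ^ (-ε) * a ^ (u - τ) = a ^ (u - μ) := by
      rw [← Real.rpow_add ha, hμ]; ring_nf
    have k3 : a ^ (-ε) * a ^ (u + τ) ≤ a ^ (u + μ) + a ^ (u - μ) := by
      rw [← Real.rpow_add ha]
      have : -ε + (u + τ) = u + (τ - ε) := by ring
      rw [this]
      refine rpow_mid' ha ?_
      rw [hμ, abs_le]; constructor <;> nlinarith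
    have k4 : a ^ ε * a ^ (u - τ) ≤ a ^ (u + μ) + a ^ (u - μ) := by
      rw [← Real.rpow_add ha]
      have : ε + (u - τ) = u + (ε - τ) := by ring
      rw [this]
      refine rpow_mid' ha ?_
      rw [hμ, abs_le]; constructor <;> nlinarith
    have p1 : 0 ≤ a ^ (u + μ) := Real.rpow_nonneg ha.le _
    have p2 : 0 ≤ a ^ (u - μ) := Real.rpow_nonneg ha.le _
    nlinarith [k1, k2, k3, k4]
  have hnn : 0 ≤ a ^ (u + τ) + a ^ (u - τ) := by positivity
  calc |a ^ u - a ^ v| ≤ τ * |Real.log a| * (a ^ (u + τ) + a ^ (u - τ)) := h1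
    _ ≤ τ * ((a ^ ε + a ^ (-ε)) / ε) * (a ^ (u + τ) + a ^ (u - τ)) := by
        apply mul_le_mul_of_nonneg_right _ hnn
        exact mul_le_mul_of_nonneg_left h2 hτ
    _ = (τ / ε) * ((a ^ ε + a ^ (-ε)) * (a ^ (u + τ) + a ^ (u - τ))) := by ring
    _ ≤ (τ / ε) * (4 * (a ^ (u + μ) + a ^ (u - μ))) := by
        apply mul_le_mul_of_nonneg_left hS (by positivity)
    _ = 4 * (τ / ε) * (a ^ (u + μ) + a ^ (u - μ)) := by ring

/-- Master exponent lemma: absorbing `a^{P+w}` into `(1+κ)^{pp s} b^{P s}`. -/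
lemma master {a b κ P w pp s : ℝ} (hκ : 0 ≤ κ) (ha : 0 < a) (hab : a ≤ (1 + κ) * b)
    (hb : 1 ≤ b) (hw0 : 0 ≤ P + w) (hws : P + w ≤ P * s) (hP : 0 < P) (hpp : P * s ≤ pp * s) :
    a ^ (P + w) ≤ (1 + κ) ^ (pp * s) * b ^ (P * s) := by
  have hks : (1:ℝ) ≤ (1 + κ) ^ (pp * s) := by
    apply Real.one_le_rpow (by linarith)
    nlinarith [hP, hws, hw0]
  have hbs : (1:ℝ) ≤ b ^ (P * s) := Real.one_le_rpow hb (by nlinarith)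
  rcases le_or_gt a 1 with h1 | h1
  · have : a ^ (P + w) ≤ 1 := Real.rpow_le_one ha.le h1 hw0
    nlinarith
  · have s1 : a ^ (P + w) ≤ a ^ (P * s) := Real.rpow_le_rpow_of_exponent_le h1.le hws
    have s2 : a ^ (P * s) ≤ ((1 + κ) * b) ^ (P * s) :=
      Real.rpow_le_rpow ha.le hab (by nlinarith)
    have s3 : ((1 + κ) * b) ^ (P * s) = (1 + κ) ^ (P * s) * b ^ (P * s) :=
      Real.mul_rpow (by linarith) (by linarith)
    have s4 : (1 + κ) ^ (P * s) ≤ (1 + κ) ^ (pp * s) :=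
      Real.rpow_le_rpow_of_exponent_le (by linarith) hpp
    calc a ^ (P + w) ≤ ((1 + κ) * b) ^ (P * s) := s1.trans s2
      _ = (1 + κ) ^ (P * s) * b ^ (P * s) := s3
      _ ≤ (1 + κ) ^ (pp * s) * b ^ (P * s) := by nlinarith

variable {E : Type*} [NormedAddCommGroup E] [InnerProductSpace ℝ E]

lemma Vident (cR cr : ℝ) (hcR : 0 ≤ cR) (hcr : 0 ≤ cr) (ξ η : E) :
    ‖cR • ξ - cr • η‖ ^ 2 =
      (cR * ‖ξ‖ - cr * ‖η‖) ^ 2 + 2 * (cR * cr) * (‖ξ‖ * ‖η‖ - ⟪ξ, η⟫) := by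
  rw [norm_sub_sq_real, norm_smul, norm_smul, real_inner_smul_left, real_inner_smul_right,
    Real.norm_eq_abs, Real.norm_eq_abs, abs_of_nonneg hcR, abs_of_nonneg hcr]
  ring

lemma rho_ident (ξ η : E) :
    ‖ξ - η‖ ^ 2 = (‖ξ‖ - ‖η‖) ^ 2 + 2 * (‖ξ‖ * ‖η‖ - ⟪ξ, η⟫) := by
  rw [norm_sub_sq_real]; ring

/-- radial monotonicity estimate for `f(t) = (κ+t)^γ t`. -/
lemma radial {κ r R γ : ℝ} (hκ : 0 ≤ κ) (hr : 0 ≤ r) (hrR : r ≤ R) (hγ : -(1/2) < γ) :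
    min 1 (1 + γ) * ((κ + R) ^ γ * (R - r)) ≤ (κ + R) ^ γ * R - (κ + r) ^ γ * r := by
  have hR0 : 0 ≤ κ + R := by linarith
  have hcR : 0 ≤ (κ + R) ^ γ := Real.rpow_nonneg hR0 _
  rcases le_or_gt 0 γ with hγ0 | hγ0
  · have hmono : (κ + r) ^ γ ≤ (κ + R) ^ γ :=
      Real.rpow_le_rpow (by linarith) (by linarith) hγ0
    have hmin : min 1 (1 + γ) = 1 := min_eq_left (by linarith)
    rw [hmin, one_mul]
    have : (κ + r) ^ γ * r ≤ (κ + R) ^ γ * r := by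
      apply mul_le_mul_of_nonneg_right hmono hr
    nlinarith
  · -- γ < 0
    have hmin : min 1 (1 + γ) = 1 + γ := min_eq_right (by linarith)
    rw [hmin]
    rcases eq_or_lt_of_le (by linarith : (0:ℝ) ≤ κ + r) with hr0 | hr0
    · -- κ + r = 0, so r = 0 and κ = 0
      have hκ0 : κ = 0 := by linarith
      have hrr : r = 0 := by linarith
      rw [hrr, mul_zero, sub_zero, sub_zero]
      have h1 : 0 ≤ (κ + R) ^ γ * R := mul_nonneg hcR (hrr ▸ hrR)
      nlinarith
    · have hRpos : 0 < κ + R := lt_of_lt_of_le hr0 (by linarith)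
      set γ' := -γ with hγ'
      have hγ'1 : 0 ≤ γ' := by simp [hγ']; linarith
      have hγ'2 : γ' ≤ 1/2 := by simp [hγ']; linarith
      set lam := (κ + r) / (κ + R) with hlam
      have hlam0 : 0 < lam := div_pos hr0 hRpos
      have hlam1 : lam ≤ 1 := by
        rw [hlam, div_le_one hRpos]; linarith
      -- Bernoulli / AM-GM : lam ^ γ ≤ γ' * lam⁻¹ + (1 - γ')
      have bern : lam ^ γ ≤ γ' * lam⁻¹ + (1 - γ') := by
        have := Real.geom_mean_le_arith_mean2_weighted hγ'1 (by linarith : (0:ℝ) ≤ 1 - γ')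
          (le_of_lt (inv_pos.2 hlam0)) zero_le_one (by ring)
        rw [Real.one_rpow, mul_one, mul_one] at this
        have heq : lam ^ γ = lam⁻¹ ^ γ' := by
          rw [← Real.rpow_neg_one lam, ← Real.rpow_mul hlam0.le]
          congr 1; rw [hγ']; ring
        rw [heq]; exact this
      -- (κ+r)^γ = (κ+R)^γ * lam^γ
      have hsplit : (κ + r) ^ γ = (κ + R) ^ γ * lam ^ γ := by
        rw [← Real.mul_rpow hRpos.le hlam0.le]
        congr 1
        rw [hlam, mul_div_assoc', mul_div_cancel_left₀ _ hRpos.ne']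
      -- r / lam ≤ R
      have hrlam : r * lam⁻¹ ≤ R := by
        rw [hlam, inv_div, ← mul_div_assoc, div_le_iff₀ hr0]
        nlinarith
      have hkey : (κ + r) ^ γ * r ≤ (κ + R) ^ γ * (γ' * R + (1 - γ') * r) := by
        rw [hsplit, mul_assoc]
        apply mul_le_mul_of_nonneg_left _ hcR
        calc lam ^ γ * r ≤ (γ' * lam⁻¹ + (1 - γ')) * r := by
              apply mul_le_mul_of_nonneg_right bern hr
          _ = γ' * (r * lam⁻¹) + (1 - γ') * r := by ring
          _ ≤ γ' * R + (1 - γ') * r := by nlinarith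
      have : (κ + R) ^ γ * R - (κ + R) ^ γ * (γ' * R + (1 - γ') * r)
          = (1 + γ) * ((κ + R) ^ γ * (R - r)) := by rw [hγ']; ring
      linarith [hkey, this.symm.le]


lemma two_rpow_two : ((2:ℝ)) ^ ((2:ℝ)) = 4 := by
  rw [show (2:ℝ) = ((2:ℕ):ℝ) from by norm_num, Real.rpow_natCast]; norm_num

lemma four_rpow_neg (pp : ℝ) : (4:ℝ) ^ (-pp) = (2:ℝ) ^ (-(2*pp)) := by
  rw [show (4:ℝ) = (2:ℝ) ^ ((2:ℝ)) from two_rpow_two.symm, ← Real.rpow_mul (by norm_num)]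
  ring_nf

lemma two_rpow_le_one {x : ℝ} (hx : x ≤ 0) : (2:ℝ) ^ x ≤ 1 :=
  Real.rpow_le_one_of_one_le_of_nonpos one_le_two hx

set_option maxHeartbeats 1000000 in
lemma Vcore {κ pm pp P : ℝ} (hκ : 0 ≤ κ) (hpm : 1 < pm) (hPl : pm ≤ P) (hPu : P ≤ pp)
    (ξ η : E) (hle : ‖η‖ ≤ ‖ξ‖) :
    (min 1 (pm/2))^2 * (4:ℝ)^(-pp) / 9 * (κ + ‖ξ‖ + ‖η‖) ^ (P - 2) * ‖ξ - η‖^2 ≤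
      ‖(κ + ‖ξ‖) ^ ((P-2)/2) • ξ - (κ + ‖η‖) ^ ((P-2)/2) • η‖^2 := by
  have hpp0 : 0 < pp := by linarith
  set R := ‖ξ‖ with hR
  set r := ‖η‖ with hr
  have hR0 : 0 ≤ R := norm_nonneg _
  have hr0 : 0 ≤ r := norm_nonneg _
  set γ := (P - 2)/2 with hγdef
  have hγlb : -(1/2) < γ := by rw [hγdef]; linarith
  set crad := min 1 (pm/2) with hcrad
  have hcrad0 : 0 < crad := lt_min one_pos (by linarith)
  have hcrad1 : crad ≤ 1 := min_le_left _ _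
  have hcradsq : crad^2 ≤ 1 := by nlinarith
  set c4 := (4:ℝ)^(-pp) with hc4
  have hc40 : 0 < c4 := Real.rpow_pos_of_pos (by norm_num) _
  have hc41 : c4 ≤ 1 := by
    rw [hc4, four_rpow_neg]; exact two_rpow_le_one (by linarith)
  rcases eq_or_lt_of_le (by linarith : (0:ℝ) ≤ κ + R) with hdeg | haR
  · have hR00 : R = 0 := by linarith
    have hr00 : r = 0 := by linarith
    have hξ : ξ = 0 := norm_eq_zero.1 hR00
    have hη : η = 0 := norm_eq_zero.1 hr00
    rw [hξ, hη]
    simp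
  set w := κ + R + r with hw
  have hw0 : 0 < w := by linarith
  have hwp : 0 ≤ w ^ (P-2) := Real.rpow_nonneg hw0.le _
  set cR := (κ + R) ^ γ with hcR
  set cr := (κ + r) ^ γ with hcr
  have hcR0 : 0 ≤ cR := Real.rpow_nonneg (by linarith) _
  have hcr0 : 0 ≤ cr := Real.rpow_nonneg (by linarith) _
  set K := R * r - ⟪ξ, η⟫ with hK
  have hK0 : 0 ≤ K := by
    have := real_inner_le_norm ξ η; rw [hK]; linarith
  have hK2 : K ≤ 2 * (R * r) := by
    have h := abs_real_inner_le_norm ξ η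
    have := neg_abs_le ⟪ξ, η⟫
    rw [hK]; nlinarith
  have hDsq : ‖cR • ξ - cr • η‖ ^ 2 = (cR * R - cr * r)^2 + 2*(cR*cr)*K :=
    Vident cR cr hcR0 hcr0 ξ η
  have hrho : ‖ξ - η‖ ^ 2 = (R - r)^2 + 2*K := rho_ident ξ η
  have hrad : crad * (cR * (R - r)) ≤ cR * R - cr * r := by
    have h1 := radial (κ := κ) (r := r) (R := R) hκ hr0 hle hγlb
    have h2 : crad ≤ min 1 (1 + γ) := by
      apply le_min hcrad1
      rw [hcrad]
      exact (min_le_right _ _).trans (by rw [hγdef]; linarith)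
    have h3 : 0 ≤ cR * (R - r) := mul_nonneg hcR0 (by linarith)
    calc crad * (cR * (R - r)) ≤ min 1 (1 + γ) * (cR * (R - r)) :=
          mul_le_mul_of_nonneg_right h2 h3
      _ ≤ cR * R - cr * r := h1
  have hradnn : 0 ≤ crad * (cR * (R - r)) :=
    mul_nonneg hcrad0.le (mul_nonneg hcR0 (by linarith))
  have hcRsq : cR * cR = (κ + R) ^ (P - 2) := by
    rw [hcR, ← Real.rpow_add haR]; congr 1; rw [hγdef]; ring
  have hwsq : w ^ γ * w ^ γ = w ^ (P - 2) := by
    rw [← Real.rpow_add hw0]; congr 1; rw [hγdef]; ring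
  have cw : c4 * w ^ (P - 2) ≤ cR * cR := by
    rw [hcRsq]
    rcases le_or_gt 2 P with h2P | h2P
    · have hwle : w ≤ 2 * (κ + R) := by rw [hw]; linarith
      have e1 : w ^ (P-2) ≤ (2*(κ+R)) ^ (P-2) :=
        Real.rpow_le_rpow hw0.le hwle (by linarith)
      have e2 : (2*(κ+R)) ^ (P-2) = 2^(P-2) * (κ+R)^(P-2) :=
        Real.mul_rpow (by norm_num) (by linarith)
      have e3 : c4 * 2^(P-2) ≤ 1 := by
        rw [hc4, four_rpow_neg, ← Real.rpow_add (by norm_num : (0:ℝ) < 2)]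
        exact two_rpow_le_one (by linarith)
      have hp1 : 0 ≤ (κ+R) ^ (P-2) := Real.rpow_nonneg (by linarith) _
      have hp2 : 0 ≤ (2:ℝ) ^ (P-2) := Real.rpow_nonneg (by norm_num) _
      calc c4 * w ^ (P-2) ≤ c4 * ((2:ℝ)^(P-2) * (κ+R)^(P-2)) := by
            rw [← e2]; exact mul_le_mul_of_nonneg_left e1 hc40.le
        _ = (c4 * 2^(P-2)) * (κ+R)^(P-2) := by ring
        _ ≤ 1 * (κ+R)^(P-2) := mul_le_mul_of_nonneg_right e3 hp1
        _ = (κ+R)^(P-2) := one_mul _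
    · have e1 : w ^ (P-2) ≤ (κ+R) ^ (P-2) :=
        Real.rpow_le_rpow_of_nonpos haR (by rw [hw]; linarith) (by linarith)
      calc c4 * w ^ (P-2) ≤ 1 * w ^ (P-2) := mul_le_mul_of_nonneg_right hc41 hwp
        _ = w ^ (P-2) := one_mul _
        _ ≤ (κ+R) ^ (P-2) := e1
  have hsq : (crad * (cR * (R - r)))^2 ≤ (cR * R - cr * r)^2 :=
    sq_le_sq' (by linarith) hrad
  have t1 : crad^2 * (c4 * w ^ (P-2)) * (R-r)^2 ≤ (cR * R - cr * r)^2 := by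
    have u1 : crad^2 * (c4 * w ^ (P-2)) * (R-r)^2 ≤ crad^2 * (cR*cR) * (R-r)^2 := by
      have := mul_le_mul_of_nonneg_right
        (mul_le_mul_of_nonneg_left cw (sq_nonneg crad)) (sq_nonneg (R-r))
      calc crad^2 * (c4 * w ^ (P-2)) * (R-r)^2
          = crad^2 * (c4 * w ^ (P-2)) * (R-r)^2 := rfl
        _ ≤ crad^2 * (cR*cR) * (R-r)^2 := this
    calc crad^2 * (c4 * w ^ (P-2)) * (R-r)^2 ≤ crad^2 * (cR*cR) * (R-r)^2 := u1
      _ = (crad * (cR * (R - r)))^2 := by ring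
      _ ≤ (cR * R - cr * r)^2 := hsq
  rcases le_total (2*r) R with hcase | hcase
  · -- case B : 2r ≤ R
    have hRr2 : R * r ≤ 2 * (R - r)^2 := by
      nlinarith [mul_nonneg (by linarith : (0:ℝ) ≤ 2*R - r) (by linarith : (0:ℝ) ≤ R - 2*r)]
    have hrho9 : ‖ξ - η‖^2 ≤ 9 * (R - r)^2 := by rw [hrho]; nlinarith [hK2, hRr2]
    have step : crad^2 * (c4 * w ^ (P-2)) * (R-r)^2 ≤ ‖cR • ξ - cr • η‖ ^ 2 := by
      rw [hDsq]
      have h2nn : 0 ≤ 2*(cR*cr)*K := by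
        have := mul_nonneg (mul_nonneg hcR0 hcr0) hK0
        linarith
      linarith [t1]
    calc crad^2 * c4 / 9 * w ^ (P-2) * ‖ξ - η‖^2
        ≤ crad^2 * c4 / 9 * w ^ (P-2) * (9 * (R-r)^2) := by
          apply mul_le_mul_of_nonneg_left hrho9
          apply mul_nonneg (by positivity) hwp
      _ = crad^2 * (c4 * w ^ (P-2)) * (R-r)^2 := by ring
      _ ≤ ‖cR • ξ - cr • η‖ ^ 2 := step
  · -- case A : R ≤ 2r
    have hhalf : (κ + R)/2 ≤ κ + r := by linarith
    have hhalfpos : 0 < κ + r := by linarith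
    have cang : c4 * w ^ (P-2) ≤ cR * cr := by
      rcases le_or_gt 2 P with h2P | h2P
      · have hγ0 : 0 ≤ γ := by rw [hγdef]; linarith
        have e1 : ((κ+R)/2) ^ γ ≤ cr :=
          Real.rpow_le_rpow (by linarith) hhalf hγ0
        have e2 : ((κ+R)/2) ^ γ = (κ+R)^γ / 2^γ :=
          Real.div_rpow (x := κ+R) (y := 2) (by linarith) (by norm_num) γ
        have hp3 : 0 < (2:ℝ) ^ γ := Real.rpow_pos_of_pos (by norm_num) _
        have e3 : (κ+R)^(P-2) / 2^γ ≤ cR * cr := by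
          rw [← hcRsq, div_le_iff₀ hp3]
          calc cR * cR = ((κ+R)^γ / 2^γ) * 2^γ * cR := by
                rw [hcR]; field_simp
            _ ≤ cr * 2 ^ γ * cR := by
                apply mul_le_mul_of_nonneg_right _ hcR0
                apply mul_le_mul_of_nonneg_right _ hp3.le
                rw [← e2]; exact e1
            _ = cR * cr * 2 ^ γ := by ring
        have hwle : w ≤ 2 * (κ + R) := by rw [hw]; linarith
        have f1 : w ^ (P-2) ≤ 2^(P-2) * (κ+R)^(P-2) := by
          rw [← Real.mul_rpow (by norm_num) (by linarith)]
          exact Real.rpow_le_rpow hw0.le hwle (by linarith)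
        have f2 : c4 * (2^(P-2) * 2^γ) ≤ 1 := by
          rw [hc4, four_rpow_neg, ← Real.rpow_add (by norm_num : (0:ℝ) < 2),
            ← Real.rpow_add (by norm_num : (0:ℝ) < 2)]
          apply two_rpow_le_one
          rw [hγdef]; linarith
        have hp1 : 0 ≤ (κ+R) ^ (P-2) := Real.rpow_nonneg (by linarith) _
        have hp2 : 0 < (2:ℝ) ^ (P-2) := Real.rpow_pos_of_pos (by norm_num) _
        calc c4 * w ^ (P-2) ≤ c4 * (2^(P-2) * (κ+R)^(P-2)) :=
              mul_le_mul_of_nonneg_left f1 hc40.le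
          _ = (c4 * (2^(P-2) * 2^γ)) * ((κ+R)^(P-2) / 2^γ) := by
              field_simp
          _ ≤ 1 * ((κ+R)^(P-2) / 2^γ) := by
              apply mul_le_mul_of_nonneg_right f2 (by positivity)
          _ = (κ+R)^(P-2) / 2^γ := one_mul _
          _ ≤ cR * cr := e3
      · have hγ0 : γ ≤ 0 := by rw [hγdef]; linarith
        have e1 : w ^ γ ≤ cR :=
          Real.rpow_le_rpow_of_nonpos haR (by rw [hw]; linarith) hγ0
        have e2 : w ^ γ ≤ cr :=
          Real.rpow_le_rpow_of_nonpos hhalfpos (by rw [hw]; linarith) hγ0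
        have hwγ : 0 ≤ w ^ γ := Real.rpow_nonneg hw0.le _
        calc c4 * w ^ (P-2) ≤ 1 * w ^ (P-2) := mul_le_mul_of_nonneg_right hc41 hwp
          _ = w ^ γ * w ^ γ := by rw [one_mul, hwsq]
          _ ≤ cR * cr := mul_le_mul e1 e2 hwγ hcR0
    have t2 : 2 * (c4 * w^(P-2)) * K ≤ 2*(cR*cr)*K := by
      have := mul_le_mul_of_nonneg_right cang hK0
      linarith
    have t3 : crad^2 * ((c4 * w^(P-2)) * (2*K)) ≤ 2 * (c4 * w^(P-2)) * K := by
      have hnn : 0 ≤ (c4 * w^(P-2)) * (2*K) :=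
        mul_nonneg (mul_nonneg hc40.le hwp) (by linarith)
      have h6 := mul_le_mul_of_nonneg_right hcradsq hnn
      calc crad^2 * ((c4 * w^(P-2)) * (2*K)) ≤ 1 * ((c4 * w^(P-2)) * (2*K)) := h6
        _ = 2 * (c4 * w^(P-2)) * K := by ring
    have hD1 : crad^2 * (c4 * w ^ (P-2)) * (R-r)^2 + 2 * (c4 * w^(P-2)) * K
        ≤ ‖cR • ξ - cr • η‖ ^ 2 := by
      rw [hDsq]
      linarith [t1, t2]
    have coef9 : crad^2 * c4 / 9 * w ^ (P-2) * ‖ξ - η‖^2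
        ≤ crad^2 * (c4 * w ^ (P-2)) * ‖ξ - η‖^2 := by
      have hx : 0 ≤ crad^2 * (c4 * w ^ (P-2)) * ‖ξ - η‖^2 := by
        apply mul_nonneg (mul_nonneg (sq_nonneg _) (mul_nonneg hc40.le hwp)) (sq_nonneg _)
      have heq : crad^2 * c4 / 9 * w ^ (P-2) * ‖ξ - η‖^2
          = (crad^2 * (c4 * w ^ (P-2)) * ‖ξ - η‖^2) / 9 := by ring
      rw [heq]; linarith
    calc crad^2 * c4 / 9 * w ^ (P-2) * ‖ξ - η‖^2
        ≤ crad^2 * (c4 * w ^ (P-2)) * ‖ξ - η‖^2 := coef9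
      _ = crad^2 * (c4 * w ^ (P-2)) * (R-r)^2 + crad^2 * ((c4 * w^(P-2)) * (2*K)) := by
          rw [hrho]; ring
      _ ≤ crad^2 * (c4 * w ^ (P-2)) * (R-r)^2 + 2 * (c4 * w^(P-2)) * K := by
          linarith [t3]
      _ ≤ ‖cR • ξ - cr • η‖ ^ 2 := hD1


/-- elementary Young inequality `x y ≤ e x² + y²/(4e)`. -/
lemma young_sq {x y e : ℝ} (he : 0 < e) : x * y ≤ e * x^2 + y^2/(4*e) := by
  have h4e : (0:ℝ) < 4*e := by linarith
  rw [← sub_le_iff_le_add', le_div_iff₀ h4e]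
  nlinarith [sq_nonneg (2*e*x - y)]

/-- Young's inequality with rpow exponents `q, q/(q-1)` and parameter `lam`. -/
lemma young_rpow {x y q lam : ℝ} (hx : 0 ≤ x) (hy : 0 ≤ y) (hq : 1 < q) (hlam : 0 < lam) :
    x * y ≤ lam * x ^ q + lam ^ (-(q - 1)⁻¹) * y ^ (q / (q - 1)) := by
  have hq1 : 0 < q - 1 := by linarith
  have hq0 : 0 < q := by linarith
  set q' := q / (q - 1) with hq'
  have hq'0 : 0 < q' := div_pos hq0 hq1
  have hw : 1/q + 1/q' = 1 := by rw [hq']; field_simp; ring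
  set X := lam * x ^ q with hX
  set Y := lam ^ (-(q-1)⁻¹) * y ^ q' with hY
  have hX0 : 0 ≤ X := mul_nonneg hlam.le (Real.rpow_nonneg hx _)
  have hY0 : 0 ≤ Y := mul_nonneg (Real.rpow_nonneg hlam.le _) (Real.rpow_nonneg hy _)
  have key := Real.geom_mean_le_arith_mean2_weighted
    (by positivity : (0:ℝ) ≤ 1/q) (by positivity : (0:ℝ) ≤ 1/q') hX0 hY0 hw
  have e1 : X ^ (1/q) = lam ^ (1/q) * x := by
    rw [hX, Real.mul_rpow hlam.le (Real.rpow_nonneg hx _), ← Real.rpow_mul hx,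
      mul_one_div, div_self hq0.ne', Real.rpow_one]
  have e2 : Y ^ (1/q') = lam ^ (-(1/q)) * y := by
    rw [hY, Real.mul_rpow (Real.rpow_nonneg hlam.le _) (Real.rpow_nonneg hy _)]
    have t1 : (y ^ q') ^ (1/q') = y := by
      rw [← Real.rpow_mul hy, mul_one_div, div_self hq'0.ne', Real.rpow_one]
    have t2 : (lam ^ (-(q-1)⁻¹)) ^ (1/q') = lam ^ (-(1/q)) := by
      rw [← Real.rpow_mul hlam.le]
      congr 1
      rw [hq']
      field_simp
    rw [t1, t2]
  have e3 : X ^ (1/q) * Y ^ (1/q') = x * y := by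
    rw [e1, e2]
    have : lam ^ (1/q) * lam ^ (-(1/q)) = 1 := by
      rw [← Real.rpow_add hlam]; norm_num
    calc lam ^ (1/q) * x * (lam ^ (-(1/q)) * y)
        = (lam ^ (1/q) * lam ^ (-(1/q))) * (x * y) := by ring
      _ = x * y := by rw [this, one_mul]
  have hq1' : 1/q ≤ 1 := by
    rw [div_le_one hq0]; linarith
  have hq'1 : 1/q' ≤ 1 := by
    rw [div_le_one hq'0, hq', le_div_iff₀ hq1]; nlinarith
  calc x * y = X ^ (1/q) * Y ^ (1/q') := e3.symm
    _ ≤ (1/q) * X + (1/q') * Y := key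
    _ ≤ X + Y := by nlinarith [hX0, hY0]

/-- `(x+y)^e ≤ 2^e (x^e + y^e)` for nonneg `x, y` and `e ≥ 0`. -/
lemma add_rpow_le {x y e : ℝ} (hx : 0 ≤ x) (hy : 0 ≤ y) (he : 0 ≤ e) :
    (x + y) ^ e ≤ 2 ^ e * (x ^ e + y ^ e) := by
  have h1 : x + y ≤ 2 * max x y := by
    rcases le_total x y with h | h
    · rw [max_eq_right h]; linarith
    · rw [max_eq_left h]; linarith
  have h2 : (max x y) ^ e ≤ x ^ e + y ^ e := by
    rcases le_total x y with h | h
    · rw [max_eq_right h]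
      have : 0 ≤ x ^ e := Real.rpow_nonneg hx _
      linarith
    · rw [max_eq_left h]
      have : 0 ≤ y ^ e := Real.rpow_nonneg hy _
      linarith
  calc (x + y) ^ e ≤ (2 * max x y) ^ e :=
        Real.rpow_le_rpow (by linarith) h1 he
    _ = 2 ^ e * (max x y) ^ e := Real.mul_rpow (by norm_num) (le_max_of_le_left hx)
    _ ≤ 2 ^ e * (x ^ e + y ^ e) := by
        apply mul_le_mul_of_nonneg_left h2 (Real.rpow_nonneg (by norm_num) _)

lemma sq_sum_bound {X k A1 A2 : ℝ} (hX0 : 0 ≤ X) (hk : 0 ≤ k) (hA1 : 0 ≤ A1)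
    (hA2 : 0 ≤ A2) (h : X ≤ 4*k*(A1+A2)) : X^2 ≤ 32*k^2*(A1^2+A2^2) := by
  nlinarith [sq_nonneg (A1 - A2), mul_self_le_mul_self hX0 h, sq_nonneg k,
    mul_nonneg hA1 hA2]

variable {E : Type*} [NormedAddCommGroup E] [InnerProductSpace ℝ E]

lemma Vfull {κ pm pp P : ℝ} (hκ : 0 ≤ κ) (hpm : 1 < pm) (hPl : pm ≤ P) (hPu : P ≤ pp)
    (ξ η : E) :
    (min 1 (pm/2))^2 * (4:ℝ)^(-pp) / 9 * (κ + ‖ξ‖ + ‖η‖) ^ (P - 2) * ‖ξ - η‖^2 ≤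
      ‖(κ + ‖ξ‖) ^ ((P-2)/2) • ξ - (κ + ‖η‖) ^ ((P-2)/2) • η‖^2 := by
  rcases le_total ‖η‖ ‖ξ‖ with h | h
  · exact Vcore hκ hpm hPl hPu ξ η h
  · have h0 := Vcore hκ hpm hPl hPu η ξ h
    rw [norm_sub_rev η ξ,
      norm_sub_rev ((κ + ‖η‖) ^ ((P-2)/2) • η) ((κ + ‖ξ‖) ^ ((P-2)/2) • ξ),
      show κ + ‖η‖ + ‖ξ‖ = κ + ‖ξ‖ + ‖η‖ from by ring] at h0
    exact h0

end Stmt6Aux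

set_option maxHeartbeats 4000000 in
/-- (Lemma on the time-discretization error in the elliptic term.)
Let `κ ≥ 0`, `α_x, α_t ∈ (0,1]`, `p ∈ C^{α_x,α_t}([0,T]×Ω̄)` with `1 < p⁻ ≤ p⁺ < ∞`,
`s > 1` and `δ > 0`. Then there are `c_{δ,s} > 0` and `Δt₀ ∈ (0,1)` such that for all
`0 < Δt ≤ Δt₀`, all `σ, t ∈ [0,T]` with `|t − σ| ≤ Δt`, all `x ∈ Ω̄` and all matrices
`ξ, η`: `(S(t,x,ξ) − S(σ,x,ξ)) : (ξ − η) ≤ δ |F(t,x,ξ) − F(t,x,η)|²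
  + c_{δ,s} (Δt)^{2α_t} (1 + |ξ|)^{p(t,x)·s}`. -/
theorem stmt6 (N n : ℕ) (T : ℝ) (hT : 0 < T)
    (Ω : Set (EuclideanSpace ℝ (Fin n))) (hΩopen : IsOpen Ω) (hΩbdd : Bornology.IsBounded Ω)
    (κ αx αt : ℝ) (hκ : 0 ≤ κ) (hαx : αx ∈ Ioc (0:ℝ) 1) (hαt : αt ∈ Ioc (0:ℝ) 1)
    (p : ℝ × EuclideanSpace ℝ (Fin n) → ℝ) (pminus pplus c₀ : ℝ)
    (hpm : 1 < pminus) (hpp : pminus ≤ pplus) (hc₀ : 0 ≤ c₀)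
    (hbounds : ∀ z ∈ Icc (0:ℝ) T ×ˢ closure Ω, pminus ≤ p z ∧ p z ≤ pplus)
    (hHolder : ∀ t ∈ Icc (0:ℝ) T, ∀ s ∈ Icc (0:ℝ) T, ∀ x ∈ closure Ω, ∀ y ∈ closure Ω,
      |p (t, x) - p (s, y)| ≤ c₀ * (|t - s| ^ αt + ‖x - y‖ ^ αx))
    (s δ : ℝ) (hs : 1 < s) (hδ : 0 < δ) :
    ∃ c Δt₀ : ℝ, 0 < c ∧ 0 < Δt₀ ∧ Δt₀ < 1 ∧
      ∀ Δt : ℝ, 0 < Δt → Δt ≤ Δt₀ →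
        ∀ σ ∈ Icc (0:ℝ) T, ∀ t ∈ Icc (0:ℝ) T, |t - σ| ≤ Δt →
          ∀ x ∈ closure Ω, ∀ ξ η : EuclideanSpace ℝ (Fin N × Fin n),
            ⟪(κ + ‖ξ‖) ^ (p (t, x) - 2) • ξ - (κ + ‖ξ‖) ^ (p (σ, x) - 2) • ξ, ξ - η⟫ ≤
              δ * ‖(κ + ‖ξ‖) ^ ((p (t, x) - 2) / 2) • ξ -
                    (κ + ‖η‖) ^ ((p (t, x) - 2) / 2) • η‖ ^ 2 +
                c * Δt ^ (2 * αt) * (1 + ‖ξ‖) ^ (p (t, x) * s) := by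
  classical
  obtain ⟨hαx0, hαx1⟩ := hαx
  obtain ⟨hαt0, hαt1⟩ := hαt
  have hpm1 : (0:ℝ) < pminus - 1 := by linarith
  have h1c0 : (0:ℝ) < 1 + c₀ := by linarith
  set qP := pminus / (pminus - 1) with hqPdef
  have hqP1 : 1 < qP := by rw [hqPdef, lt_div_iff₀ hpm1]; linarith
  have hqP0 : 0 < qP := by linarith
  set Lam := min pminus (pminus * (s - 1)) / 2 with hLamdef
  have hLam0 : 0 < Lam := by
    apply div_pos (lt_min (by linarith) (by nlinarith)) two_pos
  have hLam1 : 2 * Lam ≤ pminus := by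
    have := min_le_left pminus (pminus * (s-1)); rw [hLamdef]; linarith
  have hLam2 : 2 * Lam ≤ pminus * (s - 1) := by
    have := min_le_right pminus (pminus * (s-1)); rw [hLamdef]; linarith
  have h2q : (0:ℝ) < 2 * (2 + qP) := by nlinarith
  set ε := Lam / (2 * (2 + qP)) with hεdef
  have hε0 : 0 < ε := div_pos hLam0 h2q
  have hεkey : ∀ k : ℝ, 0 ≤ k → k ≤ 2 * (2 + qP) → k * ε ≤ Lam := by
    intro k hk hk2
    rw [hεdef, mul_div_assoc']
    rw [div_le_iff₀ h2q]
    nlinarith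
  have hε4 : 4 * ε ≤ Lam := hεkey 4 (by norm_num) (by nlinarith)
  have hεqP : (2 * qP) * ε ≤ Lam := hεkey (2*qP) (by linarith) (by nlinarith)
  set cV2 := (min 1 (pminus/2))^2 * (4:ℝ)^(-pplus)/9 with hcV2def
  have hcV20 : 0 < cV2 := by
    apply div_pos _ (by norm_num)
    exact mul_pos (pow_pos (lt_min one_pos (by linarith)) 2)
      (Real.rpow_pos_of_pos (by norm_num) _)
  set KM := (1+κ) ^ (pplus * s) with hKMdef
  have hKM0 : 0 < KM := Real.rpow_pos_of_pos (by linarith) _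
  have hδcV4 : 0 < δ * cV2 / 4 := div_pos (mul_pos hδ hcV20) (by norm_num)
  set CD := (min (δ * cV2 / 4) 1) ^ (-(1/(pminus - 1))) with hCDdef
  have hCD0 : 0 < CD := Real.rpow_pos_of_pos (lt_min hδcV4 one_pos) _
  set C2 := (max 1 (4/ε)) ^ qP with hC2def
  have hC20 : 0 < C2 := Real.rpow_pos_of_pos (lt_of_lt_of_le one_pos (le_max_left _ _)) _
  have hC21 : 1 ≤ C2 := Real.one_le_rpow (le_max_left _ _) hqP0.le
  set C3 := (max 1 ε) ^ qP with hC3def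
  have hC30 : 0 < C3 := Real.rpow_pos_of_pos (lt_of_lt_of_le one_pos (le_max_left _ _)) _
  have hden : 0 < δ * cV2 * ε^2 := mul_pos (mul_pos hδ hcV20) (by positivity)
  set cA := 16*(1+c₀)^2*KM/(δ*cV2*ε^2) with hcAdef
  have hcA0 : 0 < cA := div_pos (by positivity) hden
  set cB := 128*(1+c₀)^2*KM/(δ*cV2*ε^2) with hcBdef
  have hcB0 : 0 < cB := div_pos (by positivity) hden
  set cC := CD*C2*C3*2*(2:ℝ)^qP*KM*(1+c₀)^2 with hcCdef
  have hcC0 : 0 < cC := by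
    have h2qp : (0:ℝ) < (2:ℝ)^qP := Real.rpow_pos_of_pos (by norm_num) _
    positivity
  set c := cA + cB + cC + 1 with hcdef
  have hc0 : 0 < c := by positivity
  set Δt₀ := min (1/2) ((ε/(1+c₀)) ^ (1/αt)) with hΔt₀def
  have hΔt₀0 : 0 < Δt₀ :=
    lt_min (by norm_num) (Real.rpow_pos_of_pos (div_pos hε0 h1c0) _)
  have hΔt₀1 : Δt₀ < 1 := lt_of_le_of_lt (min_le_left _ _) (by norm_num)
  refine ⟨c, Δt₀, hc0, hΔt₀0, hΔt₀1, ?_⟩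
  intro Δt hΔt0 hΔtle σ hσ t ht htσ x hx ξ η
  set P := p (t, x) with hPdef
  set Q := p (σ, x) with hQdef
  have hPm : pminus ≤ P := (hbounds (t, x) (Set.mk_mem_prod ht hx)).1
  have hPM : P ≤ pplus := (hbounds (t, x) (Set.mk_mem_prod ht hx)).2
  have hΔtαt0 : 0 < Δt ^ αt := Real.rpow_pos_of_pos hΔt0 _
  set τ := (1+c₀) * Δt ^ αt with hτdef
  have hτ0 : 0 < τ := mul_pos h1c0 hΔtαt0
  have hτε : τ ≤ ε := by
    have h1 : Δt ≤ (ε/(1+c₀)) ^ (1/αt) := le_trans hΔtle (min_le_right _ _)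
    have h2 : Δt ^ αt ≤ ((ε/(1+c₀)) ^ (1/αt)) ^ αt :=
      Real.rpow_le_rpow hΔt0.le h1 hαt0.le
    rw [← Real.rpow_mul (le_of_lt (div_pos hε0 h1c0)), one_div_mul_cancel hαt0.ne',
      Real.rpow_one] at h2
    rw [hτdef]
    calc (1+c₀) * Δt ^ αt = Δt ^ αt * (1+c₀) := by ring
      _ ≤ ε := (le_div_iff₀ h1c0).1 h2
  have hPQ : |P - Q| ≤ τ := by
    rw [hPdef, hQdef, hτdef]
    have h := hHolder t ht σ hσ x hx x hx
    rw [sub_self, norm_zero, Real.zero_rpow hαx0.ne', add_zero] at h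
    have h2 : |t - σ| ^ αt ≤ Δt ^ αt :=
      Real.rpow_le_rpow (abs_nonneg _) htσ hαt0.le
    calc |p (t, x) - p (σ, x)| ≤ c₀ * |t - σ| ^ αt := h
      _ ≤ c₀ * Δt ^ αt := mul_le_mul_of_nonneg_left h2 hc₀
      _ ≤ (1+c₀) * Δt ^ αt := mul_le_mul_of_nonneg_right (by linarith) hΔtαt0.le
  set μ := ε + τ with hμdef
  have hμ0 : 0 < μ := by rw [hμdef]; linarith
  have hμ2ε : μ ≤ 2*ε := by rw [hμdef]; linarith
  have h2μLam : 2*μ ≤ Lam := by linarith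
  have hμqPLam : μ * qP ≤ Lam := by
    calc μ * qP ≤ (2*ε) * qP := mul_le_mul_of_nonneg_right hμ2ε hqP0.le
      _ = (2*qP) * ε := by ring
      _ ≤ Lam := hεqP
  have hτsq : τ^2 = (1+c₀)^2 * Δt^(2*αt) := by
    have ht2 : (Δt ^ αt)^(2:ℕ) = Δt ^ (2*αt) := by
      rw [← Real.rpow_natCast (Δt ^ αt) 2, ← Real.rpow_mul hΔt0.le]
      congr 1
      push_cast
      ring
    rw [hτdef, mul_pow, ht2]
  rcases eq_or_ne ξ 0 with hξ0 | hξ0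
  · have hz : (κ + ‖ξ‖) ^ (P - 2) • ξ - (κ + ‖ξ‖) ^ (Q - 2) • ξ =
        (0 : EuclideanSpace ℝ (Fin N × Fin n)) := by
      rw [hξ0]; simp
    rw [hz, inner_zero_left]
    have h1 : 0 ≤ δ * ‖(κ + ‖ξ‖) ^ ((P - 2)/2) • ξ - (κ + ‖η‖) ^ ((P - 2)/2) • η‖ ^ 2 :=
      mul_nonneg hδ.le (sq_nonneg _)
    have h2 : 0 ≤ c * Δt ^ (2*αt) * (1 + ‖ξ‖) ^ (P * s) :=
      mul_nonneg (mul_nonneg hc0.le (Real.rpow_nonneg hΔt0.le _))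
        (Real.rpow_nonneg (by positivity) _)
    exact add_nonneg h1 h2
  · have hξn : 0 < ‖ξ‖ := norm_pos_iff.2 hξ0
    set a := κ + ‖ξ‖ with hadef
    have ha : 0 < a := by rw [hadef]; linarith
    set b := 1 + ‖ξ‖ with hbdef
    have hb1 : 1 ≤ b := by rw [hbdef]; linarith [norm_nonneg ξ]
    have hab : a ≤ (1+κ)*b := by
      rw [hadef, hbdef]
      have h1 := mul_nonneg hκ (norm_nonneg ξ)
      have h2 := norm_nonneg ξ
      rw [mul_add, mul_one, add_mul, one_mul]
      linarith
    have hbPs0 : 0 ≤ b ^ (P*s) := Real.rpow_nonneg (by linarith) _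
    have hΔ2 : 0 ≤ Δt ^ (2*αt) := Real.rpow_nonneg hΔt0.le _
    have masterw : ∀ w : ℝ, |w| ≤ Lam → a ^ (P + w) ≤ KM * b ^ (P*s) := by
      intro w hw
      obtain ⟨hw1, hw2⟩ := abs_le.1 hw
      rw [hKMdef]
      refine Stmt6Aux.master hκ ha hab hb1 ?_ ?_ (by linarith) ?_
      · linarith
      · have h1 := mul_le_mul_of_nonneg_right hPm (by linarith : (0:ℝ) ≤ s - 1)
        have h2 : pminus * (s - 1) = pminus * s - pminus := by ring
        have h3 : P * (s - 1) = P * s - P := by ring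
        rw [h2] at h1
        rw [h3] at h1
        linarith
      · exact mul_le_mul_of_nonneg_right hPM (by linarith)
    have hθ := Stmt6Aux.theta_bound (a := a) (u := P - 2) (v := Q - 2) ha hτ0.le hε0
      (by rw [show P - 2 - (Q - 2) = P - Q from by ring]; exact hPQ)
    rw [← hμdef] at hθ
    set A1 := a ^ ((P-1)+μ) with hA1def
    set A2 := a ^ ((P-1)-μ) with hA2def
    set X := |a^(P-2) - a^(Q-2)| * ‖ξ‖ with hXdef
    have hX0 : 0 ≤ X := mul_nonneg (abs_nonneg _) (norm_nonneg _)
    have hXA' : X ≤ 4*(τ/ε) * (A1 + A2) := by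
      have hth : 0 ≤ 4*(τ/ε) * (a ^ ((P-2)+μ) + a ^ ((P-2)-μ)) := by
        apply mul_nonneg (mul_nonneg (by norm_num) (div_nonneg hτ0.le hε0.le))
        exact add_nonneg (Real.rpow_nonneg ha.le _) (Real.rpow_nonneg ha.le _)
      have hm1 : a^((P-2)+μ) * a = A1 := by
        rw [hA1def, ← Real.rpow_add_one ha.ne']; congr 1; ring
      have hm2 : a^((P-2)-μ) * a = A2 := by
        rw [hA2def, ← Real.rpow_add_one ha.ne']; congr 1; ring
      calc X ≤ (4*(τ/ε)*(a^((P-2)+μ) + a^((P-2)-μ))) * a := by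
            rw [hXdef]
            exact mul_le_mul hθ (by rw [hadef]; linarith) (norm_nonneg _) hth
        _ = a^((P-2)+μ)*a * (4*(τ/ε)) + a^((P-2)-μ)*a * (4*(τ/ε)) := by ring
        _ = 4*(τ/ε) * (A1 + A2) := by rw [hm1, hm2]; ring
    set ρ := ‖ξ - η‖ with hρdef
    have hLHS : ⟪a^(P-2) • ξ - a^(Q-2) • ξ, ξ - η⟫ ≤ X * ρ := by
      rw [← sub_smul, real_inner_smul_left, hXdef, hρdef]
      calc (a^(P-2) - a^(Q-2)) * ⟪ξ, ξ-η⟫ ≤ |(a^(P-2) - a^(Q-2)) * ⟪ξ, ξ-η⟫| :=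
            le_abs_self _
        _ = |a^(P-2) - a^(Q-2)| * |⟪ξ, ξ-η⟫| := abs_mul _ _
        _ ≤ |a^(P-2) - a^(Q-2)| * (‖ξ‖*‖ξ-η‖) :=
            mul_le_mul_of_nonneg_left (abs_real_inner_le_norm _ _) (abs_nonneg _)
        _ = |a^(P-2)-a^(Q-2)| * ‖ξ‖ * ‖ξ-η‖ := by ring
    set Dv := a ^ ((P-2)/2) • ξ - (κ + ‖η‖) ^ ((P-2)/2) • η with hDvdef
    have hV := Stmt6Aux.Vfull (pm := pminus) (pp := pplus) hκ hpm hPm hPM ξ η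
    rw [← hcV2def, ← hadef, ← hρdef, ← hDvdef] at hV
    have hwgt0 : 0 < a + ‖η‖ := by positivity
    have hDsq0 : 0 ≤ ‖Dv‖^2 := sq_nonneg _
    -- the key ξ-only square estimate
    have hXsq : X^2 * a^(2-P) ≤ 64*(τ/ε)^2 * (KM * b^(P*s)) := by
      have hA10 : 0 ≤ A1 := Real.rpow_nonneg ha.le _
      have hA20 : 0 ≤ A2 := Real.rpow_nonneg ha.le _
      have hXsq' : X^2 ≤ 32*(τ/ε)^2 * (A1^2 + A2^2) :=
        Stmt6Aux.sq_sum_bound hX0 (div_nonneg hτ0.le hε0.le) hA10 hA20 hXA'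
      have hA1sq : A1^2 * a^(2-P) = a^(P+2*μ) := by
        rw [hA1def, sq, ← Real.rpow_add ha, ← Real.rpow_add ha]; congr 1; ring
      have hA2sq : A2^2 * a^(2-P) = a^(P-2*μ) := by
        rw [hA2def, sq, ← Real.rpow_add ha, ← Real.rpow_add ha]; congr 1; ring
      have hm1 : a^(P+2*μ) ≤ KM * b^(P*s) :=
        masterw (2*μ) (by rw [abs_of_nonneg (by linarith)]; linarith)
      have hm2 : a^(P-2*μ) ≤ KM * b^(P*s) := by
        have := masterw (-(2*μ)) (by rw [abs_neg, abs_of_nonneg (by linarith)]; linarith)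
        rw [show P + -(2*μ) = P - 2*μ from by ring] at this
        exact this
      have h0 : 0 ≤ a^(2-P) := Real.rpow_nonneg ha.le _
      calc X^2*a^(2-P) ≤ (32*(τ/ε)^2*(A1^2+A2^2))*a^(2-P) :=
            mul_le_mul_of_nonneg_right hXsq' h0
        _ = 32*(τ/ε)^2*(A1^2*a^(2-P) + A2^2*a^(2-P)) := by ring
        _ = 32*(τ/ε)^2*(a^(P+2*μ) + a^(P-2*μ)) := by rw [hA1sq, hA2sq]
        _ ≤ 32*(τ/ε)^2*(KM*b^(P*s) + KM*b^(P*s)) := by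
            apply mul_le_mul_of_nonneg_left (add_le_add hm1 hm2) (by positivity)
        _ = 64*(τ/ε)^2*(KM*b^(P*s)) := by ring
    -- reduce to the combined bound
    have hfinal : X * ρ ≤ δ*‖Dv‖^2 + (cA+cB+cC)*(Δt^(2*αt)*b^(P*s)) := by
      have hZ0 : 0 ≤ Δt^(2*αt)*b^(P*s) := mul_nonneg hΔ2 hbPs0
      have hτε2 : (τ/ε)^2 = (1+c₀)^2 * Δt^(2*αt) / ε^2 := by rw [div_pow, hτsq]
      rcases le_or_gt 2 P with h2P | h2P
      · -- Case 1 : P ≥ 2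
        have haP : a ^ (P-2) ≤ (a+‖η‖)^(P-2) :=
          Real.rpow_le_rpow ha.le (le_add_of_nonneg_right (norm_nonneg η)) (by linarith)
        have he0 : 0 < δ * cV2 * a^(P-2) :=
          mul_pos (mul_pos hδ hcV20) (Real.rpow_pos_of_pos ha _)
        have hY := Stmt6Aux.young_sq (x := ρ) (y := X) he0
        have h1 : (δ * cV2 * a^(P-2)) * ρ^2 ≤ δ * ‖Dv‖^2 := by
          have hstep : cV2 * a^(P-2) * ρ^2 ≤ cV2 * (a+‖η‖)^(P-2) * ρ^2 :=
            mul_le_mul_of_nonneg_right (mul_le_mul_of_nonneg_left haP hcV20.le) (sq_nonneg _)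
          calc (δ * cV2 * a^(P-2)) * ρ^2 = δ*(cV2*a^(P-2)*ρ^2) := by ring
            _ ≤ δ*(cV2*(a+‖η‖)^(P-2)*ρ^2) := mul_le_mul_of_nonneg_left hstep hδ.le
            _ ≤ δ*‖Dv‖^2 := mul_le_mul_of_nonneg_left hV hδ.le
        have h2 : X^2/(4*(δ * cV2 * a^(P-2))) ≤ cA * (Δt^(2*αt)*b^(P*s)) := by
          rw [div_le_iff₀ (by linarith)]
          have hinv : a^(2-P)*a^(P-2) = 1 := by
            rw [← Real.rpow_add ha]; norm_num
          have hgoaleq : cA*(Δt^(2*αt)*b^(P*s))*(4*(δ*cV2*a^(P-2)))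
              = (64*(τ/ε)^2*(KM*b^(P*s)))*a^(P-2) := by
            rw [hcAdef, hτε2]
            field_simp
            ring
          calc X^2 = X^2*a^(2-P)*a^(P-2) := by rw [mul_assoc, hinv, mul_one]
            _ ≤ (64*(τ/ε)^2*(KM*b^(P*s)))*a^(P-2) :=
                mul_le_mul_of_nonneg_right hXsq (Real.rpow_nonneg ha.le _)
            _ = cA*(Δt^(2*αt)*b^(P*s))*(4*(δ*cV2*a^(P-2))) := hgoaleq.symm
        calc X*ρ = ρ*X := mul_comm _ _
          _ ≤ (δ*cV2*a^(P-2))*ρ^2 + X^2/(4*(δ*cV2*a^(P-2))) := hY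
          _ ≤ δ*‖Dv‖^2 + cA*(Δt^(2*αt)*b^(P*s)) := add_le_add h1 h2
          _ ≤ δ*‖Dv‖^2 + (cA+cB+cC)*(Δt^(2*αt)*b^(P*s)) := by
              have := mul_le_mul_of_nonneg_right (by linarith : cA ≤ cA+cB+cC) hZ0
              linarith
      · -- Case 2 : P < 2
        have hξa : ‖ξ‖ ≤ a := by rw [hadef]; linarith
        have hηξρ : ‖η‖ ≤ ‖ξ‖ + ρ := by
          have h := norm_sub_norm_le η ξ
          rw [norm_sub_rev η ξ, ← hρdef] at h
          linarith
        rcases le_total ρ (2*a) with hρa | hρa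
        · -- subcase : ρ ≤ 2a
          have hwgtle : a + ‖η‖ ≤ 4*a := by linarith
          have h4aP : (4*a)^(P-2) ≤ (a+‖η‖)^(P-2) :=
            Real.rpow_le_rpow_of_nonpos hwgt0 hwgtle (by linarith)
          have he0 : 0 < (δ/2) * cV2 * (4*a)^(P-2) :=
            mul_pos (mul_pos (by linarith) hcV20) (Real.rpow_pos_of_pos (by linarith) _)
          have hY := Stmt6Aux.young_sq (x := ρ) (y := X) he0
          have h1 : ((δ/2) * cV2 * (4*a)^(P-2)) * ρ^2 ≤ (δ/2) * ‖Dv‖^2 := by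
            have hstep : cV2 * (4*a)^(P-2) * ρ^2 ≤ cV2 * (a+‖η‖)^(P-2) * ρ^2 :=
              mul_le_mul_of_nonneg_right (mul_le_mul_of_nonneg_left h4aP hcV20.le) (sq_nonneg _)
            calc ((δ/2)*cV2*(4*a)^(P-2))*ρ^2 = (δ/2)*(cV2*(4*a)^(P-2)*ρ^2) := by ring
              _ ≤ (δ/2)*(cV2*(a+‖η‖)^(P-2)*ρ^2) := mul_le_mul_of_nonneg_left hstep (by linarith)
              _ ≤ (δ/2)*‖Dv‖^2 := mul_le_mul_of_nonneg_left hV (by linarith)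
          have h2 : X^2/(4*((δ/2)*cV2*(4*a)^(P-2))) ≤ cB*(Δt^(2*αt)*b^(P*s)) := by
            rw [div_le_iff₀ (by linarith)]
            have hinv : (4*a)^(2-P)*(4*a)^(P-2) = 1 := by
              rw [← Real.rpow_add (by linarith : (0:ℝ) < 4*a)]; norm_num
            have hsplit : X^2*(4*a)^(2-P) ≤ 4*(X^2*a^(2-P)) := by
              have h44 : (4*a)^(2-P) ≤ 4*a^(2-P) := by
                rw [Real.mul_rpow (by norm_num : (0:ℝ) ≤ 4) ha.le]
                apply mul_le_mul_of_nonneg_right _ (Real.rpow_nonneg ha.le _)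
                calc (4:ℝ)^(2-P) ≤ (4:ℝ)^(1:ℝ) :=
                      Real.rpow_le_rpow_of_exponent_le (by norm_num) (by linarith)
                  _ = 4 := Real.rpow_one 4
              calc X^2*(4*a)^(2-P) ≤ X^2*(4*a^(2-P)) :=
                    mul_le_mul_of_nonneg_left h44 (sq_nonneg X)
                _ = 4*(X^2*a^(2-P)) := by ring
            have hgoaleq : cB*(Δt^(2*αt)*b^(P*s))*(4*((δ/2)*cV2*(4*a)^(P-2)))
                = (4*(64*(τ/ε)^2*(KM*b^(P*s))))*(4*a)^(P-2) := by
              rw [hcBdef, hτε2]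
              field_simp
              ring
            have hmid : (4*(X^2*a^(2-P)))*(4*a)^(P-2)
                ≤ (4*(64*(τ/ε)^2*(KM*b^(P*s))))*(4*a)^(P-2) := by
              apply mul_le_mul_of_nonneg_right _ (Real.rpow_nonneg (by linarith) _)
              linarith [hXsq]
            calc X^2 = X^2*(4*a)^(2-P)*(4*a)^(P-2) := by rw [mul_assoc, hinv, mul_one]
              _ ≤ (4*(X^2*a^(2-P)))*(4*a)^(P-2) :=
                  mul_le_mul_of_nonneg_right hsplit (Real.rpow_nonneg (by linarith) _)
              _ ≤ (4*(64*(τ/ε)^2*(KM*b^(P*s))))*(4*a)^(P-2) := hmid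
              _ = cB*(Δt^(2*αt)*b^(P*s))*(4*((δ/2)*cV2*(4*a)^(P-2))) := hgoaleq.symm
          calc X*ρ = ρ*X := mul_comm _ _
            _ ≤ ((δ/2)*cV2*(4*a)^(P-2))*ρ^2 + X^2/(4*((δ/2)*cV2*(4*a)^(P-2))) := hY
            _ ≤ (δ/2)*‖Dv‖^2 + cB*(Δt^(2*αt)*b^(P*s)) := add_le_add h1 h2
            _ ≤ δ*‖Dv‖^2 + (cA+cB+cC)*(Δt^(2*αt)*b^(P*s)) := by
                have e1 : (δ/2)*‖Dv‖^2 ≤ δ*‖Dv‖^2 :=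
                  mul_le_mul_of_nonneg_right (by linarith) hDsq0
                have e2 := mul_le_mul_of_nonneg_right (by linarith : cB ≤ cA+cB+cC) hZ0
                linarith
        · -- subcase : 2a ≤ ρ
          have hρ0 : 0 < ρ := by linarith
          have hP1 : 1 < P := by linarith
          have hP1' : 0 < P - 1 := by linarith
          set P' := P/(P-1) with hP'def
          have hP'0 : 0 < P' := div_pos (by linarith) hP1'
          have hP'2 : 2 ≤ P' := by rw [hP'def, le_div_iff₀ hP1']; linarith
          have hP'qP : P' ≤ qP := by
            rw [hP'def, hqPdef, div_le_div_iff₀ hP1' hpm1]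
            have e : P*(pminus-1) - pminus*(P-1) = pminus - P := by ring
            linarith
          have hPP' : (P-1)*P' = P := by rw [hP'def]; field_simp
          have h2P2 : (0:ℝ) < (2:ℝ)^(P-2) := Real.rpow_pos_of_pos (by norm_num) _
          have hlam0 : 0 < (δ/2)*cV2*(2:ℝ)^(P-2) :=
            mul_pos (mul_pos (by linarith) hcV20) h2P2
          have hY := Stmt6Aux.young_rpow hρ0.le hX0 hP1 hlam0
          have h1 : ((δ/2)*cV2*(2:ℝ)^(P-2)) * ρ^P ≤ (δ/2)*‖Dv‖^2 := by
            have hwgtle : a + ‖η‖ ≤ 2*ρ := by linarith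
            have hrp : (2*ρ)^(P-2) ≤ (a+‖η‖)^(P-2) :=
              Real.rpow_le_rpow_of_nonpos hwgt0 hwgtle (by linarith)
            have hρP : (2:ℝ)^(P-2) * ρ^P = ((2*ρ)^(P-2)) * ρ^2 := by
              rw [Real.mul_rpow (by norm_num : (0:ℝ) ≤ 2) hρ0.le, mul_assoc]
              congr 1
              rw [← Real.rpow_natCast ρ 2, ← Real.rpow_add hρ0]
              congr 1
              push_cast
              ring
            have hco : cV2*((2*ρ)^(P-2)*ρ^2) ≤ ‖Dv‖^2 := by
              calc cV2*((2*ρ)^(P-2)*ρ^2) ≤ cV2*((a+‖η‖)^(P-2)*ρ^2) :=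
                    mul_le_mul_of_nonneg_left
                      (mul_le_mul_of_nonneg_right hrp (sq_nonneg _)) hcV20.le
                _ = cV2*(a+‖η‖)^(P-2)*ρ^2 := by ring
                _ ≤ ‖Dv‖^2 := hV
            calc ((δ/2)*cV2*(2:ℝ)^(P-2))*ρ^P = (δ/2)*(cV2*((2:ℝ)^(P-2)*ρ^P)) := by ring
              _ = (δ/2)*(cV2*((2*ρ)^(P-2)*ρ^2)) := by rw [hρP]
              _ ≤ (δ/2)*‖Dv‖^2 := mul_le_mul_of_nonneg_left hco (by linarith)
          have h2 : ((δ/2)*cV2*(2:ℝ)^(P-2))^(-(P-1)⁻¹) * X^P' ≤ cC*(Δt^(2*αt)*b^(P*s)) := by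
            have hm1 : δ*cV2/4 ≤ (δ/2)*cV2*(2:ℝ)^(P-2) := by
              have hhalf : (1:ℝ)/2 ≤ (2:ℝ)^(P-2) := by
                have h0 : ((2:ℝ))^(-1:ℝ) ≤ (2:ℝ)^(P-2) :=
                  Real.rpow_le_rpow_of_exponent_le one_le_two (by linarith)
                rw [Real.rpow_neg_one] at h0
                rw [show (1:ℝ)/2 = ((2:ℝ))⁻¹ from by norm_num]
                exact h0
              calc δ*cV2/4 = ((δ/2)*cV2)*(1/2) := by ring
                _ ≤ ((δ/2)*cV2)*(2:ℝ)^(P-2) :=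
                    mul_le_mul_of_nonneg_left hhalf
                      (mul_nonneg (by linarith) hcV20.le)
                _ = (δ/2)*cV2*(2:ℝ)^(P-2) := by ring
            have hm20 : 0 < min (δ*cV2/4) 1 := lt_min hδcV4 one_pos
            have hm21 : min (δ*cV2/4) 1 ≤ 1 := min_le_right _ _
            have hm2lam : min (δ*cV2/4) 1 ≤ (δ/2)*cV2*(2:ℝ)^(P-2) :=
              le_trans (min_le_left _ _) hm1
            have hlamCD : ((δ/2)*cV2*(2:ℝ)^(P-2))^(-(P-1)⁻¹) ≤ CD := by
              have hexp : -(1/(pminus-1)) ≤ -(P-1)⁻¹ := by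
                have h0 := one_div_le_one_div_of_le hpm1 (by linarith : pminus - 1 ≤ P - 1)
                rw [inv_eq_one_div]
                linarith
              calc ((δ/2)*cV2*(2:ℝ)^(P-2))^(-(P-1)⁻¹)
                  ≤ (min (δ*cV2/4) 1)^(-(P-1)⁻¹) :=
                    Real.rpow_le_rpow_of_nonpos hm20 hm2lam
                      (by rw [neg_nonpos]; exact inv_nonneg.2 (by linarith))
                _ ≤ (min (δ*cV2/4) 1)^(-(1/(pminus-1))) :=
                    Real.rpow_le_rpow_of_exponent_ge hm20 hm21 hexp
                _ = CD := by rw [hCDdef]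
            have hA10 : 0 ≤ A1 := Real.rpow_nonneg ha.le _
            have hA20 : 0 ≤ A2 := Real.rpow_nonneg ha.le _
            have hXle : X ≤ (4/ε) * (τ * (A1+A2)) := by
              calc X ≤ 4*(τ/ε)*(A1+A2) := hXA'
                _ = (4/ε)*(τ*(A1+A2)) := by ring
            have hxp : X^P' ≤ ((4/ε)*(τ*(A1+A2)))^P' := Real.rpow_le_rpow hX0 hXle hP'0.le
            have h4ε0 : (0:ℝ) ≤ 4/ε := div_nonneg (by norm_num) hε0.le
            have hτA0 : (0:ℝ) ≤ τ*(A1+A2) := mul_nonneg hτ0.le (by linarith)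
            have hsplit : ((4/ε)*(τ*(A1+A2)))^P'
                = (4/ε)^P' * (τ^P' * (A1+A2)^P') := by
              rw [Real.mul_rpow h4ε0 hτA0, Real.mul_rpow hτ0.le (by linarith)]
            have bound1 : (4/ε)^P' ≤ C2 := by
              rcases le_total (4/ε) 1 with h | h
              · calc (4/ε)^P' ≤ 1 := Real.rpow_le_one h4ε0 h hP'0.le
                  _ ≤ C2 := hC21
              · calc (4/ε)^P' ≤ (4/ε)^qP := Real.rpow_le_rpow_of_exponent_le h hP'qP
                  _ ≤ (max 1 (4/ε))^qP :=
                      Real.rpow_le_rpow h4ε0 (le_max_right _ _) hqP0.le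
                  _ = C2 := by rw [hC2def]
            have bound2 : τ^P' ≤ τ^2 * C3 := by
              have hτsplit : τ^P' = τ^(2:ℕ) * τ^(P'-2) := by
                rw [← Real.rpow_natCast τ 2, ← Real.rpow_add hτ0]
                congr 1
                push_cast
                ring
              have hC3b : τ^(P'-2) ≤ C3 := by
                calc τ^(P'-2) ≤ (max 1 ε)^(P'-2) :=
                      Real.rpow_le_rpow hτ0.le (le_trans hτε (le_max_right _ _)) (by linarith)
                  _ ≤ (max 1 ε)^qP :=
                      Real.rpow_le_rpow_of_exponent_le (le_max_left _ _) (by linarith)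
                  _ = C3 := by rw [hC3def]
              rw [hτsplit]
              exact mul_le_mul_of_nonneg_left hC3b (by positivity)
            have bound3 : (A1+A2)^P' ≤ (2:ℝ)^qP * (2*(KM*b^(P*s))) := by
              have hplus := Stmt6Aux.add_rpow_le hA10 hA20 hP'0.le
              have hA1P : A1^P' = a^(P + μ*P') := by
                rw [hA1def, ← Real.rpow_mul ha.le]
                congr 1
                rw [show (P-1+μ)*P' = (P-1)*P' + μ*P' from by ring, hPP']
              have hA2P : A2^P' = a^(P - μ*P') := by
                rw [hA2def, ← Real.rpow_mul ha.le]
                congr 1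
                rw [show (P-1-μ)*P' = (P-1)*P' - μ*P' from by ring, hPP']
              have hmwnn : 0 ≤ μ*P' := mul_nonneg hμ0.le hP'0.le
              have hμP'Lam : μ*P' ≤ Lam :=
                le_trans (mul_le_mul_of_nonneg_left hP'qP hμ0.le) hμqPLam
              have hmw1 : a^(P+μ*P') ≤ KM*b^(P*s) :=
                masterw (μ*P') (by rw [abs_of_nonneg hmwnn]; exact hμP'Lam)
              have hmw2 : a^(P-μ*P') ≤ KM*b^(P*s) := by
                have h0 := masterw (-(μ*P')) (by rw [abs_neg, abs_of_nonneg hmwnn]; exact hμP'Lam)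
                rw [show P + -(μ*P') = P - μ*P' from by ring] at h0
                exact h0
              have h2P' : (2:ℝ)^P' ≤ (2:ℝ)^qP :=
                Real.rpow_le_rpow_of_exponent_le one_le_two hP'qP
              calc (A1+A2)^P' ≤ 2^P'*(A1^P' + A2^P') := hplus
                _ ≤ 2^qP*(A1^P' + A2^P') := by
                    apply mul_le_mul_of_nonneg_right h2P'
                    exact add_nonneg (Real.rpow_nonneg hA10 _) (Real.rpow_nonneg hA20 _)
                _ = 2^qP*(a^(P+μ*P') + a^(P-μ*P')) := by rw [hA1P, hA2P]
                _ ≤ 2^qP*(KM*b^(P*s) + KM*b^(P*s)) := by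
                    apply mul_le_mul_of_nonneg_left (add_le_add hmw1 hmw2)
                    exact Real.rpow_nonneg (by norm_num) _
                _ = 2^qP*(2*(KM*b^(P*s))) := by ring
            have hin : τ^P' * (A1+A2)^P' ≤ (τ^2*C3) * ((2:ℝ)^qP*(2*(KM*b^(P*s)))) :=
              mul_le_mul bound2 bound3 (Real.rpow_nonneg (by linarith) _)
                (mul_nonneg (by positivity) hC30.le)
            have hfin := mul_le_mul bound1 hin
              (mul_nonneg (Real.rpow_nonneg hτ0.le _)
                (Real.rpow_nonneg (by linarith : (0:ℝ) ≤ A1+A2) _)) hC20.le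
            calc ((δ/2)*cV2*(2:ℝ)^(P-2))^(-(P-1)⁻¹) * X^P'
                ≤ CD * X^P' := mul_le_mul_of_nonneg_right hlamCD (Real.rpow_nonneg hX0 _)
              _ ≤ CD * ((4/ε)^P' * (τ^P' * (A1+A2)^P')) :=
                  mul_le_mul_of_nonneg_left (le_trans hxp (le_of_eq hsplit)) hCD0.le
              _ ≤ CD * (C2 * ((τ^2*C3) * ((2:ℝ)^qP*(2*(KM*b^(P*s)))))) :=
                  mul_le_mul_of_nonneg_left hfin hCD0.le
              _ = cC*(Δt^(2*αt)*b^(P*s)) := by rw [hcCdef, hτsq]; ring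
          calc X*ρ = ρ*X := mul_comm _ _
            _ ≤ ((δ/2)*cV2*(2:ℝ)^(P-2))*ρ^P
                + ((δ/2)*cV2*(2:ℝ)^(P-2))^(-(P-1)⁻¹)*X^(P/(P-1)) := hY
            _ = ((δ/2)*cV2*(2:ℝ)^(P-2))*ρ^P
                + ((δ/2)*cV2*(2:ℝ)^(P-2))^(-(P-1)⁻¹)*X^P' := by rw [hP'def]
            _ ≤ (δ/2)*‖Dv‖^2 + cC*(Δt^(2*αt)*b^(P*s)) := add_le_add h1 h2
            _ ≤ δ*‖Dv‖^2 + (cA+cB+cC)*(Δt^(2*αt)*b^(P*s)) := by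
                have e1 : (δ/2)*‖Dv‖^2 ≤ δ*‖Dv‖^2 :=
                  mul_le_mul_of_nonneg_right (by linarith) hDsq0
                have e2 := mul_le_mul_of_nonneg_right (by linarith : cC ≤ cA+cB+cC) hZ0
                linarith
    calc ⟪a^(P-2) • ξ - a^(Q-2) • ξ, ξ - η⟫ ≤ X * ρ := hLHS
      _ ≤ δ*‖Dv‖^2 + (cA+cB+cC)*(Δt^(2*αt)*b^(P*s)) := hfinal
      _ ≤ δ*‖Dv‖^2 + c * Δt^(2*αt) * b^(P*s) := by
          have hZ : 0 ≤ Δt^(2*αt)*b^(P*s) := mul_nonneg hΔ2 hbPs0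
          have hstep : (cA+cB+cC)*(Δt^(2*αt)*b^(P*s)) ≤ (cA+cB+cC+1)*(Δt^(2*αt)*b^(P*s)) :=
            mul_le_mul_of_nonneg_right (by linarith) hZ
          have heq : (cA+cB+cC+1)*(Δt^(2*αt)*b^(P*s)) = c * Δt^(2*αt) * b^(P*s) := by
            rw [hcdef]; ring
          linarith
end

section
/- Let κ ≥ 0, α_x, α_t ∈ (0,1], p ∈ C^{α_x,α_t}([0,T]×Ω̄) with 1 < p⁻ ≤ p⁺ < ∞, and let s > 1. Then there exist c_s > 0 and Δt₀ ∈ (0,1) such that for all 0 < Δt ≤ Δt₀, all σ, t ∈ [0,T] with |t − σ| ≤ Δt, all x ∈ Ω̄ and all ξ ∈ ℝ^{N×n}: |F(t,x,ξ) − F(σ,x,ξ)| ≤ c_s (Δt)^{α_t} (1 + |ξ|)^{s·p(t,x)/2}. -/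
open Set Real

private lemma myexp_sub_exp_le {x y : ℝ} (h : y ≤ x) :
    Real.exp x - Real.exp y ≤ (x - y) * Real.exp x := by
  have h1 : 1 + (y - x) ≤ Real.exp (y - x) := by
    have := Real.add_one_le_exp (y - x); linarith
  have h2 : Real.exp x * (1 + (y - x)) ≤ Real.exp x * Real.exp (y - x) :=
    mul_le_mul_of_nonneg_left h1 (Real.exp_pos x).le
  rw [← Real.exp_add] at h2
  have : Real.exp (x + (y - x)) = Real.exp y := by ring_nf
  nlinarith [Real.exp_pos x]

private lemma myabs_exp_sub_exp (x y : ℝ) :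
    |Real.exp x - Real.exp y| ≤ |x - y| * max (Real.exp x) (Real.exp y) := by
  rcases le_total y x with h | h
  · rw [abs_of_nonneg (by simpa using Real.exp_le_exp.mpr h), abs_of_nonneg (by linarith)]
    calc Real.exp x - Real.exp y ≤ (x - y) * Real.exp x := myexp_sub_exp_le h
      _ ≤ (x - y) * max (Real.exp x) (Real.exp y) :=
        mul_le_mul_of_nonneg_left (le_max_left _ _) (by linarith)
  · rw [abs_sub_comm, abs_sub_comm x y,
      abs_of_nonneg (by simpa using Real.exp_le_exp.mpr h), abs_of_nonneg (by linarith)]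
    calc Real.exp y - Real.exp x ≤ (y - x) * Real.exp y := myexp_sub_exp_le h
      _ ≤ (y - x) * max (Real.exp x) (Real.exp y) :=
        mul_le_mul_of_nonneg_left (le_max_right _ _) (by linarith)

private lemma myabs_rpow_sub_rpow {a : ℝ} (ha : 0 < a) (b₁ b₂ : ℝ) :
    |a ^ b₁ - a ^ b₂| ≤ |b₁ - b₂| * |Real.log a| * max (a ^ b₁) (a ^ b₂) := by
  rw [Real.rpow_def_of_pos ha b₁, Real.rpow_def_of_pos ha b₂]
  calc |Real.exp (Real.log a * b₁) - Real.exp (Real.log a * b₂)|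
      ≤ |Real.log a * b₁ - Real.log a * b₂| *
        max (Real.exp (Real.log a * b₁)) (Real.exp (Real.log a * b₂)) :=
        myabs_exp_sub_exp _ _
    _ = |b₁ - b₂| * |Real.log a| *
        max (Real.exp (Real.log a * b₁)) (Real.exp (Real.log a * b₂)) := by
        rw [← mul_sub, abs_mul]; ring

private lemma mylog_le_rpow_div {a ε : ℝ} (ha : 1 ≤ a) (hε : 0 < ε) :
    Real.log a ≤ a ^ ε / ε := by
  have h0 : (0:ℝ) < a := by linarith
  have h := Real.log_le_sub_one_of_pos (Real.rpow_pos_of_pos h0 ε)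
  rw [Real.log_rpow h0] at h
  have h2 : ε * Real.log a ≤ a ^ ε := by linarith
  rw [div_eq_mul_inv]
  calc Real.log a = (ε * Real.log a) * ε⁻¹ := by field_simp
    _ ≤ a ^ ε * ε⁻¹ := by
        apply mul_le_mul_of_nonneg_right h2 (by positivity)

private lemma myneg_log_le_rpow_div {a ε : ℝ} (ha : 0 < a) (ha1 : a ≤ 1) (hε : 0 < ε) :
    -Real.log a ≤ a ^ (-ε) / ε := by
  have h := mylog_le_rpow_div (a := a⁻¹) (by rw [one_le_inv_iff₀]; exact ⟨ha, ha1⟩) hε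
  rw [Real.log_inv, Real.inv_rpow ha.le, ← Real.rpow_neg ha.le] at h
  linarith [h]

set_option maxHeartbeats 1600000 in
/-- (Estimate (2808): time-difference of `F`.)
Let `κ ≥ 0`, `α_x, α_t ∈ (0,1]`, `p ∈ C^{α_x,α_t}([0,T]×Ω̄)` with `1 < p⁻ ≤ p⁺ < ∞`, and
`s > 1`. Then there are `c_s > 0` and `Δt₀ ∈ (0,1)` such that for all `0 < Δt ≤ Δt₀`,
all `σ, t ∈ [0,T]` with `|t − σ| ≤ Δt`, all `x ∈ Ω̄` and all `ξ`:
`|F(t,x,ξ) − F(σ,x,ξ)| ≤ c_s (Δt)^{α_t} (1 + |ξ|)^{s p(t,x)/2}`. -/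
theorem stmt8 (N n : ℕ) (T : ℝ) (hT : 0 < T)
    (Ω : Set (EuclideanSpace ℝ (Fin n))) (hΩopen : IsOpen Ω) (hΩbdd : Bornology.IsBounded Ω)
    (κ αx αt : ℝ) (hκ : 0 ≤ κ) (hαx : αx ∈ Ioc (0:ℝ) 1) (hαt : αt ∈ Ioc (0:ℝ) 1)
    (p : ℝ × EuclideanSpace ℝ (Fin n) → ℝ) (pminus pplus c₀ : ℝ)
    (hpm : 1 < pminus) (hpp : pminus ≤ pplus) (hc₀ : 0 ≤ c₀)
    (hbounds : ∀ z ∈ Icc (0:ℝ) T ×ˢ closure Ω, pminus ≤ p z ∧ p z ≤ pplus)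
    (hHolder : ∀ t ∈ Icc (0:ℝ) T, ∀ s ∈ Icc (0:ℝ) T, ∀ x ∈ closure Ω, ∀ y ∈ closure Ω,
      |p (t, x) - p (s, y)| ≤ c₀ * (|t - s| ^ αt + ‖x - y‖ ^ αx))
    (s : ℝ) (hs : 1 < s) :
    ∃ cs Δt₀ : ℝ, 0 < cs ∧ 0 < Δt₀ ∧ Δt₀ < 1 ∧
      ∀ Δt : ℝ, 0 < Δt → Δt ≤ Δt₀ →
        ∀ σ ∈ Icc (0:ℝ) T, ∀ t ∈ Icc (0:ℝ) T, |t - σ| ≤ Δt →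
          ∀ x ∈ closure Ω, ∀ ξ : EuclideanSpace ℝ (Fin N × Fin n),
            ‖(κ + ‖ξ‖) ^ ((p (t, x) - 2) / 2) • ξ -
                (κ + ‖ξ‖) ^ ((p (σ, x) - 2) / 2) • ξ‖ ≤
              cs * Δt ^ αt * (1 + ‖ξ‖) ^ (s * p (t, x) / 2) := by
  have hαt0 : 0 < αt := hαt.1
  -- exponent slack
  set e : ℝ := min ((s - 1) * pminus / 4) (pminus / 8) with he_def
  have hsp : (0:ℝ) < (s - 1) * pminus := mul_pos (by linarith) (by linarith)
  have he : 0 < e := by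
    apply lt_min (by linarith) (by linarith)
  have he1 : e ≤ (s - 1) * pminus / 4 := min_le_left _ _
  have he2 : e ≤ pminus / 8 := min_le_right _ _
  set E : ℝ := s * pplus / 2 with hE_def
  have hE0 : 0 ≤ E := by
    have : (0:ℝ) < s * pplus := mul_pos (by linarith) (by linarith)
    rw [hE_def]; linarith
  have hκ1 : (1:ℝ) ≤ 1 + κ := by linarith
  set cs : ℝ := (c₀ / (2 * e) + 1) * (1 + κ) ^ E with hcs_def
  have hKE : (1:ℝ) ≤ (1 + κ) ^ E := Real.one_le_rpow hκ1 hE0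
  have hcs : 0 < cs := by
    apply mul_pos _ (lt_of_lt_of_le one_pos hKE)
    positivity
  set Δt₀ : ℝ := min (1/2) ((e / (c₀ + 1)) ^ (1 / αt)) with hΔt₀_def
  have hΔt₀pos : 0 < Δt₀ := by
    apply lt_min (by norm_num)
    apply Real.rpow_pos_of_pos
    positivity
  refine ⟨cs, Δt₀, hcs, hΔt₀pos, lt_of_le_of_lt (min_le_left _ _) (by norm_num), ?_⟩
  intro Δt hΔt hΔtle σ hσ t ht htσ x hx ξ
  -- δ ≤ e
  have hδe : c₀ * Δt ^ αt / 2 ≤ e := by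
    have h1 : Δt ^ αt ≤ Δt₀ ^ αt :=
      Real.rpow_le_rpow hΔt.le hΔtle hαt0.le
    have h2 : Δt₀ ^ αt ≤ ((e / (c₀ + 1)) ^ (1 / αt)) ^ αt :=
      Real.rpow_le_rpow hΔt₀pos.le (min_le_right _ _) hαt0.le
    have h3 : ((e / (c₀ + 1)) ^ (1 / αt)) ^ αt = e / (c₀ + 1) := by
      rw [← Real.rpow_mul (by positivity), one_div, inv_mul_cancel₀ hαt0.ne', Real.rpow_one]
    have h4 : Δt ^ αt ≤ e / (c₀ + 1) := le_trans h1 (le_trans h2 h3.le)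
    rw [le_div_iff₀ (by positivity : (0:ℝ) < c₀ + 1)] at h4
    have hpow0 : 0 ≤ Δt ^ αt := Real.rpow_nonneg hΔt.le _
    linarith [mul_nonneg hc₀ hpow0]
  set δ : ℝ := c₀ * Δt ^ αt / 2 with hδ_def
  have hδ0 : 0 ≤ δ := by positivity
  have hpow0 : 0 ≤ Δt ^ αt := Real.rpow_nonneg hΔt.le _
  set p₁ : ℝ := p (t, x) with hp₁_def
  set p₂ : ℝ := p (σ, x) with hp₂_def
  have hb1 := hbounds (t, x) ⟨ht, hx⟩
  have hb2 := hbounds (σ, x) ⟨hσ, hx⟩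
  -- Hölder in time
  have hΔp : |p₁ - p₂| ≤ 2 * δ := by
    have h := hHolder t ht σ hσ x hx x hx
    have hxx : ‖x - x‖ ^ αx = 0 := by
      rw [sub_self, norm_zero, Real.zero_rpow hαx.1.ne']
    have h5 : |t - σ| ^ αt ≤ Δt ^ αt :=
      Real.rpow_le_rpow (abs_nonneg _) htσ hαt0.le
    rw [hxx] at h
    calc |p₁ - p₂| ≤ c₀ * (|t - σ| ^ αt + 0) := h
      _ = c₀ * |t - σ| ^ αt := by ring
      _ ≤ c₀ * Δt ^ αt := mul_le_mul_of_nonneg_left h5 hc₀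
      _ = 2 * δ := by rw [hδ_def]; ring
  set b₁ : ℝ := (p₁ - 2) / 2 with hb₁_def
  set b₂ : ℝ := (p₂ - 2) / 2 with hb₂_def
  set a : ℝ := κ + ‖ξ‖ with ha_def
  have hξ0 : 0 ≤ ‖ξ‖ := norm_nonneg ξ
  have ha0 : 0 ≤ a := by positivity
  have hξa : ‖ξ‖ ≤ a := by rw [ha_def]; linarith
  have hsp₁ : (0:ℝ) < s * p₁ := mul_pos (by linarith) (by linarith [hb1.1])
  have hRHSfac : (1:ℝ) ≤ (1 + ‖ξ‖) ^ (s * p₁ / 2) :=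
    Real.one_le_rpow (by linarith) (by linarith)
  -- rewrite LHS
  rw [← sub_smul, norm_smul, Real.norm_eq_abs]
  rcases ha0.eq_or_lt with hA | hA
  · rw [show ‖ξ‖ = 0 by rw [ha_def] at hA; linarith, mul_zero]
    have : (0:ℝ) < Δt ^ αt := Real.rpow_pos_of_pos hΔt αt
    positivity
  -- now a > 0
  have hbb : |b₁ - b₂| ≤ δ := by
    rw [hb₁_def, hb₂_def, show (p₁ - 2) / 2 - (p₂ - 2) / 2 = (p₁ - p₂) / 2 by ring,
      abs_div, abs_two]
    linarith [hΔp]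
  have key := myabs_rpow_sub_rpow hA b₁ b₂
  rcases le_or_gt 1 a with h1a | h1a
  · -- case a ≥ 1
    have hlog : |Real.log a| ≤ a ^ e / e := by
      rw [abs_of_nonneg (Real.log_nonneg h1a)]
      exact mylog_le_rpow_div h1a he
    have hM : max (a ^ b₁) (a ^ b₂) ≤ a ^ (b₁ + e) := by
      apply max_le
      · exact Real.rpow_le_rpow_of_exponent_le h1a (by linarith)
      · apply Real.rpow_le_rpow_of_exponent_le h1a
        have := abs_le.mp hbb
        linarith
    set q : ℝ := p₁ / 2 + 2 * e with hq_def
    have hq0 : 0 ≤ q := by rw [hq_def]; linarith [hb1.1]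
    have hcomb : a ^ e * a ^ (b₁ + e) * a = a ^ q := by
      rw [show q = e + (b₁ + e) + 1 by rw [hq_def, hb₁_def]; ring,
        Real.rpow_add hA (e + (b₁ + e)) 1, Real.rpow_one,
        ← Real.rpow_add hA e (b₁ + e)]
    have haK : a ≤ (1 + κ) * (1 + ‖ξ‖) := by
      rw [ha_def]; linarith [mul_nonneg hκ hξ0]
    have hqE : q ≤ E := by
      have h7 : (s - 1) * pminus ≤ (s - 1) * pplus :=
        mul_le_mul_of_nonneg_left hpp (by linarith)
      rw [hq_def, hE_def]
      have := hb1.2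
      linarith [h7, hb1.2, he1]
    have hqs : q ≤ s * p₁ / 2 := by
      have h7 : (s - 1) * pminus ≤ (s - 1) * p₁ :=
        mul_le_mul_of_nonneg_left hb1.1 (by linarith)
      rw [hq_def]
      linarith [h7, he1]
    have hsplit : a ^ q ≤ (1 + κ) ^ E * (1 + ‖ξ‖) ^ (s * p₁ / 2) := by
      calc a ^ q ≤ ((1 + κ) * (1 + ‖ξ‖)) ^ q := Real.rpow_le_rpow ha0 haK hq0
        _ = (1 + κ) ^ q * (1 + ‖ξ‖) ^ q := Real.mul_rpow (by linarith) (by linarith)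
        _ ≤ (1 + κ) ^ E * (1 + ‖ξ‖) ^ (s * p₁ / 2) := by
            apply mul_le_mul
            · exact Real.rpow_le_rpow_of_exponent_le hκ1 hqE
            · exact Real.rpow_le_rpow_of_exponent_le (by linarith) hqs
            · positivity
            · positivity
    calc |a ^ b₁ - a ^ b₂| * ‖ξ‖
        ≤ (|b₁ - b₂| * |Real.log a| * max (a ^ b₁) (a ^ b₂)) * ‖ξ‖ :=
          mul_le_mul_of_nonneg_right key hξ0
      _ ≤ (δ * (a ^ e / e) * a ^ (b₁ + e)) * a := by
          refine mul_le_mul ?_ hξa hξ0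
            (mul_nonneg (mul_nonneg hδ0 (div_nonneg (Real.rpow_nonneg ha0 e) he.le))
              (Real.rpow_nonneg ha0 _))
          exact mul_le_mul (mul_le_mul hbb hlog (abs_nonneg _) hδ0) hM
            (le_trans (Real.rpow_nonneg ha0 b₁) (le_max_left _ _))
            (mul_nonneg hδ0 (div_nonneg (Real.rpow_nonneg ha0 e) he.le))
      _ = (δ / e) * (a ^ e * a ^ (b₁ + e) * a) := by ring
      _ = (δ / e) * a ^ q := by rw [hcomb]
      _ ≤ (δ / e) * ((1 + κ) ^ E * (1 + ‖ξ‖) ^ (s * p₁ / 2)) :=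
          mul_le_mul_of_nonneg_left hsplit (by positivity)
      _ ≤ cs * Δt ^ αt * (1 + ‖ξ‖) ^ (s * p₁ / 2) := by
          rw [hcs_def, hδ_def]
          have h6 : c₀ * Δt ^ αt / 2 / e ≤ (c₀ / (2 * e) + 1) * Δt ^ αt := by
            have heq : c₀ * Δt ^ αt / 2 / e = c₀ / (2 * e) * Δt ^ αt := by
              field_simp
            rw [heq]
            apply mul_le_mul_of_nonneg_right (by linarith) hpow0
          calc c₀ * Δt ^ αt / 2 / e * ((1 + κ) ^ E * (1 + ‖ξ‖) ^ (s * p₁ / 2))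
              ≤ (c₀ / (2 * e) + 1) * Δt ^ αt * ((1 + κ) ^ E * (1 + ‖ξ‖) ^ (s * p₁ / 2)) :=
                mul_le_mul_of_nonneg_right h6 (by positivity)
            _ = (c₀ / (2 * e) + 1) * (1 + κ) ^ E * Δt ^ αt * (1 + ‖ξ‖) ^ (s * p₁ / 2) := by
                ring
  · -- case a < 1
    have hlog : |Real.log a| ≤ a ^ (-e) / e := by
      rw [abs_of_nonpos (Real.log_nonpos ha0 h1a.le)]
      exact myneg_log_le_rpow_div hA h1a.le he
    have hM : max (a ^ b₁) (a ^ b₂) ≤ a ^ (b₁ - e) := by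
      apply max_le
      · exact Real.rpow_le_rpow_of_exponent_ge hA h1a.le (by linarith)
      · apply Real.rpow_le_rpow_of_exponent_ge hA h1a.le
        have := abs_le.mp hbb
        linarith
    have hcomb : a ^ (-e) * a ^ (b₁ - e) * a = a ^ (p₁ / 2 - 2 * e) := by
      rw [show p₁ / 2 - 2 * e = -e + (b₁ - e) + 1 by rw [hb₁_def]; ring,
        Real.rpow_add hA (-e + (b₁ - e)) 1, Real.rpow_one,
        ← Real.rpow_add hA (-e) (b₁ - e)]
    have hone : a ^ (p₁ / 2 - 2 * e) ≤ 1 :=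
      Real.rpow_le_one ha0 h1a.le (by linarith [hb1.1])
    calc |a ^ b₁ - a ^ b₂| * ‖ξ‖
        ≤ (|b₁ - b₂| * |Real.log a| * max (a ^ b₁) (a ^ b₂)) * ‖ξ‖ :=
          mul_le_mul_of_nonneg_right key hξ0
      _ ≤ (δ * (a ^ (-e) / e) * a ^ (b₁ - e)) * a := by
          refine mul_le_mul ?_ hξa hξ0
            (mul_nonneg (mul_nonneg hδ0 (div_nonneg (Real.rpow_nonneg ha0 (-e)) he.le))
              (Real.rpow_nonneg ha0 _))
          exact mul_le_mul (mul_le_mul hbb hlog (abs_nonneg _) hδ0) hM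
            (le_trans (Real.rpow_nonneg ha0 b₁) (le_max_left _ _))
            (mul_nonneg hδ0 (div_nonneg (Real.rpow_nonneg ha0 (-e)) he.le))
      _ = (δ / e) * (a ^ (-e) * a ^ (b₁ - e) * a) := by ring
      _ = (δ / e) * a ^ (p₁ / 2 - 2 * e) := by rw [hcomb]
      _ ≤ (δ / e) * 1 := mul_le_mul_of_nonneg_left hone (by positivity)
      _ ≤ cs * Δt ^ αt * (1 + ‖ξ‖) ^ (s * p₁ / 2) := by
          rw [mul_one, hcs_def, hδ_def]
          have h6 : c₀ * Δt ^ αt / 2 / e ≤ (c₀ / (2 * e) + 1) * Δt ^ αt := by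
            have heq : c₀ * Δt ^ αt / 2 / e = c₀ / (2 * e) * Δt ^ αt := by
              field_simp
            rw [heq]
            apply mul_le_mul_of_nonneg_right (by linarith) hpow0
          calc c₀ * Δt ^ αt / 2 / e
              ≤ (c₀ / (2 * e) + 1) * Δt ^ αt := h6
            _ ≤ (c₀ / (2 * e) + 1) * Δt ^ αt * 1 := by rw [mul_one]
            _ ≤ (c₀ / (2 * e) + 1) * Δt ^ αt * ((1 + κ) ^ E * (1 + ‖ξ‖) ^ (s * p₁ / 2)) := by
                apply mul_le_mul_of_nonneg_left _ (by positivity)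
                calc (1:ℝ) = 1 * 1 := by ring
                  _ ≤ (1 + κ) ^ E * (1 + ‖ξ‖) ^ (s * p₁ / 2) :=
                    mul_le_mul hKE hRHSfac (by norm_num) (by positivity)
            _ = (c₀ / (2 * e) + 1) * (1 + κ) ^ E * Δt ^ αt * (1 + ‖ξ‖) ^ (s * p₁ / 2) := by
                ring
end

section
/- Let κ ≥ 0, α_x, α_t ∈ (0,1], p ∈ C^{α_x,α_t}([0,T]×Ω̄) with 1 < p⁻ ≤ p⁺ < ∞, and let s > 1. Then there exist c > 0 and h₀ ∈ (0,1) such that for all t ∈ [0,T], all x, y ∈ Ω̄ with |x − y| ≤ h₀, and all ξ ∈ ℝ^{N×n}: |S(t,y,ξ) − S(t,x,ξ)| ≤ c |x − y|^{α_x} (κ + |ξ|)^{(p(t,x)−1)/2} (1 + |ξ|)^{(s·p(t,x)−1)/2}. -/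
open Set

lemma aux_abs_exp_sub_one (x : ℝ) : |Real.exp x - 1| ≤ |x| * Real.exp |x| := by
  rcases le_or_gt 0 x with h | h
  · rw [abs_of_nonneg h, abs_of_nonneg (by linarith [Real.one_le_exp h] : (0:ℝ) ≤ Real.exp x - 1)]
    have h1 := Real.add_one_le_exp (-x)
    have h2 : Real.exp (-x) * Real.exp x = 1 := by rw [← Real.exp_add]; simp
    nlinarith [Real.exp_pos x]
  · have he : Real.exp x < 1 := by
      calc Real.exp x < Real.exp 0 := Real.exp_lt_exp.mpr h
      _ = 1 := Real.exp_zero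
    rw [abs_of_neg h, abs_of_nonpos (by linarith : Real.exp x - 1 ≤ 0)]
    have h1 := Real.add_one_le_exp x
    have h2 : (1:ℝ) ≤ Real.exp (-x) := Real.one_le_exp (by linarith)
    nlinarith

lemma aux_log_le (b ε : ℝ) (hb : 1 ≤ b) (hε : 0 < ε) : Real.log b ≤ b ^ ε / ε := by
  have hb0 : (0:ℝ) < b := by linarith
  have h1 : Real.log (b ^ ε) = ε * Real.log b := Real.log_rpow hb0 ε
  have h2 : Real.log (b ^ ε) ≤ b ^ ε - 1 := Real.log_le_sub_one_of_pos (Real.rpow_pos_of_pos hb0 ε)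
  rw [le_div_iff₀ hε]
  nlinarith

lemma aux_neglog_rpow (a ε : ℝ) (ha : 0 < a) (ha1 : a ≤ 1) (hε : 0 < ε) :
    (-Real.log a) * a ^ ε ≤ 1 / ε := by
  have hinv : (1:ℝ) ≤ a⁻¹ := one_le_inv_iff₀.mpr ⟨ha, ha1⟩
  have h1 : Real.log a⁻¹ ≤ (a⁻¹) ^ ε / ε := aux_log_le _ _ hinv hε
  rw [Real.log_inv, Real.inv_rpow ha.le] at h1
  have hpos : (0:ℝ) < a ^ ε := Real.rpow_pos_of_pos ha ε
  calc (-Real.log a) * a ^ ε ≤ ((a ^ ε)⁻¹ / ε) * a ^ ε :=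
        mul_le_mul_of_nonneg_right h1 hpos.le
  _ = 1 / ε := by field_simp

/-- The key pointwise estimate in clean real-number context. -/
lemma aux_key (a b δ ε px pminus pplus s M K C₂ C : ℝ)
    (ha : 0 < a) (hb : 1 ≤ b) (haMb : a ≤ M * b) (hM1 : 1 ≤ M)
    (hε : 0 < ε) (hδnn : 0 ≤ δ) (hδε : δ ≤ ε)
    (hε1 : ε ≤ (pminus - 1) / 4) (hε2 : ε ≤ (s - 1) * pminus / 4)
    (hpm : 1 < pminus) (hs : 1 < s) (hpx1 : pminus ≤ px) (hpx2 : px ≤ pplus)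
    (hK : K = ε + (pplus - 1) / 2) (hC₂ : C₂ = M ^ K * (Real.log M + 1 / ε))
    (hC1 : 1 / ε ≤ C) (hC2 : C₂ ≤ C) :
    |Real.log a| * Real.exp (δ * |Real.log a|) * a ^ (px - 1)
      ≤ C * (a ^ ((px - 1) / 2) * b ^ ((s * px - 1) / 2)) := by
  have hb0 : (0:ℝ) < b := by linarith
  have hM0 : (0:ℝ) < M := by linarith
  have hlogM : 0 ≤ Real.log M := Real.log_nonneg hM1
  have hCpos : 0 < C := lt_of_lt_of_le (by positivity) hC1
  have hbpow1 : (1:ℝ) ≤ b ^ ((s * px - 1) / 2) := by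
    have hsp : (1:ℝ) * 1 ≤ s * px :=
      mul_le_mul hs.le (le_trans hpm.le hpx1) zero_le_one (by linarith)
    have h0 : b ^ (0:ℝ) ≤ b ^ ((s * px - 1) / 2) :=
      Real.rpow_le_rpow_of_exponent_le hb (by linarith)
    rwa [Real.rpow_zero] at h0
  rcases le_or_gt a 1 with ha1 | ha1
  · -- small a
    have hlog : |Real.log a| = -Real.log a := abs_of_nonpos (Real.log_nonpos ha.le ha1)
    have hexp : Real.exp (δ * |Real.log a|) = a ^ (-δ) := by
      rw [hlog, Real.rpow_def_of_pos ha]; congr 1; ring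
    have comb : |Real.log a| * Real.exp (δ * |Real.log a|) * a ^ (px - 1)
        = ((-Real.log a) * a ^ ε) * a ^ (px - 1 - δ - ε) := by
      have e3 : a ^ (-δ) * a ^ (px - 1) = a ^ (px - 1 - δ) := by
        rw [← Real.rpow_add ha]; congr 1; ring
      have e4 : a ^ ε * a ^ (px - 1 - δ - ε) = a ^ (px - 1 - δ) := by
        rw [← Real.rpow_add ha]; congr 1; ring
      rw [hexp, hlog, mul_assoc, e3, mul_assoc, e4]
    rw [comb]
    have b1 : (-Real.log a) * a ^ ε ≤ 1 / ε := aux_neglog_rpow a ε ha ha1 hε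
    have b2 : a ^ (px - 1 - δ - ε) ≤ a ^ ((px - 1) / 2) :=
      Real.rpow_le_rpow_of_exponent_ge ha ha1 (by linarith)
    have hpos2 : (0:ℝ) ≤ a ^ ((px - 1) / 2) := Real.rpow_nonneg ha.le _
    calc ((-Real.log a) * a ^ ε) * a ^ (px - 1 - δ - ε)
        ≤ (1 / ε) * a ^ ((px - 1) / 2) := by
          apply mul_le_mul b1 b2 (Real.rpow_nonneg ha.le _) (by positivity)
    _ ≤ C * (a ^ ((px - 1) / 2) * b ^ ((s * px - 1) / 2)) := by
        have hint1 := mul_nonneg (sub_nonneg.2 hC1) hpos2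
        have hint2 := mul_nonneg (mul_nonneg hCpos.le hpos2) (sub_nonneg.2 hbpow1)
        nlinarith [hint1, hint2]
  · -- large a
    have ha1' : (1:ℝ) ≤ a := ha1.le
    have hlog : |Real.log a| = Real.log a := abs_of_nonneg (Real.log_nonneg ha1')
    have hexp : Real.exp (δ * |Real.log a|) = a ^ δ := by
      rw [hlog, Real.rpow_def_of_pos ha]; congr 1; ring
    have comb : |Real.log a| * Real.exp (δ * |Real.log a|) * a ^ (px - 1)
        = Real.log a * a ^ (δ + (px - 1) / 2) * a ^ ((px - 1) / 2) := by
      have e1 : a ^ δ * a ^ (px - 1) = a ^ (δ + (px - 1)) := (Real.rpow_add ha _ _).symm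
      have e2 : a ^ (δ + (px - 1) / 2) * a ^ ((px - 1) / 2) = a ^ (δ + (px - 1)) := by
        rw [← Real.rpow_add ha]; congr 1; ring
      rw [hexp, hlog, mul_assoc, e1, mul_assoc, e2]
    rw [comb]
    have he₁nn : (0:ℝ) ≤ δ + (px - 1) / 2 := by linarith
    have p1 : a ^ (δ + (px - 1) / 2) ≤ (M * b) ^ (δ + (px - 1) / 2) :=
      Real.rpow_le_rpow ha.le haMb he₁nn
    have p2 : (M * b) ^ (δ + (px - 1) / 2)
        = M ^ (δ + (px - 1) / 2) * b ^ (δ + (px - 1) / 2) :=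
      Real.mul_rpow hM0.le hb0.le
    have p3 : M ^ (δ + (px - 1) / 2) ≤ M ^ K :=
      Real.rpow_le_rpow_of_exponent_le hM1 (by rw [hK]; linarith)
    have l4 : (1:ℝ) ≤ b ^ ε := by
      have h0 : b ^ (0:ℝ) ≤ b ^ ε := Real.rpow_le_rpow_of_exponent_le hb hε.le
      rwa [Real.rpow_zero] at h0
    have p4 : Real.log a ≤ (Real.log M + 1 / ε) * b ^ ε := by
      have l1 : Real.log a ≤ Real.log (M * b) := Real.log_le_log ha haMb
      have l2 : Real.log (M * b) = Real.log M + Real.log b :=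
        Real.log_mul (ne_of_gt hM0) (ne_of_gt hb0)
      have l3 : Real.log b ≤ b ^ ε / ε := aux_log_le b ε hb hε
      have l5 : Real.log M ≤ Real.log M * b ^ ε := le_mul_of_one_le_right hlogM l4
      have l6 : (Real.log M + 1 / ε) * b ^ ε = Real.log M * b ^ ε + b ^ ε / ε := by ring
      linarith
    have hbδ : b ^ ε * b ^ (δ + (px - 1) / 2) ≤ b ^ ((s * px - 1) / 2) := by
      rw [← Real.rpow_add hb0]
      apply Real.rpow_le_rpow_of_exponent_le hb
      linarith [mul_le_mul_of_nonneg_left hpx1 (by linarith : (0:ℝ) ≤ s - 1)]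
    have hcoef : (0:ℝ) ≤ Real.log M + 1 / ε := by
      have : (0:ℝ) < 1 / ε := by positivity
      linarith
    have hC₂pos : 0 < C₂ := by
      rw [hC₂]
      apply mul_pos (Real.rpow_pos_of_pos hM0 _)
      have : (0:ℝ) < 1 / ε := by positivity
      linarith
    have hAnn : (0:ℝ) ≤ a ^ ((px - 1) / 2) := Real.rpow_nonneg ha.le _
    have hBnn : (0:ℝ) ≤ b ^ ((s * px - 1) / 2) := Real.rpow_nonneg hb0.le _
    calc Real.log a * a ^ (δ + (px - 1) / 2) * a ^ ((px - 1) / 2)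
        ≤ ((Real.log M + 1 / ε) * b ^ ε) * (M ^ K * b ^ (δ + (px - 1) / 2))
            * a ^ ((px - 1) / 2) := by
          apply mul_le_mul_of_nonneg_right _ hAnn
          apply mul_le_mul p4 _ (Real.rpow_nonneg ha.le _)
            (mul_nonneg hcoef (Real.rpow_nonneg hb0.le _))
          calc a ^ (δ + (px - 1) / 2)
              ≤ M ^ (δ + (px - 1) / 2) * b ^ (δ + (px - 1) / 2) := by rw [← p2]; exact p1
          _ ≤ M ^ K * b ^ (δ + (px - 1) / 2) :=
              mul_le_mul_of_nonneg_right p3 (Real.rpow_nonneg hb0.le _)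
    _ = C₂ * (b ^ ε * b ^ (δ + (px - 1) / 2)) * a ^ ((px - 1) / 2) := by
          rw [hC₂]; ring
    _ ≤ C₂ * b ^ ((s * px - 1) / 2) * a ^ ((px - 1) / 2) := by
          apply mul_le_mul_of_nonneg_right _ hAnn
          exact mul_le_mul_of_nonneg_left hbδ hC₂pos.le
    _ ≤ C * (a ^ ((px - 1) / 2) * b ^ ((s * px - 1) / 2)) := by
          linarith [mul_nonneg (mul_nonneg (sub_nonneg.2 hC2) hAnn) hBnn]

lemma aux_aMb (κ r : ℝ) (hκ : 0 ≤ κ) (hr : 0 ≤ r) : κ + r ≤ (1 + κ) * (1 + r) := by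
  have := mul_nonneg hκ hr; nlinarith

lemma aux_final (δ C H Q1 Q2 c₀ : ℝ) (hδnn : 0 ≤ δ) (hδ1 : δ ≤ c₀ * H) (hC : 0 < C)
    (hH : 0 ≤ H) (hQ1 : 0 ≤ Q1) (hQ2 : 0 ≤ Q2) :
    δ * (C * (Q1 * Q2)) ≤ (c₀ * C + 1) * H * Q1 * Q2 := by
  nlinarith [mul_nonneg (mul_nonneg (mul_nonneg (sub_nonneg.2 hδ1) hC.le) hQ1) hQ2,
    mul_nonneg (mul_nonneg hH hQ1) hQ2, mul_nonneg hH hQ1]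

lemma aux_one_le_spx (s px pminus : ℝ) (hs : 1 < s) (hpm : 1 < pminus) (hpx1 : pminus ≤ px) :
    (0:ℝ) ≤ (s * px - 1) / 2 := by
  have hsp : (1:ℝ) * 1 ≤ s * px :=
    mul_le_mul hs.le (le_trans hpm.le hpx1) zero_le_one (by linarith)
  linarith

/-- (Estimate (hxS): space-difference of `S`.)
Let `κ ≥ 0`, `α_x, α_t ∈ (0,1]`, `p ∈ C^{α_x,α_t}([0,T]×Ω̄)` with `1 < p⁻ ≤ p⁺ < ∞`, and
`s > 1`. Then there are `c > 0` and `h₀ ∈ (0,1)` such that for all `t ∈ [0,T]`, all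
`x, y ∈ Ω̄` with `|x − y| ≤ h₀`, and all `ξ`:
`|S(t,y,ξ) − S(t,x,ξ)| ≤ c |x − y|^{α_x} (κ + |ξ|)^{(p(t,x)−1)/2} (1 + |ξ|)^{(s p(t,x)−1)/2}`. -/
theorem stmt9 (N n : ℕ) (T : ℝ) (hT : 0 < T)
    (Ω : Set (EuclideanSpace ℝ (Fin n))) (hΩopen : IsOpen Ω) (hΩbdd : Bornology.IsBounded Ω)
    (κ αx αt : ℝ) (hκ : 0 ≤ κ) (hαx : αx ∈ Ioc (0:ℝ) 1) (hαt : αt ∈ Ioc (0:ℝ) 1)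
    (p : ℝ × EuclideanSpace ℝ (Fin n) → ℝ) (pminus pplus c₀ : ℝ)
    (hpm : 1 < pminus) (hpp : pminus ≤ pplus) (hc₀ : 0 ≤ c₀)
    (hbounds : ∀ z ∈ Icc (0:ℝ) T ×ˢ closure Ω, pminus ≤ p z ∧ p z ≤ pplus)
    (hHolder : ∀ t ∈ Icc (0:ℝ) T, ∀ s ∈ Icc (0:ℝ) T, ∀ x ∈ closure Ω, ∀ y ∈ closure Ω,
      |p (t, x) - p (s, y)| ≤ c₀ * (|t - s| ^ αt + ‖x - y‖ ^ αx))
    (s : ℝ) (hs : 1 < s) :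
    ∃ c h₀ : ℝ, 0 < c ∧ 0 < h₀ ∧ h₀ < 1 ∧
      ∀ t ∈ Icc (0:ℝ) T, ∀ x ∈ closure Ω, ∀ y ∈ closure Ω, ‖x - y‖ ≤ h₀ →
        ∀ ξ : EuclideanSpace ℝ (Fin N × Fin n),
          ‖(κ + ‖ξ‖) ^ (p (t, y) - 2) • ξ - (κ + ‖ξ‖) ^ (p (t, x) - 2) • ξ‖ ≤
            c * ‖x - y‖ ^ αx * (κ + ‖ξ‖) ^ ((p (t, x) - 1) / 2) *
              (1 + ‖ξ‖) ^ ((s * p (t, x) - 1) / 2) := by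
  -- the small parameter
  set ε : ℝ := min ((pminus - 1) / 4) ((s - 1) * pminus / 4) with hεdef
  have hε : 0 < ε := by
    apply lt_min <;> nlinarith
  have hε1 : ε ≤ (pminus - 1) / 4 := min_le_left _ _
  have hε2 : ε ≤ (s - 1) * pminus / 4 := min_le_right _ _
  clear_value ε
  -- choice of h₀
  set h₀ : ℝ := min (1/2) ((ε / (c₀ + 1)) ^ (1/αx)) with hh₀def
  have hαx0 : 0 < αx := hαx.1
  have hbase : 0 < ε / (c₀ + 1) := by positivity
  have hh₀pos : 0 < h₀ := lt_min (by norm_num) (Real.rpow_pos_of_pos hbase _)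
  have hh₀lt : h₀ < 1 := lt_of_le_of_lt (min_le_left _ _) (by norm_num)
  have hh₀le : h₀ ≤ (ε / (c₀ + 1)) ^ (1/αx) := min_le_right _ _
  clear_value h₀
  have hδ₀ : c₀ * h₀ ^ αx ≤ ε := by
    have h1 : h₀ ^ αx ≤ ((ε / (c₀ + 1)) ^ (1/αx)) ^ αx :=
      Real.rpow_le_rpow hh₀pos.le hh₀le hαx0.le
    have h2 : ((ε / (c₀ + 1)) ^ (1/αx)) ^ αx = ε / (c₀ + 1) := by
      rw [← Real.rpow_mul hbase.le, one_div_mul_cancel (ne_of_gt hαx0), Real.rpow_one]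
    rw [h2] at h1
    have : c₀ * h₀ ^ αx ≤ c₀ * (ε / (c₀ + 1)) :=
      mul_le_mul_of_nonneg_left h1 hc₀
    have h3 : c₀ * (ε / (c₀ + 1)) ≤ ε := by
      rw [mul_div_assoc'] at *
      rw [div_le_iff₀ (by linarith : (0:ℝ) < c₀ + 1)]
      nlinarith
    linarith
  -- constants
  set M : ℝ := 1 + κ with hMdef
  clear_value M
  have hM1 : (1:ℝ) ≤ M := by rw [hMdef]; linarith
  have hM0 : (0:ℝ) < M := by linarith
  have hlogM : 0 ≤ Real.log M := Real.log_nonneg hM1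
  set K : ℝ := ε + (pplus - 1) / 2 with hKdef
  clear_value K
  set C₂ : ℝ := M ^ K * (Real.log M + 1 / ε) with hC₂def
  clear_value C₂
  have hC₂pos : 0 < C₂ := by
    rw [hC₂def]
    apply mul_pos (Real.rpow_pos_of_pos hM0 _)
    have : 0 < 1/ε := by positivity
    linarith
  set C : ℝ := max (1/ε) C₂ with hCdef
  have hCpos : 0 < C := lt_max_of_lt_left (by positivity)
  have hC1 : (1:ℝ) / ε ≤ C := le_max_left _ _
  have hC2 : C₂ ≤ C := le_max_right _ _
  clear_value C
  refine ⟨c₀ * C + 1, h₀, by positivity, hh₀pos, hh₀lt, ?_⟩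
  intro t ht x hx y hy hxy ξ
  by_cases hξ0 : ξ = 0
  · subst hξ0
    simp only [norm_zero, smul_zero, sub_zero]
    apply mul_nonneg (mul_nonneg (mul_nonneg (by positivity) (Real.rpow_nonneg (norm_nonneg _) _))
      (Real.rpow_nonneg (by linarith) _)) (Real.rpow_nonneg (by norm_num) _)
  · have hξ : 0 < ‖ξ‖ := norm_pos_iff.mpr hξ0
    set a : ℝ := κ + ‖ξ‖ with hadef
    clear_value a
    have ha : 0 < a := by rw [hadef]; exact add_pos_of_nonneg_of_pos hκ hξ
    set b : ℝ := 1 + ‖ξ‖ with hbdef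
    clear_value b
    have hb : 1 ≤ b := by rw [hbdef]; exact le_add_of_nonneg_right (norm_nonneg ξ)
    have hb0 : (0:ℝ) < b := lt_of_lt_of_le one_pos hb
    set px := p (t, x) with hpxdef
    set py := p (t, y) with hpydef
    clear_value px py
    have hbd := hbounds (t, x) (Set.mem_prod.mpr ⟨ht, hx⟩)
    rw [← hpxdef] at hbd
    obtain ⟨hpx1, hpx2⟩ := hbd
    -- Holder bound on exponent difference
    have hδ1 : |py - px| ≤ c₀ * ‖x - y‖ ^ αx := by
      have h := hHolder t ht t ht y hy x hx
      rw [sub_self, abs_zero, Real.zero_rpow (ne_of_gt hαt.1), zero_add, norm_sub_rev,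
        ← hpxdef, ← hpydef] at h
      exact h
    have hδε : |py - px| ≤ ε := by
      refine le_trans hδ1 (le_trans ?_ hδ₀)
      exact mul_le_mul_of_nonneg_left
        (Real.rpow_le_rpow (norm_nonneg _) hxy hαx0.le) hc₀
    set δ : ℝ := |py - px| with hδdef
    clear_value δ
    have hδnn : 0 ≤ δ := hδdef ▸ abs_nonneg _
    -- norm identity
    have hLHS : ‖a ^ (py - 2) • ξ - a ^ (px - 2) • ξ‖
        = |a ^ (py - 2) - a ^ (px - 2)| * ‖ξ‖ := by
      rw [← sub_smul, norm_smul, Real.norm_eq_abs]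
    -- factorization
    have hfact : a ^ (py - 2) - a ^ (px - 2)
        = a ^ (px - 2) * (Real.exp ((py - px) * Real.log a) - 1) := by
      have e1 : a ^ (py - 2) = a ^ (px - 2) * a ^ (py - px) := by
        rw [← Real.rpow_add ha]; congr 1; ring
      have e2 : a ^ (py - px) = Real.exp ((py - px) * Real.log a) := by
        rw [Real.rpow_def_of_pos ha]; congr 1; ring
      rw [e1, e2]; ring
    have habs : |a ^ (py - 2) - a ^ (px - 2)|
        ≤ a ^ (px - 2) * (δ * |Real.log a| * Real.exp (δ * |Real.log a|)) := by
      rw [hfact, abs_mul, abs_of_nonneg (Real.rpow_nonneg ha.le _)]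
      have h1 := aux_abs_exp_sub_one ((py - px) * Real.log a)
      rw [abs_mul, ← hδdef] at h1
      exact mul_le_mul_of_nonneg_left h1 (Real.rpow_nonneg ha.le _)
    have hQ1nn : (0:ℝ) ≤ a ^ ((px - 1) / 2) := Real.rpow_nonneg ha.le _
    have hQ2nn : (0:ℝ) ≤ b ^ ((s * px - 1) / 2) := Real.rpow_nonneg hb0.le _
    -- KEY estimate
    have key : |Real.log a| * Real.exp (δ * |Real.log a|) * (a ^ (px - 2) * ‖ξ‖)
        ≤ C * (a ^ ((px - 1) / 2) * b ^ ((s * px - 1) / 2)) := by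
      have hξa : ‖ξ‖ ≤ a := by rw [hadef]; exact le_add_of_nonneg_left hκ
      have step1 : a ^ (px - 2) * ‖ξ‖ ≤ a ^ (px - 1) := by
        calc a ^ (px - 2) * ‖ξ‖ ≤ a ^ (px - 2) * a :=
              mul_le_mul_of_nonneg_left hξa (Real.rpow_nonneg ha.le _)
        _ = a ^ (px - 1) := by
            rw [← Real.rpow_add_one (ne_of_gt ha) (px - 2), show px - 2 + 1 = px - 1 by ring]
      have step1' : |Real.log a| * Real.exp (δ * |Real.log a|) * (a ^ (px - 2) * ‖ξ‖)
          ≤ |Real.log a| * Real.exp (δ * |Real.log a|) * a ^ (px - 1) :=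
        mul_le_mul_of_nonneg_left step1 (by positivity)
      refine le_trans step1' ?_
      have haMb : a ≤ M * b := by
        rw [hadef, hbdef, hMdef]; exact aux_aMb κ ‖ξ‖ hκ (norm_nonneg ξ)
      exact aux_key a b δ ε px pminus pplus s M K C₂ C ha hb haMb hM1 hε hδnn hδε
        hε1 hε2 hpm hs hpx1 hpx2 hKdef hC₂def hC1 hC2
    -- final assembly
    have hH : (0:ℝ) ≤ ‖x - y‖ ^ αx := Real.rpow_nonneg (norm_nonneg _) _
    calc ‖a ^ (py - 2) • ξ - a ^ (px - 2) • ξ‖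
        = |a ^ (py - 2) - a ^ (px - 2)| * ‖ξ‖ := hLHS
    _ ≤ (a ^ (px - 2) * (δ * |Real.log a| * Real.exp (δ * |Real.log a|))) * ‖ξ‖ :=
        mul_le_mul_of_nonneg_right habs (norm_nonneg _)
    _ = δ * (|Real.log a| * Real.exp (δ * |Real.log a|) * (a ^ (px - 2) * ‖ξ‖)) := by ring
    _ ≤ δ * (C * (a ^ ((px - 1) / 2) * b ^ ((s * px - 1) / 2))) :=
        mul_le_mul_of_nonneg_left key hδnn
    _ ≤ (c₀ * C + 1) * ‖x - y‖ ^ αx * a ^ ((px - 1) / 2) * b ^ ((s * px - 1) / 2) :=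
        aux_final δ C (‖x - y‖ ^ αx) _ _ c₀ hδnn hδ1 hCpos hH hQ1nn hQ2nn
end
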